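/- arXiv:2105.01310 — 4 statements merged into one kernel-verified Lean document; each statement's English description precedes it below -/
import Mathlib

section
/- For every n ≥ 0, with T_n = min{T, n}, one has E[A(T_n)·B(T_n)] + (1/3)·E[T_n] = a·b. -/
open MeasureTheory ProbabilityTheory Filter
open scoped ENNReal

lemma aux_natInf_eq {S : Set ℕ} {k : ℕ} :
    sInf S = k ↔ (k ∈ S ∧ ∀ j < k, j ∉ S) ∨ (k = 0 ∧ S = ∅) := by
  constructor
  · intro h
    by_cases hS : S.Nonempty
    · left
      refine ⟨h ▸ Nat.sInf_mem hS, fun j hj => Nat.notMem_of_lt_sInf (h ▸ hj)⟩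
    · right
      rw [Set.not_nonempty_iff_eq_empty] at hS
      subst hS
      simp [Nat.sInf_empty] at h
      exact ⟨h.symm, rfl⟩
  · rintro (⟨hk, hmin⟩ | ⟨hk, hS⟩)
    · refine le_antisymm (Nat.sInf_le hk) ?_
      by_contra hlt
      push_neg at hlt
      exact hmin _ hlt (Nat.sInf_mem ⟨k, hk⟩)
    · subst hk; subst hS; exact Nat.sInf_empty

lemma aux_exp {Ω : Type*} [MeasurableSpace Ω] (μ : Measure Ω) [IsProbabilityMeasure μ]
    (X : Ω → ℤ × ℤ) (hm : Measurable X)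
    (hu : ∀ v ∈ ({(-1, 0), (1, -1), (0, 1)} : Set (ℤ × ℤ)), μ {ω | X ω = v} = 1 / 3)
    (φ : ℤ × ℤ → ℝ) :
    ∫ ω, φ (X ω) ∂μ = (φ (-1, 0) + φ (1, -1) + φ (0, 1)) / 3 := by
  set E : ℤ × ℤ → Set Ω := fun v => {ω | X ω = v} with hE
  have hmE : ∀ v, MeasurableSet (E v) := fun v => hm (measurableSet_singleton v)
  have h1 : μ (E (-1, 0)) = 1 / 3 := hu _ (by simp)
  have h2 : μ (E (1, -1)) = 1 / 3 := hu _ (by simp)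
  have h3 : μ (E (0, 1)) = 1 / 3 := hu _ (by simp)
  have hd : ∀ v w : ℤ × ℤ, v ≠ w → Disjoint (E v) (E w) := by
    intro v w hvw
    rw [Set.disjoint_left]
    intro ω h1 h2
    exact hvw (h1.symm.trans h2)
  have hU : μ (E (-1, 0) ∪ E (1, -1) ∪ E (0, 1)) = 1 := by
    rw [measure_union (by
      refine Set.disjoint_union_left.mpr ⟨hd _ _ (by decide), hd _ _ (by decide)⟩) (hmE _),
      measure_union (hd _ _ (by decide)) (hmE _), h1, h2, h3]
    rw [ENNReal.div_add_div_same, ENNReal.div_add_div_same,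
      show (1 + 1 + 1 : ℝ≥0∞) = 3 by norm_num, ENNReal.div_self] <;> norm_num
  have hcompl : μ (E (-1, 0) ∪ E (1, -1) ∪ E (0, 1))ᶜ = 0 := by
    rw [measure_compl ((hmE _).union (hmE _) |>.union (hmE _)) (measure_ne_top μ _), hU,
      measure_univ, tsub_self]
  have hae : (fun ω => φ (X ω)) =ᵐ[μ]
      fun ω => (E (-1, 0)).indicator (fun _ => φ (-1, 0)) ω
        + (E (1, -1)).indicator (fun _ => φ (1, -1)) ω
        + (E (0, 1)).indicator (fun _ => φ (0, 1)) ω := by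
    have hUae : ∀ᵐ ω ∂μ, ω ∈ E (-1, 0) ∪ E (1, -1) ∪ E (0, 1) := by
      rw [ae_iff]
      exact hcompl
    filter_upwards [hUae] with ω hω
    rcases hω with (h | h) | h <;>
      · have hx : X ω = _ := h
        norm_num [Set.indicator_apply, hE, Set.mem_setOf_eq, hx]
  rw [integral_congr_ae hae]
  have i1 : Integrable ((E (-1, 0)).indicator fun _ => φ (-1, 0)) μ :=
    (integrable_const _).indicator (hmE _)
  have i2 : Integrable ((E (1, -1)).indicator fun _ => φ (1, -1)) μ :=
    (integrable_const _).indicator (hmE _)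
  have i3 : Integrable ((E (0, 1)).indicator fun _ => φ (0, 1)) μ :=
    (integrable_const _).indicator (hmE _)
  have hI12 : Integrable (fun ω => (E (-1, 0)).indicator (fun _ => φ (-1, 0)) ω
      + (E (1, -1)).indicator (fun _ => φ (1, -1)) ω) μ := i1.add i2
  rw [integral_add hI12 i3, integral_add i1 i2,
    integral_indicator_const _ (hmE _), integral_indicator_const _ (hmE _),
    integral_indicator_const _ (hmE _), measureReal_def, measureReal_def, measureReal_def,
    h1, h2, h3]
  have : ((1 : ℝ≥0∞) / 3).toReal = 1 / 3 := by simp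
  rw [this, smul_eq_mul, smul_eq_mul, smul_eq_mul]
  ring

lemma aux_mem_ae {Ω : Type*} [MeasurableSpace Ω] (μ : Measure Ω) [IsProbabilityMeasure μ]
    (X : Ω → ℤ × ℤ) (hm : Measurable X)
    (hu : ∀ v ∈ ({(-1, 0), (1, -1), (0, 1)} : Set (ℤ × ℤ)), μ {ω | X ω = v} = 1 / 3) :
    ∀ᵐ ω ∂μ, X ω ∈ ({(-1, 0), (1, -1), (0, 1)} : Set (ℤ × ℤ)) := by
  set E : ℤ × ℤ → Set Ω := fun v => {ω | X ω = v} with hE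
  have hmE : ∀ v, MeasurableSet (E v) := fun v => hm (measurableSet_singleton v)
  have h1 : μ (E (-1, 0)) = 1 / 3 := hu _ (by simp)
  have h2 : μ (E (1, -1)) = 1 / 3 := hu _ (by simp)
  have h3 : μ (E (0, 1)) = 1 / 3 := hu _ (by simp)
  have hd : ∀ v w : ℤ × ℤ, v ≠ w → Disjoint (E v) (E w) := by
    intro v w hvw
    rw [Set.disjoint_left]
    intro ω h1 h2
    exact hvw (h1.symm.trans h2)
  have hU : μ (E (-1, 0) ∪ E (1, -1) ∪ E (0, 1)) = 1 := by
    rw [measure_union (by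
      refine Set.disjoint_union_left.mpr ⟨hd _ _ (by decide), hd _ _ (by decide)⟩) (hmE _),
      measure_union (hd _ _ (by decide)) (hmE _), h1, h2, h3]
    rw [ENNReal.div_add_div_same, ENNReal.div_add_div_same,
      show (1 + 1 + 1 : ℝ≥0∞) = 3 by norm_num, ENNReal.div_self] <;> norm_num
  have hcompl : μ (E (-1, 0) ∪ E (1, -1) ∪ E (0, 1))ᶜ = 0 := by
    rw [measure_compl ((hmE _).union (hmE _) |>.union (hmE _)) (measure_ne_top μ _), hU,
      measure_univ, tsub_self]
  have hUae : ∀ᵐ ω ∂μ, ω ∈ E (-1, 0) ∪ E (1, -1) ∪ E (0, 1) := by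
    rw [ae_iff]; exact hcompl
  filter_upwards [hUae] with ω hω
  rcases hω with (h | h) | h
  · exact Or.inl h
  · exact Or.inr (Or.inl h)
  · exact Or.inr (Or.inr h)

lemma aux_indep_int {Ω : Type*} [MeasurableSpace Ω] (μ : Measure Ω) [IsProbabilityMeasure μ]
    (ξ : ℕ → Ω → ℤ × ℤ) (hmeas : ∀ n, Measurable (ξ n))
    (hindep : iIndepFun ξ μ)
    (hunif : ∀ n, ∀ v ∈ ({(-1, 0), (1, -1), (0, 1)} : Set (ℤ × ℤ)),
      μ {ω | ξ n ω = v} = 1 / 3)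
    (n : ℕ) (F : (ℕ → ℤ × ℤ) → ℝ)
    (hF : ∀ g g' : ℕ → ℤ × ℤ, (∀ i, i < n → g i = g' i) → F g = F g')
    (φ : ℤ × ℤ → ℝ) :
    ∫ ω, F (fun k => ξ k ω) * φ (ξ n ω) ∂μ =
      (∫ ω, F (fun k => ξ k ω) ∂μ) * ((φ (-1, 0) + φ (1, -1) + φ (0, 1)) / 3) := by
  classical
  set F' : ({ x // x ∈ Finset.range n } → ℤ × ℤ) → ℝ :=
    fun h => F (fun i => if hi : i ∈ Finset.range n then h ⟨i, hi⟩ else 0) with hF'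
  set φ' : ({ x // x ∈ ({n} : Finset ℕ) } → ℤ × ℤ) → ℝ := fun h => φ (h ⟨n, by simp⟩) with hφ'
  have hbase : IndepFun (fun ω (i : { x // x ∈ Finset.range n }) => ξ i ω)
      (fun ω (i : { x // x ∈ ({n} : Finset ℕ) }) => ξ i ω) μ :=
    hindep.indepFun_finset _ _ (by simp [Finset.disjoint_singleton_right]) hmeas
  have h1 : (fun ω => F (fun k => ξ k ω)) =
      F' ∘ (fun ω (i : { x // x ∈ Finset.range n }) => ξ i ω) := by
    funext ω
    simp only [Function.comp_apply, hF']
    refine hF _ _ fun i hi => ?_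
    simp [Finset.mem_range.mpr hi]
  have h2 : (fun ω => φ (ξ n ω)) =
      φ' ∘ (fun ω (i : { x // x ∈ ({n} : Finset ℕ) }) => ξ i ω) := rfl
  have hind : IndepFun (fun ω => F (fun k => ξ k ω)) (fun ω => φ (ξ n ω)) μ := by
    rw [h1, h2]
    exact hbase.comp (measurable_of_countable F') (measurable_of_countable φ')
  have hXm : Measurable (fun ω => F (fun k => ξ k ω)) := by
    rw [h1]
    exact (measurable_of_countable F').comp (measurable_pi_lambda _ fun i => hmeas i)
  have hYm : Measurable (fun ω => φ (ξ n ω)) := (measurable_of_countable φ).comp (hmeas n)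
  have hmul : ∫ ω, F (fun k => ξ k ω) * φ (ξ n ω) ∂μ =
      (∫ ω, F (fun k => ξ k ω) ∂μ) * ∫ ω, φ (ξ n ω) ∂μ :=
    hind.integral_fun_mul_eq_mul_integral hXm.aestronglyMeasurable hYm.aestronglyMeasurable
  rw [hmul, aux_exp μ (ξ n) (hmeas n) (hunif n) φ]

open Classical in
noncomputable def aux_q {Ω : Type*} (A B : ℕ → Ω → ℤ) (m : ℕ) (ω : Ω) : ℝ :=
  if ∀ k ≤ m, A k ω * B k ω ≠ 0 then 1 else 0

open Classical in
noncomputable def aux_h {Ω : Type*} (A B : ℕ → Ω → ℤ) (ω : Ω) : ℝ :=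
  if ∀ j, A j ω * B j ω ≠ 0 then 1 else 0

noncomputable def aux_core {Ω : Type*} (ξ : ℕ → Ω → ℤ × ℤ) (A B : ℕ → Ω → ℤ)
    (m : ℕ) (ω : Ω) : ℝ :=
  (A m ω : ℝ) * ((ξ m ω).2 : ℝ) + (B m ω : ℝ) * ((ξ m ω).1 : ℝ)
    + ((ξ m ω).1 : ℝ) * ((ξ m ω).2 : ℝ) + 1 / 3

noncomputable def aux_f {Ω : Type*} (A B : ℕ → Ω → ℤ) (T : Ω → ℕ) (m : ℕ) (ω : Ω) : ℝ :=
  ((A (min (T ω) m) ω * B (min (T ω) m) ω : ℤ) : ℝ) + (1 / 3) * (min (T ω) m : ℕ)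

/-- For the truncated stopping time `T_n = min (T, n)`,
`E[A(T_n) * B(T_n)] + (1/3) * E[T_n] = a * b`. -/
theorem stmt_7
{Ω : Type*} [MeasurableSpace Ω] (μ : Measure Ω) [IsProbabilityMeasure μ]
    (a b : ℕ) (ha : 0 < a) (hb : 0 < b)
    (ξ : ℕ → Ω → ℤ × ℤ)
    (hmeas : ∀ n, Measurable (ξ n))
    (hindep : iIndepFun ξ μ)
    (hunif : ∀ n, ∀ v ∈ ({(-1, 0), (1, -1), (0, 1)} : Set (ℤ × ℤ)),
      μ {ω | ξ n ω = v} = 1 / 3)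
    (A B : ℕ → Ω → ℤ)
    (hA0 : ∀ ω, A 0 ω = (a : ℤ)) (hB0 : ∀ ω, B 0 ω = (b : ℤ))
    (hA : ∀ n ω, A (n + 1) ω = A n ω + (ξ n ω).1)
    (hB : ∀ n ω, B (n + 1) ω = B n ω + (ξ n ω).2)
(T : Ω → ℕ)
    (hT : ∀ ω, T ω = sInf {n | A n ω * B n ω = 0}) :
    ∀ n : ℕ,
      (∫ ω, ((A (min (T ω) n) ω * B (min (T ω) n) ω : ℤ) : ℝ) ∂μ)
        + (1 / 3) * (∫ ω, (min (T ω) n : ℝ) ∂μ) = (a : ℝ) * b := by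
  classical
  -- ### measurability of the basic objects
  have mA : ∀ k, Measurable (A k) := by
    intro k
    induction k with
    | zero =>
        have : A 0 = fun _ => (a : ℤ) := funext hA0
        rw [this]; exact measurable_const
    | succ k ih =>
        have : A (k + 1) = fun ω => A k ω + (ξ k ω).1 := funext (hA k)
        rw [this]; exact ih.add (measurable_fst.comp (hmeas k))
  have mB : ∀ k, Measurable (B k) := by
    intro k
    induction k with
    | zero =>
        have : B 0 = fun _ => (b : ℤ) := funext hB0
        rw [this]; exact measurable_const
    | succ k ih =>
        have : B (k + 1) = fun ω => B k ω + (ξ k ω).2 := funext (hB k)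
        rw [this]; exact ih.add (measurable_snd.comp (hmeas k))
  have mZ : ∀ k, MeasurableSet {ω | A k ω * B k ω = 0} :=
    fun k => ((mA k).mul (mB k)) (measurableSet_singleton 0)
  have mT : Measurable T := by
    apply measurable_to_countable'
    intro k
    have hset : T ⁻¹' {k} =
        ({ω | A k ω * B k ω = 0} ∩ ⋂ j, ⋂ _ : j < k, {ω | A j ω * B j ω = 0}ᶜ)
          ∪ ((⋂ j, {ω | A j ω * B j ω = 0}ᶜ) ∩ {ω | k = 0}) := by
      ext ω
      simp only [Set.mem_preimage, Set.mem_singleton_iff, hT ω, aux_natInf_eq,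
        Set.mem_union, Set.mem_inter_iff, Set.mem_iInter, Set.mem_compl_iff,
        Set.mem_setOf_eq, Set.eq_empty_iff_forall_notMem]
      tauto
    rw [hset]
    refine MeasurableSet.union ((mZ k).inter ?_) (MeasurableSet.inter ?_ ?_)
    · exact MeasurableSet.iInter fun j => MeasurableSet.iInter fun _ => (mZ j).compl
    · exact MeasurableSet.iInter fun j => (mZ j).compl
    · by_cases hk : k = 0
      · simp [hk]
      · simp [hk]
  have mmin : ∀ k : ℕ, Measurable (fun ω => min (T ω) k) :=
    fun k => (measurable_of_countable (fun t => min t k)).comp mT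
  have mstop : ∀ k : ℕ, Measurable (fun ω => A (min (T ω) k) ω * B (min (T ω) k) ω) := by
    intro k
    have hrw : (fun ω => A (min (T ω) k) ω * B (min (T ω) k) ω)
        = fun ω => ∑ j ∈ Finset.range (k + 1),
            if min (T ω) k = j then A j ω * B j ω else 0 := by
      funext ω
      rw [Finset.sum_ite_eq]
      simp [Nat.lt_succ_iff]
    rw [hrw]
    refine Finset.measurable_sum _ fun j _ =>
      Measurable.ite ?_ ((mA j).mul (mB j)) measurable_const
    exact (mmin k) (measurableSet_singleton j)
  have mcast : Measurable (fun x : ℤ => (x : ℝ)) := measurable_of_countable _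
  have mq : ∀ m, Measurable (aux_q A B m) := by
    intro m
    unfold aux_q
    refine Measurable.ite ?_ measurable_const measurable_const
    have : {ω | ∀ k ≤ m, A k ω * B k ω ≠ 0}
        = ⋂ k, ⋂ _ : k ≤ m, {ω | A k ω * B k ω = 0}ᶜ := by
      ext ω; simp
    rw [this]
    exact MeasurableSet.iInter fun k => MeasurableSet.iInter fun _ => (mZ k).compl
  have mh : Measurable (aux_h A B) := by
    unfold aux_h
    refine Measurable.ite ?_ measurable_const measurable_const
    have : {ω | ∀ j, A j ω * B j ω ≠ 0} = ⋂ j, {ω | A j ω * B j ω = 0}ᶜ := by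
      ext ω; simp
    rw [this]
    exact MeasurableSet.iInter fun j => (mZ j).compl
  have mcore : ∀ m, Measurable (aux_core ξ A B m) := by
    intro m
    unfold aux_core
    exact ((((mcast.comp (mA m)).mul (mcast.comp (measurable_snd.comp (hmeas m)))).add
      ((mcast.comp (mB m)).mul (mcast.comp (measurable_fst.comp (hmeas m))))).add
      ((mcast.comp (measurable_fst.comp (hmeas m))).mul
        (mcast.comp (measurable_snd.comp (hmeas m))))).add measurable_const
  have mpart1 : ∀ m, Measurable (fun ω =>
      ((A (min (T ω) m) ω * B (min (T ω) m) ω : ℤ) : ℝ)) :=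
    fun m => mcast.comp (mstop m)
  have mpart2 : ∀ m, Measurable (fun ω => ((min (T ω) m : ℕ) : ℝ)) :=
    fun m => (measurable_of_countable (fun t : ℕ => ((min t m : ℕ) : ℝ))).comp mT
  have mf : ∀ m, Measurable (aux_f A B T m) := by
    intro m
    unfold aux_f
    exact (mpart1 m).add (measurable_const.mul (mpart2 m))
  -- ### a.e. step control
  have hgood : ∀ᵐ ω ∂μ, ∀ m, ξ m ω ∈ ({(-1, 0), (1, -1), (0, 1)} : Set (ℤ × ℤ)) :=
    (ae_all_iff).mpr fun m => aux_mem_ae μ (ξ m) (hmeas m) (hunif m)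
  have hbd : ∀ ω, (∀ m, ξ m ω ∈ ({(-1, 0), (1, -1), (0, 1)} : Set (ℤ × ℤ))) →
      ∀ k, |(ξ k ω).1| ≤ 1 ∧ |(ξ k ω).2| ≤ 1 := by
    intro ω h k
    have := h k
    simp only [Set.mem_insert_iff, Set.mem_singleton_iff] at this
    rcases this with h' | h' | h' <;> rw [h'] <;> norm_num
  have hAb : ∀ ω, (∀ m, ξ m ω ∈ ({(-1, 0), (1, -1), (0, 1)} : Set (ℤ × ℤ))) →
      ∀ k, |A k ω| ≤ (a : ℤ) + k ∧ |B k ω| ≤ (b : ℤ) + k := by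
    intro ω h k
    induction k with
    | zero =>
        rw [hA0, hB0]
        constructor <;> simp [abs_of_nonneg]
    | succ k ih =>
        constructor
        · calc |A (k + 1) ω| = |A k ω + (ξ k ω).1| := by rw [hA k ω]
            _ ≤ |A k ω| + |(ξ k ω).1| := abs_add_le _ _
            _ ≤ ((a : ℤ) + k) + 1 := add_le_add ih.1 (hbd ω h k).1
            _ = (a : ℤ) + (k + 1 : ℕ) := by push_cast; ring
        · calc |B (k + 1) ω| = |B k ω + (ξ k ω).2| := by rw [hB k ω]
            _ ≤ |B k ω| + |(ξ k ω).2| := abs_add_le _ _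
            _ ≤ ((b : ℤ) + k) + 1 := add_le_add ih.2 (hbd ω h k).2
            _ = (b : ℤ) + (k + 1 : ℕ) := by push_cast; ring
  have hAhat : ∀ k ω, (a : ℤ) + ∑ i ∈ Finset.range k, (ξ i ω).1 = A k ω := by
    intro k ω
    induction k with
    | zero => simp [hA0]
    | succ k ih => rw [Finset.sum_range_succ, hA k ω, ← ih]; ring
  have hBhat : ∀ k ω, (b : ℤ) + ∑ i ∈ Finset.range k, (ξ i ω).2 = B k ω := by
    intro k ω
    induction k with
    | zero => simp [hB0]
    | succ k ih => rw [Finset.sum_range_succ, hB k ω, ← ih]; ring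
  -- ### combinatorial identity
  have hcomb : ∀ m ω, aux_f A B T (m + 1) ω - aux_f A B T m ω =
      aux_q A B m ω * aux_core ξ A B m ω - aux_h A B ω * aux_core ξ A B m ω := by
    intro m ω
    by_cases hH : ∃ j, A j ω * B j ω = 0
    · have hh0 : aux_h A B ω = 0 := by
        have hneg : ¬ ∀ j, A j ω * B j ω ≠ 0 := by push_neg; exact hH
        simp only [aux_h, if_neg hneg]
      by_cases hG : ∀ k ≤ m, A k ω * B k ω ≠ 0
      · have hTgt : m < T ω := by
          rw [hT]
          by_contra hc
          push_neg at hc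
          exact hG _ hc (Nat.sInf_mem hH)
        have h1 : min (T ω) m = m := min_eq_right (le_of_lt hTgt)
        have h2 : min (T ω) (m + 1) = m + 1 := min_eq_right hTgt
        have hq1 : aux_q A B m ω = 1 := by simp only [aux_q, if_pos hG]
        simp only [aux_f, aux_core, h1, h2, hq1, hh0, hA m ω, hB m ω]
        push_cast
        ring
      · push_neg at hG
        obtain ⟨k, hk, hzero⟩ := hG
        have hTle : T ω ≤ m := le_trans (hT ω ▸ Nat.sInf_le hzero) hk
        have h1 : min (T ω) m = T ω := min_eq_left hTle
        have h2 : min (T ω) (m + 1) = T ω := min_eq_left (le_trans hTle (Nat.le_succ m))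
        have hq0 : aux_q A B m ω = 0 := by
          have hneg : ¬ ∀ k ≤ m, A k ω * B k ω ≠ 0 := by push_neg; exact ⟨k, hk, hzero⟩
          simp only [aux_q, if_neg hneg]
        simp only [aux_f, h1, h2, hq0, hh0]
        ring
    · push_neg at hH
      have hT0 : T ω = 0 := by
        rw [hT, show {n | A n ω * B n ω = 0} = ∅ from
          Set.eq_empty_iff_forall_notMem.mpr hH, Nat.sInf_empty]
      have hq1 : aux_q A B m ω = 1 := by
        simp only [aux_q, if_pos (fun k _ => hH k)]
      have hh1 : aux_h A B ω = 1 := by simp only [aux_h, if_pos hH]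
      simp only [aux_f, hT0, hq1, hh1, Nat.zero_min]
      ring
  -- ### integrability helper
  have hint : ∀ (g : Ω → ℝ) (C : ℝ), Measurable g → (∀ᵐ ω ∂μ, |g ω| ≤ C) →
      Integrable g μ := by
    intro g C hg hb'
    refine (integrable_const C).mono' hg.aestronglyMeasurable ?_
    simpa [Real.norm_eq_abs] using hb'
  -- simple pointwise bounds
  have hq_bd : ∀ m ω, |aux_q A B m ω| ≤ 1 := by
    intro m ω; unfold aux_q; split <;> norm_num
  have hh_bd : ∀ ω, |aux_h A B ω| ≤ 1 := by
    intro ω; unfold aux_h; split <;> norm_num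
  have hq_nonneg : ∀ m ω, 0 ≤ aux_q A B m ω := by
    intro m ω; unfold aux_q; split <;> norm_num
  have hh_nonneg : ∀ ω, 0 ≤ aux_h A B ω := by
    intro ω; unfold aux_h; split <;> norm_num
  have hAcast : ∀ ω, (∀ m, ξ m ω ∈ ({(-1, 0), (1, -1), (0, 1)} : Set (ℤ × ℤ))) →
      ∀ k, |(A k ω : ℝ)| ≤ (a : ℝ) + k ∧ |(B k ω : ℝ)| ≤ (b : ℝ) + k := by
    intro ω h k
    constructor
    · have := (hAb ω h k).1
      rw [show |(A k ω : ℝ)| = ((|A k ω| : ℤ) : ℝ) by push_cast; ring]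
      exact_mod_cast this
    · have := (hAb ω h k).2
      rw [show |(B k ω : ℝ)| = ((|B k ω| : ℤ) : ℝ) by push_cast; ring]
      exact_mod_cast this
  have hxcast : ∀ ω, (∀ m, ξ m ω ∈ ({(-1, 0), (1, -1), (0, 1)} : Set (ℤ × ℤ))) →
      ∀ k, |((ξ k ω).1 : ℝ)| ≤ 1 ∧ |((ξ k ω).2 : ℝ)| ≤ 1 := by
    intro ω h k
    constructor
    · have := (hbd ω h k).1
      rw [show |((ξ k ω).1 : ℝ)| = ((|(ξ k ω).1| : ℤ) : ℝ) by push_cast; ring]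
      exact_mod_cast this
    · have := (hbd ω h k).2
      rw [show |((ξ k ω).2 : ℝ)| = ((|(ξ k ω).2| : ℤ) : ℝ) by push_cast; ring]
      exact_mod_cast this
  -- core bound
  have hcore_bd : ∀ m, ∀ᵐ ω ∂μ, |aux_core ξ A B m ω|
      ≤ ((a : ℝ) + m) + ((b : ℝ) + m) + 1 + 1 := by
    intro m
    filter_upwards [hgood] with ω h
    have h1 := (hAcast ω h m).1
    have h2 := (hAcast ω h m).2
    have h3 := (hxcast ω h m).1
    have h4 := (hxcast ω h m).2
    unfold aux_core
    calc |(A m ω : ℝ) * ((ξ m ω).2 : ℝ) + (B m ω : ℝ) * ((ξ m ω).1 : ℝ)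
        + ((ξ m ω).1 : ℝ) * ((ξ m ω).2 : ℝ) + 1 / 3|
        ≤ |(A m ω : ℝ) * ((ξ m ω).2 : ℝ)| + |(B m ω : ℝ) * ((ξ m ω).1 : ℝ)|
          + |((ξ m ω).1 : ℝ) * ((ξ m ω).2 : ℝ)| + |1 / 3| := by
          exact le_trans (abs_add_le _ _) (add_le_add (le_trans (abs_add_le _ _)
            (add_le_add (abs_add_le _ _) le_rfl)) le_rfl)
      _ ≤ |(A m ω : ℝ) * ((ξ m ω).2 : ℝ)| + |(B m ω : ℝ) * ((ξ m ω).1 : ℝ)|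
          + |((ξ m ω).1 : ℝ) * ((ξ m ω).2 : ℝ)| + 1 / 3 := by
          rw [show |(1:ℝ) / 3| = 1 / 3 from abs_of_nonneg (by norm_num)]
      _ ≤ ((a : ℝ) + m) * 1 + ((b : ℝ) + m) * 1 + 1 * 1 + 1 / 3 := by
          rw [abs_mul, abs_mul, abs_mul]
          refine add_le_add (add_le_add (add_le_add ?_ ?_) ?_) (by norm_num)
          · exact mul_le_mul h1 h4 (abs_nonneg _) (le_trans (abs_nonneg _) h1)
          · exact mul_le_mul h2 h3 (abs_nonneg _) (le_trans (abs_nonneg _) h2)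
          · exact mul_le_mul h3 h4 (abs_nonneg _) (le_trans (abs_nonneg _) h3)
      _ ≤ ((a : ℝ) + m) + ((b : ℝ) + m) + 1 + 1 := by
          have : (0:ℝ) ≤ (a : ℝ) + m := by positivity
          have : (0:ℝ) ≤ (b : ℝ) + m := by positivity
          norm_num
  -- integrabilities
  have int_core : ∀ m, Integrable (aux_core ξ A B m) μ :=
    fun m => hint _ _ (mcore m) (hcore_bd m)
  have int_qcore : ∀ m, Integrable (fun ω => aux_q A B m ω * aux_core ξ A B m ω) μ := by
    intro m
    refine hint _ (((a : ℝ) + m) + ((b : ℝ) + m) + 1 + 1) ((mq m).mul (mcore m)) ?_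
    filter_upwards [hcore_bd m] with ω hc
    rw [abs_mul]
    calc |aux_q A B m ω| * |aux_core ξ A B m ω| ≤ 1 * (((a : ℝ) + m) + ((b : ℝ) + m) + 1 + 1) :=
        mul_le_mul (hq_bd m ω) hc (abs_nonneg _) zero_le_one
      _ = _ := one_mul _
  have int_hcore : ∀ m, Integrable (fun ω => aux_h A B ω * aux_core ξ A B m ω) μ := by
    intro m
    refine hint _ (((a : ℝ) + m) + ((b : ℝ) + m) + 1 + 1) (mh.mul (mcore m)) ?_
    filter_upwards [hcore_bd m] with ω hc
    rw [abs_mul]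
    calc |aux_h A B ω| * |aux_core ξ A B m ω| ≤ 1 * (((a : ℝ) + m) + ((b : ℝ) + m) + 1 + 1) :=
        mul_le_mul (hh_bd ω) hc (abs_nonneg _) zero_le_one
      _ = _ := one_mul _
  have int_hg : ∀ m, Integrable (fun ω =>
      aux_h A B ω * ((A m ω : ℝ) * (B m ω : ℝ) - (a : ℝ) * b + (m : ℝ) / 3)) μ := by
    intro m
    refine hint _ (((a : ℝ) + m) * ((b : ℝ) + m) + (a : ℝ) * b + m)
      (mh.mul (((mcast.comp (mA m)).mul (mcast.comp (mB m))).sub measurable_const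
        |>.add measurable_const)) ?_
    filter_upwards [hgood] with ω h
    have h1 := (hAcast ω h m).1
    have h2 := (hAcast ω h m).2
    rw [abs_mul]
    have hinner : |(A m ω : ℝ) * (B m ω : ℝ) - (a : ℝ) * b + (m : ℝ) / 3|
        ≤ ((a : ℝ) + m) * ((b : ℝ) + m) + (a : ℝ) * b + m := by
      have hm1 : |(A m ω : ℝ) * (B m ω : ℝ)| ≤ ((a : ℝ) + m) * ((b : ℝ) + m) := by
        rw [abs_mul]
        exact mul_le_mul h1 h2 (abs_nonneg _) (le_trans (abs_nonneg _) h1)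
      have := abs_sub (|(A m ω : ℝ) * (B m ω : ℝ)|) ((a:ℝ)*b)
      calc |(A m ω : ℝ) * (B m ω : ℝ) - (a : ℝ) * b + (m : ℝ) / 3|
          ≤ |(A m ω : ℝ) * (B m ω : ℝ) - (a : ℝ) * b| + |(m : ℝ) / 3| := abs_add_le _ _
        _ ≤ (|(A m ω : ℝ) * (B m ω : ℝ)| + |(a : ℝ) * b|) + m := by
            refine add_le_add (abs_sub _ _) ?_
            rw [abs_of_nonneg (by positivity)]
            have : (0:ℝ) ≤ (m:ℝ) := by positivity
            linarith
        _ ≤ ((a : ℝ) + m) * ((b : ℝ) + m) + (a : ℝ) * b + m := by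
            rw [abs_of_nonneg (by positivity : (0:ℝ) ≤ (a : ℝ) * b)]
            linarith
    calc |aux_h A B ω| * |(A m ω : ℝ) * (B m ω : ℝ) - (a : ℝ) * b + (m : ℝ) / 3|
        ≤ 1 * (((a : ℝ) + m) * ((b : ℝ) + m) + (a : ℝ) * b + m) :=
        mul_le_mul (hh_bd ω) hinner (abs_nonneg _) zero_le_one
      _ = _ := one_mul _
  have int_part1 : ∀ m, Integrable (fun ω =>
      ((A (min (T ω) m) ω * B (min (T ω) m) ω : ℤ) : ℝ)) μ := by
    intro m
    refine hint _ (((a : ℝ) + m) * ((b : ℝ) + m)) (mpart1 m) ?_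
    filter_upwards [hgood] with ω h
    have h1 := (hAcast ω h (min (T ω) m)).1
    have h2 := (hAcast ω h (min (T ω) m)).2
    have hle : ((min (T ω) m : ℕ) : ℝ) ≤ (m : ℝ) := by
      exact_mod_cast min_le_right (T ω) m
    push_cast
    rw [abs_mul]
    have e1 : |(A (min (T ω) m) ω : ℝ)| ≤ (a : ℝ) + m := le_trans h1 (by linarith)
    have e2 : |(B (min (T ω) m) ω : ℝ)| ≤ (b : ℝ) + m := le_trans h2 (by linarith)
    exact mul_le_mul e1 e2 (abs_nonneg _) (le_trans (abs_nonneg _) e1)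
  have int_part2 : ∀ m, Integrable (fun ω => ((min (T ω) m : ℕ) : ℝ)) μ := by
    intro m
    refine hint _ (m : ℝ) (mpart2 m) ?_
    refine Eventually.of_forall fun ω => ?_
    rw [abs_of_nonneg (by positivity)]
    exact_mod_cast min_le_right (T ω) m
  have int_f : ∀ m, Integrable (aux_f A B T m) μ := by
    intro m
    exact (int_part1 m).add ((int_part2 m).const_mul (1 / 3))
  -- ### the martingale step : ∫ q * core = 0
  have hq_core_int : ∀ m, ∫ ω, aux_q A B m ω * aux_core ξ A B m ω ∂μ = 0 := by
    intro m
    set F1 : (ℕ → ℤ × ℤ) → ℝ := fun g =>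
      (if ∀ k ≤ m, ((a : ℤ) + ∑ i ∈ Finset.range k, (g i).1)
          * ((b : ℤ) + ∑ i ∈ Finset.range k, (g i).2) ≠ 0 then (1:ℝ) else 0)
        * (((a : ℤ) + ∑ i ∈ Finset.range m, (g i).1 : ℤ) : ℝ) with hF1def
    set F2 : (ℕ → ℤ × ℤ) → ℝ := fun g =>
      (if ∀ k ≤ m, ((a : ℤ) + ∑ i ∈ Finset.range k, (g i).1)
          * ((b : ℤ) + ∑ i ∈ Finset.range k, (g i).2) ≠ 0 then (1:ℝ) else 0)
        * (((b : ℤ) + ∑ i ∈ Finset.range m, (g i).2 : ℤ) : ℝ) with hF2def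
    set F3 : (ℕ → ℤ × ℤ) → ℝ := fun g =>
      (if ∀ k ≤ m, ((a : ℤ) + ∑ i ∈ Finset.range k, (g i).1)
          * ((b : ℤ) + ∑ i ∈ Finset.range k, (g i).2) ≠ 0 then (1:ℝ) else 0) with hF3def
    set φ1 : ℤ × ℤ → ℝ := fun v => (v.2 : ℝ) with hφ1def
    set φ2 : ℤ × ℤ → ℝ := fun v => (v.1 : ℝ) with hφ2def
    set φ3 : ℤ × ℤ → ℝ := fun v => (v.1 : ℝ) * (v.2 : ℝ) + 1 / 3 with hφ3def
    have e1 : ∀ ω, F1 (fun k => ξ k ω) = aux_q A B m ω * (A m ω : ℝ) := by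
      intro ω
      simp only [hF1def, hAhat, hBhat, aux_q]
    have e2 : ∀ ω, F2 (fun k => ξ k ω) = aux_q A B m ω * (B m ω : ℝ) := by
      intro ω
      simp only [hF2def, hAhat, hBhat, aux_q]
    have e3 : ∀ ω, F3 (fun k => ξ k ω) = aux_q A B m ω := by
      intro ω
      simp only [hF3def, hAhat, hBhat, aux_q]
    have hloc : ∀ (G : (ℕ → ℤ × ℤ) → ℝ), (G = F1 ∨ G = F2 ∨ G = F3) →
        ∀ g g' : ℕ → ℤ × ℤ, (∀ i, i < m → g i = g' i) → G g = G g' := by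
      intro G hG g g' hgg
      have hsum1 : ∀ k ≤ m, ∑ i ∈ Finset.range k, (g i).1
          = ∑ i ∈ Finset.range k, (g' i).1 := by
        intro k hk
        refine Finset.sum_congr rfl fun i hi => ?_
        rw [hgg i (lt_of_lt_of_le (Finset.mem_range.mp hi) hk)]
      have hsum2 : ∀ k ≤ m, ∑ i ∈ Finset.range k, (g i).2
          = ∑ i ∈ Finset.range k, (g' i).2 := by
        intro k hk
        refine Finset.sum_congr rfl fun i hi => ?_
        rw [hgg i (lt_of_lt_of_le (Finset.mem_range.mp hi) hk)]
      have hiff : (∀ k ≤ m, ((a : ℤ) + ∑ i ∈ Finset.range k, (g i).1)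
            * ((b : ℤ) + ∑ i ∈ Finset.range k, (g i).2) ≠ 0)
          ↔ (∀ k ≤ m, ((a : ℤ) + ∑ i ∈ Finset.range k, (g' i).1)
            * ((b : ℤ) + ∑ i ∈ Finset.range k, (g' i).2) ≠ 0) := by
        constructor
        · intro hcond k hk
          rw [← hsum1 k hk, ← hsum2 k hk]
          exact hcond k hk
        · intro hcond k hk
          rw [hsum1 k hk, hsum2 k hk]
          exact hcond k hk
      rcases hG with rfl | rfl | rfl
      · simp only [hF1def]
        rw [if_congr hiff rfl rfl, hsum1 m le_rfl]
      · simp only [hF2def]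
        rw [if_congr hiff rfl rfl, hsum2 m le_rfl]
      · simp only [hF3def]
        rw [if_congr hiff rfl rfl]
    have hsplit : ∀ ω, aux_q A B m ω * aux_core ξ A B m ω
        = F1 (fun k => ξ k ω) * φ1 (ξ m ω) + F2 (fun k => ξ k ω) * φ2 (ξ m ω)
          + F3 (fun k => ξ k ω) * φ3 (ξ m ω) := by
      intro ω
      rw [e1, e2, e3]
      simp only [hφ1def, hφ2def, hφ3def, aux_core]
      ring
    have int_t1 : Integrable (fun ω => F1 (fun k => ξ k ω) * φ1 (ξ m ω)) μ := by
      have base : Integrable (fun ω => aux_q A B m ω * (A m ω : ℝ) * ((ξ m ω).2 : ℝ)) μ := by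
        exact hint (fun ω => aux_q A B m ω * (A m ω : ℝ) * ((ξ m ω).2 : ℝ))
          ((a : ℝ) + m) (((mq m).mul (mcast.comp (mA m))).mul
            (mcast.comp (measurable_snd.comp (hmeas m)))) (by
          filter_upwards [hgood] with ω h
          have h1 := (hAcast ω h m).1
          have h4 := (hxcast ω h m).2
          rw [abs_mul, abs_mul]
          calc |aux_q A B m ω| * |(A m ω : ℝ)| * |((ξ m ω).2 : ℝ)|
              ≤ 1 * ((a : ℝ) + m) * 1 := by
                refine mul_le_mul (mul_le_mul (hq_bd m ω) h1 (abs_nonneg _) zero_le_one)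
                  h4 (abs_nonneg _) (by positivity)
            _ = (a : ℝ) + m := by ring)
      refine base.congr (Eventually.of_forall fun ω => ?_)
      simp only [e1, hφ1def]
    have int_t2 : Integrable (fun ω => F2 (fun k => ξ k ω) * φ2 (ξ m ω)) μ := by
      have base : Integrable (fun ω => aux_q A B m ω * (B m ω : ℝ) * ((ξ m ω).1 : ℝ)) μ := by
        exact hint (fun ω => aux_q A B m ω * (B m ω : ℝ) * ((ξ m ω).1 : ℝ))
          ((b : ℝ) + m) (((mq m).mul (mcast.comp (mB m))).mul
            (mcast.comp (measurable_fst.comp (hmeas m)))) (by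
          filter_upwards [hgood] with ω h
          have h2 := (hAcast ω h m).2
          have h3 := (hxcast ω h m).1
          rw [abs_mul, abs_mul]
          calc |aux_q A B m ω| * |(B m ω : ℝ)| * |((ξ m ω).1 : ℝ)|
              ≤ 1 * ((b : ℝ) + m) * 1 := by
                refine mul_le_mul (mul_le_mul (hq_bd m ω) h2 (abs_nonneg _) zero_le_one)
                  h3 (abs_nonneg _) (by positivity)
            _ = (b : ℝ) + m := by ring)
      refine base.congr (Eventually.of_forall fun ω => ?_)
      simp only [e2, hφ2def]
    have int_t3 : Integrable (fun ω => F3 (fun k => ξ k ω) * φ3 (ξ m ω)) μ := by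
      have base : Integrable
          (fun ω => aux_q A B m ω * (((ξ m ω).1 : ℝ) * ((ξ m ω).2 : ℝ) + 1 / 3)) μ := by
        exact hint (fun ω => aux_q A B m ω * (((ξ m ω).1 : ℝ) * ((ξ m ω).2 : ℝ) + 1 / 3))
          (1 + 1 / 3) ((mq m).mul (((mcast.comp (measurable_fst.comp (hmeas m))).mul
            (mcast.comp (measurable_snd.comp (hmeas m)))).add measurable_const)) (by
          filter_upwards [hgood] with ω h
          have h3 := (hxcast ω h m).1
          have h4 := (hxcast ω h m).2
          rw [abs_mul]
          have hin : |((ξ m ω).1 : ℝ) * ((ξ m ω).2 : ℝ) + 1 / 3| ≤ 1 + 1 / 3 := by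
            calc |((ξ m ω).1 : ℝ) * ((ξ m ω).2 : ℝ) + 1 / 3|
                ≤ |((ξ m ω).1 : ℝ) * ((ξ m ω).2 : ℝ)| + |1 / 3| := abs_add_le _ _
              _ ≤ 1 * 1 + 1 / 3 := by
                  rw [abs_mul]
                  refine add_le_add (mul_le_mul h3 h4 (abs_nonneg _) zero_le_one)
                    (le_of_eq (abs_of_nonneg (by norm_num)))
              _ = 1 + 1 / 3 := by ring
          calc |aux_q A B m ω| * |((ξ m ω).1 : ℝ) * ((ξ m ω).2 : ℝ) + 1 / 3|
              ≤ 1 * (1 + 1 / 3) :=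
              mul_le_mul (hq_bd m ω) hin (abs_nonneg _) zero_le_one
            _ = 1 + 1 / 3 := one_mul _)
      refine base.congr (Eventually.of_forall fun ω => ?_)
      simp only [e3, hφ3def]
    have hI12 : Integrable (fun ω => F1 (fun k => ξ k ω) * φ1 (ξ m ω)
        + F2 (fun k => ξ k ω) * φ2 (ξ m ω)) μ := int_t1.add int_t2
    calc ∫ ω, aux_q A B m ω * aux_core ξ A B m ω ∂μ
        = ∫ ω, (F1 (fun k => ξ k ω) * φ1 (ξ m ω) + F2 (fun k => ξ k ω) * φ2 (ξ m ω)
          + F3 (fun k => ξ k ω) * φ3 (ξ m ω)) ∂μ := by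
          exact integral_congr_ae (Eventually.of_forall hsplit)
      _ = (∫ ω, F1 (fun k => ξ k ω) * φ1 (ξ m ω) ∂μ)
          + (∫ ω, F2 (fun k => ξ k ω) * φ2 (ξ m ω) ∂μ)
          + ∫ ω, F3 (fun k => ξ k ω) * φ3 (ξ m ω) ∂μ := by
          rw [integral_add hI12 int_t3, integral_add int_t1 int_t2]
      _ = 0 := by
          rw [aux_indep_int μ ξ hmeas hindep hunif m F1 (hloc F1 (Or.inl rfl)) φ1,
            aux_indep_int μ ξ hmeas hindep hunif m F2 (hloc F2 (Or.inr (Or.inl rfl))) φ2,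
            aux_indep_int μ ξ hmeas hindep hunif m F3 (hloc F3 (Or.inr (Or.inr rfl))) φ3]
          simp only [hφ1def, hφ2def, hφ3def]
          norm_num
  -- ### the main recursion
  have hJ : ∀ m, ∫ ω, aux_f A B T m ω ∂μ = (a : ℝ) * b
      - ∫ ω, aux_h A B ω * ((A m ω : ℝ) * (B m ω : ℝ) - (a : ℝ) * b + (m : ℝ) / 3) ∂μ := by
    intro m
    induction m with
    | zero =>
        have hf0 : ∀ ω, aux_f A B T 0 ω = (a : ℝ) * b := by
          intro ω
          simp [aux_f, hA0, hB0]
        have hg0 : ∀ ω, aux_h A B ω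
            * ((A 0 ω : ℝ) * (B 0 ω : ℝ) - (a : ℝ) * b + (0 : ℕ) / 3) = 0 := by
          intro ω
          rw [hA0, hB0]
          push_cast
          ring
        rw [integral_congr_ae (Eventually.of_forall hf0),
          integral_congr_ae (Eventually.of_forall hg0)]
        simp
    | succ m ih =>
        have hfeq : ∀ ω, aux_f A B T (m + 1) ω = aux_f A B T m ω
            + (aux_q A B m ω * aux_core ξ A B m ω - aux_h A B ω * aux_core ξ A B m ω) := by
          intro ω
          have := hcomb m ω
          linarith
        have hstep : ∫ ω, aux_f A B T (m + 1) ω ∂μ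
            = (∫ ω, aux_f A B T m ω ∂μ)
              + ((∫ ω, aux_q A B m ω * aux_core ξ A B m ω ∂μ)
                - ∫ ω, aux_h A B ω * aux_core ξ A B m ω ∂μ) := by
          have hqc_sub : Integrable (fun ω => aux_q A B m ω * aux_core ξ A B m ω
              - aux_h A B ω * aux_core ξ A B m ω) μ := (int_qcore m).sub (int_hcore m)
          rw [integral_congr_ae (Eventually.of_forall hfeq),
            integral_add (int_f m) hqc_sub,
            integral_sub (int_qcore m) (int_hcore m)]
        have hpt : ∀ ω, aux_h A B ω * ((A m ω : ℝ) * (B m ω : ℝ) - (a : ℝ) * b + (m : ℝ) / 3)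
            + aux_h A B ω * aux_core ξ A B m ω
            = aux_h A B ω * ((A (m + 1) ω : ℝ) * (B (m + 1) ω : ℝ) - (a : ℝ) * b
              + ((m + 1 : ℕ) : ℝ) / 3) := by
          intro ω
          simp only [aux_core, hA m ω, hB m ω]
          push_cast
          ring
        have hcombine : (∫ ω, aux_h A B ω * ((A m ω : ℝ) * (B m ω : ℝ) - (a : ℝ) * b
              + (m : ℝ) / 3) ∂μ) + ∫ ω, aux_h A B ω * aux_core ξ A B m ω ∂μ
            = ∫ ω, aux_h A B ω * ((A (m + 1) ω : ℝ) * (B (m + 1) ω : ℝ) - (a : ℝ) * b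
              + ((m + 1 : ℕ) : ℝ) / 3) ∂μ := by
          rw [← integral_add (int_hg m) (int_hcore m)]
          exact integral_congr_ae (Eventually.of_forall hpt)
        rw [hstep, hq_core_int m, ih]
        push_cast at hcombine ⊢
        linarith
  -- ### positivity of the stopped process
  have hfpos : ∀ m, ∀ᵐ ω ∂μ, 0 ≤ aux_f A B T m ω := by
    intro m
    filter_upwards [hgood] with ω h
    by_cases hH : ∃ j, A j ω * B j ω = 0
    · have hnn : ∀ k, k ≤ T ω → 0 ≤ A k ω ∧ 0 ≤ B k ω := by
        intro k
        induction k with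
        | zero =>
            intro _
            rw [hA0, hB0]
            constructor <;> positivity
        | succ k ih =>
            intro hk1
            have hkT : k < T ω := lt_of_lt_of_le (Nat.lt_succ_self k) hk1
            have hknz : A k ω * B k ω ≠ 0 := by
              have hmem : k ∉ {n | A n ω * B n ω = 0} := by
                apply Nat.notMem_of_lt_sInf
                rw [← hT]
                exact hkT
              exact hmem
            obtain ⟨hA0k, hB0k⟩ := ih (le_of_lt hkT)
            have hA1 : A k ω ≠ 0 := left_ne_zero_of_mul hknz
            have hB1 : B k ω ≠ 0 := right_ne_zero_of_mul hknz
            have hx1 := abs_le.mp (hbd ω h k).1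
            have hx2 := abs_le.mp (hbd ω h k).2
            rw [hA k ω, hB k ω]
            constructor <;> omega
      have hmle : min (T ω) m ≤ T ω := min_le_left _ _
      obtain ⟨h1, h2⟩ := hnn _ hmle
      unfold aux_f
      have hp : (0 : ℝ) ≤ ((A (min (T ω) m) ω * B (min (T ω) m) ω : ℤ) : ℝ) := by
        exact_mod_cast mul_nonneg h1 h2
      have hp2 : (0 : ℝ) ≤ (1 / 3 : ℝ) * ((min (T ω) m : ℕ) : ℝ) := by positivity
      linarith
    · push_neg at hH
      have hT0 : T ω = 0 := by
        rw [hT, show {n | A n ω * B n ω = 0} = ∅ from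
          Set.eq_empty_iff_forall_notMem.mpr hH, Nat.sInf_empty]
      unfold aux_f
      rw [hT0]
      simp [hA0, hB0]
      positivity
  have hJpos : ∀ m, 0 ≤ ∫ ω, aux_f A B T m ω ∂μ :=
    fun m => integral_nonneg_of_ae (hfpos m)
  -- ### killing the event where the walk never stops
  set c : ℝ := ∫ ω, aux_h A B ω ∂μ with hc_def
  have int_h : Integrable (aux_h A B) μ :=
    hint _ 1 mh (Eventually.of_forall hh_bd)
  have hc_nonneg : 0 ≤ c := integral_nonneg hh_nonneg
  have hABone : ∀ m : ℕ, ∀ᵐ ω ∂μ, aux_h A B ω * (1 - (a : ℝ) * b + (m : ℝ) / 3)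
      ≤ aux_h A B ω * ((A m ω : ℝ) * (B m ω : ℝ) - (a : ℝ) * b + (m : ℝ) / 3) := by
    intro m
    filter_upwards [hgood] with ω h
    by_cases hH : ∀ j, A j ω * B j ω ≠ 0
    · have hone : ∀ k, 1 ≤ A k ω ∧ 1 ≤ B k ω := by
        intro k
        induction k with
        | zero =>
            rw [hA0, hB0]
            exact ⟨by exact_mod_cast ha, by exact_mod_cast hb⟩
        | succ k ih =>
            have hx1 := abs_le.mp (hbd ω h k).1
            have hx2 := abs_le.mp (hbd ω h k).2
            have hA1 : A (k + 1) ω ≠ 0 := left_ne_zero_of_mul (hH (k + 1))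
            have hB1 : B (k + 1) ω ≠ 0 := right_ne_zero_of_mul (hH (k + 1))
            obtain ⟨ihA, ihB⟩ := ih
            rw [hA k ω] at hA1
            rw [hB k ω] at hB1
            rw [hA k ω, hB k ω]
            constructor <;> omega
      have hh1 : aux_h A B ω = 1 := by simp only [aux_h, if_pos hH]
      rw [hh1, one_mul, one_mul]
      have h1 : (1 : ℝ) ≤ (A m ω : ℝ) := by exact_mod_cast (hone m).1
      have h2 : (1 : ℝ) ≤ (B m ω : ℝ) := by exact_mod_cast (hone m).2
      nlinarith
    · have hh0 : aux_h A B ω = 0 := by simp only [aux_h, if_neg hH]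
      rw [hh0, zero_mul, zero_mul]
  have hkey : ∀ m : ℕ, c * (1 - (a : ℝ) * b + (m : ℝ) / 3) ≤ (a : ℝ) * b := by
    intro m
    have hWlow : c * (1 - (a : ℝ) * b + (m : ℝ) / 3)
        ≤ ∫ ω, aux_h A B ω * ((A m ω : ℝ) * (B m ω : ℝ) - (a : ℝ) * b + (m : ℝ) / 3) ∂μ := by
      have hconst : ∫ ω, aux_h A B ω * (1 - (a : ℝ) * b + (m : ℝ) / 3) ∂μ
          = c * (1 - (a : ℝ) * b + (m : ℝ) / 3) := by
        rw [integral_mul_const]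
      rw [← hconst]
      exact integral_mono_ae (int_h.mul_const _) (int_hg m) (hABone m)
    have hWhigh : ∫ ω, aux_h A B ω * ((A m ω : ℝ) * (B m ω : ℝ) - (a : ℝ) * b
        + (m : ℝ) / 3) ∂μ ≤ (a : ℝ) * b := by
      have := hJpos m
      rw [hJ m] at this
      linarith
    linarith
  have hc0 : c = 0 := by
    by_contra hc
    have hcpos : 0 < c := lt_of_le_of_ne hc_nonneg (Ne.symm hc)
    obtain ⟨m, hm⟩ := exists_nat_gt (3 * ((a : ℝ) * b / c + (a : ℝ) * b - 1))
    have h1 : (a : ℝ) * b / c + (a : ℝ) * b - 1 < (m : ℝ) / 3 := by linarith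
    have h2 : c * ((a : ℝ) * b / c) < c * (1 - (a : ℝ) * b + (m : ℝ) / 3) := by
      apply mul_lt_mul_of_pos_left _ hcpos
      linarith
    have hcc : c * ((a : ℝ) * b / c) = (a : ℝ) * b := by field_simp
    rw [hcc] at h2
    have := hkey m
    linarith
  have hHnull : ∀ᵐ ω ∂μ, aux_h A B ω = 0 := by
    have h0 : ∫ ω, aux_h A B ω ∂μ = 0 := hc_def ▸ hc0
    have := (integral_eq_zero_iff_of_nonneg hh_nonneg int_h).mp h0
    filter_upwards [this] with ω hω
    exact hω
  -- ### conclusion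
  intro n
  have hW0 : ∫ ω, aux_h A B ω * ((A n ω : ℝ) * (B n ω : ℝ) - (a : ℝ) * b
      + (n : ℝ) / 3) ∂μ = 0 := by
    have : (fun ω => aux_h A B ω * ((A n ω : ℝ) * (B n ω : ℝ) - (a : ℝ) * b + (n : ℝ) / 3))
        =ᵐ[μ] fun _ => (0 : ℝ) := by
      filter_upwards [hHnull] with ω hω
      rw [hω, zero_mul]
    rw [integral_congr_ae this, integral_zero]
  have hfinal : ∫ ω, aux_f A B T n ω ∂μ = (a : ℝ) * b := by
    rw [hJ n, hW0, sub_zero]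
  have hsplitf : ∫ ω, aux_f A B T n ω ∂μ
      = (∫ ω, ((A (min (T ω) n) ω * B (min (T ω) n) ω : ℤ) : ℝ) ∂μ)
        + (1 / 3) * ∫ ω, ((min (T ω) n : ℕ) : ℝ) ∂μ := by
    unfold aux_f
    rw [integral_add (int_part1 n) ((int_part2 n).const_mul (1 / 3)),
      integral_const_mul]
  have hgoal := hfinal
  rw [hsplitf] at hgoal
  have hcastmin : ∫ ω, (min (T ω) n : ℝ) ∂μ = ∫ ω, ((min (T ω) n : ℕ) : ℝ) ∂μ := by
    refine integral_congr_ae (Eventually.of_forall fun ω => ?_)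
    simp [Nat.cast_min]
  rw [hcastmin]
  exact hgoal
end

section
/- For every n ≥ 0, with T_n = min{T, n}, one has E[A(T_n)²·B(T_n) + A(T_n)·B(T_n)²] = a·b·(a+b). -/
set_option linter.unusedSectionVars false
set_option linter.unreachableTactic false
set_option linter.unusedTactic false
set_option linter.unnecessarySeqFocus false
set_option maxHeartbeats 2000000

open MeasureTheory ProbabilityTheory Filter
open scoped ENNReal

noncomputable section Stmt8Aux

open Classical

variable {Ω : Type*} [MeasurableSpace Ω] {μ : Measure Ω} [IsProbabilityMeasure μ]
  {ξ : ℕ → Ω → ℤ × ℤ}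

/-- The support of the step distribution. -/
def stmt8Vset : Set (ℤ × ℤ) := {(-1, 0), (1, -1), (0, 1)}

lemma stmt8_factor (s : Finset ℕ) (h : Ω → ℝ)
    (hh : ∀ ω ω', (∀ i ∈ s, ξ i ω = ξ i ω') → h ω = h ω') :
    ∃ F : ((i : s) → ℤ × ℤ) → ℝ, Measurable F ∧ h = F ∘ (fun ω (i : s) => ξ i ω) := by
  refine ⟨fun x => if hx : ∃ ω, (fun i : s => ξ i ω) = x then h hx.choose else 0,
    measurable_of_countable _, ?_⟩
  funext ω
  have hx : ∃ ω', (fun i : s => ξ i ω') = (fun i : s => ξ i ω) := ⟨ω, rfl⟩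
  simp only [Function.comp_apply, dif_pos hx]
  exact hh _ _ (fun i hi => (congrFun hx.choose_spec ⟨i, hi⟩).symm)

lemma stmt8_meas (hmeas : ∀ n, Measurable (ξ n)) (s : Finset ℕ) (h : Ω → ℝ)
    (hh : ∀ ω ω', (∀ i ∈ s, ξ i ω = ξ i ω') → h ω = h ω') : Measurable h := by
  obtain ⟨F, hF, hEq⟩ := stmt8_factor s h hh
  rw [hEq]
  exact hF.comp (measurable_pi_lambda _ fun i => hmeas i)

lemma stmt8_indep (hmeas : ∀ n, Measurable (ξ n))
    (hindep : iIndepFun ξ μ)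
    (s t : Finset ℕ) (hst : Disjoint s t) (h h' : Ω → ℝ)
    (hh : ∀ ω ω', (∀ i ∈ s, ξ i ω = ξ i ω') → h ω = h ω')
    (hh' : ∀ ω ω', (∀ i ∈ t, ξ i ω = ξ i ω') → h' ω = h' ω') :
    IndepFun h h' μ := by
  obtain ⟨F, hF, hEq⟩ := stmt8_factor s h hh
  obtain ⟨F', hF', hEq'⟩ := stmt8_factor t h' hh'
  rw [hEq, hEq']
  exact (hindep.indepFun_finset s t hst hmeas).comp hF hF'

lemma stmt8_integrable (h : Ω → ℝ) (hm : Measurable h) (C : ℝ)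
    (hb : ∀ᵐ ω ∂μ, |h ω| ≤ C) : Integrable h μ :=
  Integrable.mono' (integrable_const C) hm.aestronglyMeasurable
    (by filter_upwards [hb] with ω hω using by simpa [Real.norm_eq_abs] using hω)


/-- A coordinate walk driven by `g ∘ ξ` is determined by the first steps. -/
lemma stmt8_walk_dep (g : ℤ × ℤ → ℤ) (c : ℤ) (W : ℕ → Ω → ℤ)
    (h0 : ∀ ω, W 0 ω = c) (hs : ∀ n ω, W (n + 1) ω = W n ω + g (ξ n ω)) :
    ∀ k (ω ω' : Ω), (∀ i, i < k → ξ i ω = ξ i ω') → W k ω = W k ω' := by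
  intro k
  induction k with
  | zero => intro ω ω' _; rw [h0, h0]
  | succ n ih =>
    intro ω ω' hξ
    rw [hs, hs, ih ω ω' (fun i hi => hξ i (hi.trans (Nat.lt_succ_self n))),
      hξ n (Nat.lt_succ_self n)]

lemma stmt8_walk_bound (g : ℤ × ℤ → ℤ) (hg : ∀ v ∈ stmt8Vset, |g v| ≤ 1)
    (c : ℤ) (W : ℕ → Ω → ℤ)
    (h0 : ∀ ω, W 0 ω = c) (hs : ∀ n ω, W (n + 1) ω = W n ω + g (ξ n ω)) :
    ∀ (ω : Ω), (∀ i, ξ i ω ∈ stmt8Vset) → ∀ k, |W k ω| ≤ |c| + k := by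
  intro ω hω k
  induction k with
  | zero => simp [h0]
  | succ n ih =>
    have h1 : |g (ξ n ω)| ≤ 1 := hg _ (hω n)
    have := abs_add_le (W n ω) (g (ξ n ω))
    rw [hs]
    push_cast
    push_cast at ih
    omega

lemma stmt8_ae_support (hmeas : ∀ n, Measurable (ξ n))
    (hunif : ∀ n, ∀ v ∈ stmt8Vset, μ {ω | ξ n ω = v} = 1 / 3) :
    ∀ᵐ ω ∂μ, ∀ n, ξ n ω ∈ stmt8Vset := by
  rw [ae_all_iff]
  intro n
  have hm : ∀ v : ℤ × ℤ, MeasurableSet {ω | ξ n ω = v} := fun v =>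
    (hmeas n) (measurableSet_singleton v)
  have hset : {ω | ξ n ω ∈ stmt8Vset} =
      {ω | ξ n ω = (-1, 0)} ∪ ({ω | ξ n ω = (1, -1)} ∪ {ω | ξ n ω = (0, 1)}) := by
    ext ω; simp [stmt8Vset]
  have hms : MeasurableSet {ω | ξ n ω ∈ stmt8Vset} := by
    rw [hset]; exact (hm _).union ((hm _).union (hm _))
  have h1 : μ {ω | ξ n ω ∈ stmt8Vset} = 1 := by
    rw [hset]
    have hd1 : Disjoint {ω | ξ n ω = ((-1 : ℤ), (0 : ℤ))}
        ({ω | ξ n ω = (1, -1)} ∪ {ω | ξ n ω = (0, 1)}) := by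
      rw [Set.disjoint_left]
      rintro ω h1 (h2 | h2) <;> simp_all
    have hd2 : Disjoint {ω | ξ n ω = ((1 : ℤ), (-1 : ℤ))} {ω | ξ n ω = (0, 1)} := by
      rw [Set.disjoint_left]
      rintro ω h1 h2 <;> simp_all
    rw [measure_union hd1 ((hm _).union (hm _)), measure_union hd2 (hm _),
      hunif n _ (by simp [stmt8Vset]), hunif n _ (by simp [stmt8Vset]),
      hunif n _ (by simp [stmt8Vset])]
    rw [ENNReal.div_add_div_same, ENNReal.div_add_div_same]
    norm_num
    exact ENNReal.div_self (by norm_num) (by norm_num)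
  rw [ae_iff]
  have : {ω | ¬ ξ n ω ∈ stmt8Vset} = {ω | ξ n ω ∈ stmt8Vset}ᶜ := rfl
  rw [this, measure_compl hms (measure_ne_top μ _), h1, measure_univ, tsub_self]

/-- recursion for the truncated stopping times `sInf ({k | Q k ω} ∪ {n})`. -/
lemma stmt8_stp_zero (Q : ℕ → Ω → Prop) (ω : Ω) :
    sInf ({k | Q k ω} ∪ {0}) = 0 :=
  Nat.sInf_eq_zero.2 (Or.inl (Or.inr rfl))

lemma stmt8_stp_succ_pos (Q : ℕ → Ω → Prop) (n : ℕ) (ω : Ω)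
    (h : ∀ k ≤ n, ¬ Q k ω) :
    sInf ({k | Q k ω} ∪ {n + 1}) = n + 1 := by
  refine le_antisymm (Nat.sInf_le (Or.inr rfl)) ?_
  refine Nat.le_of_not_lt fun hlt => ?_
  have hmem := Nat.sInf_mem (s := {k | Q k ω} ∪ {n + 1}) ⟨n + 1, Or.inr rfl⟩
  rcases hmem with hq | he
  · exact h _ (Nat.lt_succ_iff.1 hlt) hq
  · simp only [Set.mem_singleton_iff] at he; omega

lemma stmt8_stp_succ_neg (Q : ℕ → Ω → Prop) (n : ℕ) (ω : Ω)
    (h : ¬ ∀ k ≤ n, ¬ Q k ω) :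
    sInf ({k | Q k ω} ∪ {n + 1}) = sInf ({k | Q k ω} ∪ {n}) := by
  push_neg at h
  obtain ⟨k, hkn, hk⟩ := h
  have h1 : sInf {k | Q k ω} ≤ k := Nat.sInf_le hk
  have hne : {k | Q k ω}.Nonempty := ⟨k, hk⟩
  have key : ∀ m : ℕ, sInf {k | Q k ω} ≤ m → sInf ({k | Q k ω} ∪ {m}) = sInf {k | Q k ω} := by
    intro m hm
    refine le_antisymm (Nat.sInf_le (Or.inl (Nat.sInf_mem hne))) ?_
    have hmem := Nat.sInf_mem (s := {k | Q k ω} ∪ {m}) ⟨m, Or.inr rfl⟩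
    rcases hmem with hq | he
    · exact Nat.sInf_le hq
    · simp only [Set.mem_singleton_iff] at he; omega
  rw [key (n+1) (by omega), key n (by omega)]

/-- `sInf (S ∪ {n}) = min (sInf S) n` for nonempty `S`. -/
lemma stmt8_stp_min (S : Set ℕ) (hS : S.Nonempty) (n : ℕ) :
    sInf (S ∪ {n}) = min (sInf S) n := by
  refine le_antisymm (le_min (Nat.sInf_le (Or.inl (Nat.sInf_mem hS))) (Nat.sInf_le (Or.inr rfl))) ?_
  have hmem := Nat.sInf_mem (s := S ∪ {n}) ⟨n, Or.inr rfl⟩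
  rcases hmem with hq | he
  · exact le_trans (min_le_left _ _) (Nat.sInf_le hq)
  · simp only [Set.mem_singleton_iff] at he
    omega

lemma stmt8_stp_le (Q : ℕ → Ω → Prop) (n : ℕ) (ω : Ω) :
    sInf ({k | Q k ω} ∪ {n}) ≤ n := Nat.sInf_le (Or.inr rfl)


/-- **Optional stopping for harmonic functions of the walk.** -/
lemma stmt8_key
    (hmeas : ∀ n, Measurable (ξ n))
    (hindep : iIndepFun ξ μ)
    (hunif : ∀ n, ∀ v ∈ stmt8Vset, μ {ω | ξ n ω = v} = 1 / 3)
    (cA cB : ℤ) (A B : ℕ → Ω → ℤ)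
    (hA0 : ∀ ω, A 0 ω = cA) (hB0 : ∀ ω, B 0 ω = cB)
    (hA : ∀ n ω, A (n + 1) ω = A n ω + (ξ n ω).1)
    (hB : ∀ n ω, B (n + 1) ω = B n ω + (ξ n ω).2)
    (φ : ℤ → ℤ → ℤ)
    (hharm : ∀ x y, φ (x - 1) y + φ (x + 1) (y - 1) + φ x (y + 1) = 3 * φ x y)
    (hbnd : ∀ c : ℕ, ∃ C : ℝ, ∀ x y : ℤ, |x| ≤ (c : ℤ) → |y| ≤ (c : ℤ) → |(φ x y : ℝ)| ≤ C)
    (P : ℤ → ℤ → Prop)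
    (stp : ℕ → Ω → ℕ)
    (hstp0 : ∀ ω, stp 0 ω = 0)
    (hstpS1 : ∀ n ω, (∀ k ≤ n, P (A k ω) (B k ω)) → stp (n + 1) ω = n + 1)
    (hstpS2 : ∀ n ω, ¬ (∀ k ≤ n, P (A k ω) (B k ω)) → stp (n + 1) ω = stp n ω) :
    ∀ n, ∫ ω, (φ (A (stp n ω) ω) (B (stp n ω) ω) : ℝ) ∂μ = (φ cA cB : ℝ) := by
  have hdepA := stmt8_walk_dep (fun v => v.1) cA A hA0 hA
  have hdepB := stmt8_walk_dep (fun v => v.2) cB B hB0 hB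
  have hg1le : ∀ v ∈ stmt8Vset, |(fun v : ℤ × ℤ => v.1) v| ≤ 1 := by
    intro v hv
    rcases hv with rfl | rfl | rfl <;> decide
  have hg2le : ∀ v ∈ stmt8Vset, |(fun v : ℤ × ℤ => v.2) v| ≤ 1 := by
    intro v hv
    rcases hv with rfl | rfl | rfl <;> decide
  have hbA := stmt8_walk_bound (fun v => v.1) hg1le cA A hA0 hA
  have hbB := stmt8_walk_bound (fun v => v.2) hg2le cB B hB0 hB
  have hG : ∀ᵐ ω ∂μ, ∀ n, ξ n ω ∈ stmt8Vset := stmt8_ae_support hmeas hunif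
  -- basic properties of the truncated stopping time
  have hstp_le : ∀ n (ω : Ω), stp n ω ≤ n := by
    intro n
    induction n with
    | zero => intro ω; simp [hstp0]
    | succ n ih =>
      intro ω
      by_cases hc : ∀ k ≤ n, P (A k ω) (B k ω)
      · rw [hstpS1 n ω hc]
      · rw [hstpS2 n ω hc]; exact (ih ω).trans (Nat.le_succ n)
  have hstp_eq : ∀ n (ω : Ω), (∀ k, k < n → P (A k ω) (B k ω)) → stp n ω = n := by
    intro n ω h
    cases n with
    | zero => exact hstp0 ω
    | succ n => exact hstpS1 n ω (fun k hk => h k (Nat.lt_succ_iff.2 hk))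
  have hstp_dep : ∀ n (ω ω' : Ω), (∀ i, i < n → ξ i ω = ξ i ω') → stp n ω = stp n ω' := by
    intro n
    induction n with
    | zero => intro ω ω' _; rw [hstp0, hstp0]
    | succ n ih =>
      intro ω ω' hξ
      have hABk : ∀ k, k ≤ n → A k ω = A k ω' ∧ B k ω = B k ω' := fun k hk =>
        ⟨hdepA k ω ω' (fun i hi => hξ i (by omega)), hdepB k ω ω' (fun i hi => hξ i (by omega))⟩
      by_cases hc : ∀ k ≤ n, P (A k ω) (B k ω)
      · rw [hstpS1 n ω hc, hstpS1 n ω' (fun k hk => by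
          rw [← (hABk k hk).1, ← (hABk k hk).2]; exact hc k hk)]
      · have hc' : ¬ ∀ k ≤ n, P (A k ω') (B k ω') := fun hcc => hc (fun k hk => by
          rw [(hABk k hk).1, (hABk k hk).2]; exact hcc k hk)
        rw [hstpS2 n ω hc, hstpS2 n ω' hc', ih ω ω' (fun i hi => hξ i (by omega))]
  -- dependence / measurability / integrability of the stopped process
  have hFdep : ∀ n (ω ω' : Ω), (∀ i ∈ Finset.range n, ξ i ω = ξ i ω') →
      (φ (A (stp n ω) ω) (B (stp n ω) ω) : ℝ) = (φ (A (stp n ω') ω') (B (stp n ω') ω') : ℝ) := by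
    intro n ω ω' hξ
    simp only [Finset.mem_range] at hξ
    have h1 : stp n ω = stp n ω' := hstp_dep n ω ω' hξ
    have h2 : A (stp n ω) ω = A (stp n ω') ω' := by
      rw [h1]
      exact hdepA _ ω ω' (fun i hi => hξ i (lt_of_lt_of_le hi (hstp_le n ω')))
    have h3 : B (stp n ω) ω = B (stp n ω') ω' := by
      rw [h1]
      exact hdepB _ ω ω' (fun i hi => hξ i (lt_of_lt_of_le hi (hstp_le n ω')))
    rw [h2, h3]
  have hFmeas : ∀ n, Measurable (fun ω => (φ (A (stp n ω) ω) (B (stp n ω) ω) : ℝ)) :=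
    fun n => stmt8_meas hmeas (Finset.range n) _ (hFdep n)
  have habs : ∀ (ω : Ω), (∀ i, ξ i ω ∈ stmt8Vset) → ∀ k n : ℕ, k ≤ n →
      |A k ω| ≤ ((cA.natAbs + cB.natAbs + n : ℕ) : ℤ) ∧
      |B k ω| ≤ ((cA.natAbs + cB.natAbs + n : ℕ) : ℤ) := by
    intro ω hω k n hk
    have h1 := hbA ω hω k
    have h2 := hbB ω hω k
    simp only [Int.abs_eq_natAbs] at h1 h2 ⊢
    omega
  have hFint : ∀ n, Integrable (fun ω => (φ (A (stp n ω) ω) (B (stp n ω) ω) : ℝ)) μ := by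
    intro n
    obtain ⟨C, hC⟩ := hbnd (cA.natAbs + cB.natAbs + n)
    refine stmt8_integrable _ (hFmeas n) C ?_
    filter_upwards [hG] with ω hω
    have h := habs ω hω (stp n ω) n (hstp_le n ω)
    exact hC _ _ h.1 h.2
  -- main induction
  intro n
  induction n with
  | zero =>
    have heq : ∀ ω : Ω, (φ (A (stp 0 ω) ω) (B (stp 0 ω) ω) : ℝ) = (φ cA cB : ℝ) := by
      intro ω; rw [hstp0, hA0, hB0]
    rw [integral_congr_ae (Eventually.of_forall heq), integral_const]
    simp
  | succ n ih =>
    obtain ⟨C, hC⟩ := hbnd (cA.natAbs + cB.natAbs + n + 1)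
    have hC0 : 0 ≤ C := le_trans (abs_nonneg _)
      (hC 0 0 (by rw [abs_zero]; exact Int.natCast_nonneg _)
        (by rw [abs_zero]; exact Int.natCast_nonneg _))
    set e : Ω → ℝ := fun ω => if ∀ k ≤ n, P (A k ω) (B k ω) then 1 else 0 with hedef
    set X : Ω → ℝ := fun ω => (φ (A n ω) (B n ω) : ℝ) with hXdef
    set X1 : Ω → ℝ := fun ω => (φ (A n ω - 1) (B n ω) : ℝ) with hX1def
    set X2 : Ω → ℝ := fun ω => (φ (A n ω + 1) (B n ω - 1) : ℝ) with hX2def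
    set X3 : Ω → ℝ := fun ω => (φ (A n ω) (B n ω + 1) : ℝ) with hX3def
    set g1 : Ω → ℝ := fun ω => e ω * (X1 ω - X ω) with hg1def
    set g2 : Ω → ℝ := fun ω => e ω * (X2 ω - X ω) with hg2def
    set g3 : Ω → ℝ := fun ω => e ω * (X3 ω - X ω) with hg3def
    set i1 : Ω → ℝ := fun ω => if ξ n ω = ((-1 : ℤ), (0 : ℤ)) then 1 else 0 with hi1def
    set i2 : Ω → ℝ := fun ω => if ξ n ω = ((1 : ℤ), (-1 : ℤ)) then 1 else 0 with hi2def
    set i3 : Ω → ℝ := fun ω => if ξ n ω = ((0 : ℤ), (1 : ℤ)) then 1 else 0 with hi3def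
    have hABk : ∀ (ω ω' : Ω), (∀ i ∈ Finset.range n, ξ i ω = ξ i ω') →
        ∀ k ≤ n, A k ω = A k ω' ∧ B k ω = B k ω' := by
      intro ω ω' hξ k hk
      simp only [Finset.mem_range] at hξ
      exact ⟨hdepA k ω ω' fun i hi => hξ i (by omega), hdepB k ω ω' fun i hi => hξ i (by omega)⟩
    have hedep : ∀ (ω ω' : Ω), (∀ i ∈ Finset.range n, ξ i ω = ξ i ω') → e ω = e ω' := by
      intro ω ω' hξ
      have h := hABk ω ω' hξ
      by_cases hc : ∀ k ≤ n, P (A k ω) (B k ω)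
      · have hc' : ∀ k ≤ n, P (A k ω') (B k ω') := fun k hk => by
          rw [← (h k hk).1, ← (h k hk).2]; exact hc k hk
        simp only [hedef, if_pos hc, if_pos hc']
      · have hc' : ¬ ∀ k ≤ n, P (A k ω') (B k ω') := fun hcc => hc fun k hk => by
          rw [(h k hk).1, (h k hk).2]; exact hcc k hk
        simp only [hedef, if_neg hc, if_neg hc']
    have hg1dep : ∀ (ω ω' : Ω), (∀ i ∈ Finset.range n, ξ i ω = ξ i ω') → g1 ω = g1 ω' := by
      intro ω ω' hξ
      have h := hABk ω ω' hξ n le_rfl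
      simp only [hg1def, hX1def, hXdef, hedep ω ω' hξ, h.1, h.2]
    have hg2dep : ∀ (ω ω' : Ω), (∀ i ∈ Finset.range n, ξ i ω = ξ i ω') → g2 ω = g2 ω' := by
      intro ω ω' hξ
      have h := hABk ω ω' hξ n le_rfl
      simp only [hg2def, hX2def, hXdef, hedep ω ω' hξ, h.1, h.2]
    have hg3dep : ∀ (ω ω' : Ω), (∀ i ∈ Finset.range n, ξ i ω = ξ i ω') → g3 ω = g3 ω' := by
      intro ω ω' hξ
      have h := hABk ω ω' hξ n le_rfl
      simp only [hg3def, hX3def, hXdef, hedep ω ω' hξ, h.1, h.2]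
    have hi1dep : ∀ (ω ω' : Ω), (∀ i ∈ ({n} : Finset ℕ), ξ i ω = ξ i ω') → i1 ω = i1 ω' := by
      intro ω ω' hξ
      simp only [hi1def, hξ n (Finset.mem_singleton_self n)]
    have hi2dep : ∀ (ω ω' : Ω), (∀ i ∈ ({n} : Finset ℕ), ξ i ω = ξ i ω') → i2 ω = i2 ω' := by
      intro ω ω' hξ
      simp only [hi2def, hξ n (Finset.mem_singleton_self n)]
    have hi3dep : ∀ (ω ω' : Ω), (∀ i ∈ ({n} : Finset ℕ), ξ i ω = ξ i ω') → i3 ω = i3 ω' := by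
      intro ω ω' hξ
      simp only [hi3def, hξ n (Finset.mem_singleton_self n)]
    have hg1meas : Measurable g1 := stmt8_meas hmeas (Finset.range n) _ hg1dep
    have hg2meas : Measurable g2 := stmt8_meas hmeas (Finset.range n) _ hg2dep
    have hg3meas : Measurable g3 := stmt8_meas hmeas (Finset.range n) _ hg3dep
    have hi1meas : Measurable i1 := stmt8_meas hmeas {n} _ hi1dep
    have hi2meas : Measurable i2 := stmt8_meas hmeas {n} _ hi2dep
    have hi3meas : Measurable i3 := stmt8_meas hmeas {n} _ hi3dep
    have habs1 : ∀ (x : ℤ) (m : ℕ), |x| ≤ (m : ℤ) →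
        |x - 1| ≤ ((m + 1 : ℕ) : ℤ) ∧ |x + 1| ≤ ((m + 1 : ℕ) : ℤ) ∧ |x| ≤ ((m + 1 : ℕ) : ℤ) := by
      intro x m h
      have h2 := abs_le.1 h
      refine ⟨abs_le.2 ⟨?_, ?_⟩, abs_le.2 ⟨?_, ?_⟩, abs_le.2 ⟨?_, ?_⟩⟩ <;> push_cast <;> omega
    have habs_sub : ∀ u v : ℝ, |u - v| ≤ |u| + |v| := fun u v => by
      have h := abs_add_le u (-v); rwa [abs_neg, ← sub_eq_add_neg] at h
    have heb : ∀ ω, |e ω| ≤ 1 := by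
      intro ω; simp only [hedef]; split <;> norm_num
    have hi1b : ∀ ω, |i1 ω| ≤ 1 := by
      intro ω; simp only [hi1def]; split <;> norm_num
    have hi2b : ∀ ω, |i2 ω| ≤ 1 := by
      intro ω; simp only [hi2def]; split <;> norm_num
    have hi3b : ∀ ω, |i3 ω| ≤ 1 := by
      intro ω; simp only [hi3def]; split <;> norm_num
    have hgb : ∀ᵐ ω ∂μ, |g1 ω| ≤ 2 * C ∧ |g2 ω| ≤ 2 * C ∧ |g3 ω| ≤ 2 * C := by
      filter_upwards [hG] with ω hω
      obtain ⟨hxa, hxb⟩ := habs ω hω n n le_rfl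
      obtain ⟨ha1, ha2, ha3⟩ := habs1 _ _ hxa
      obtain ⟨hb1, hb2, hb3⟩ := habs1 _ _ hxb
      have hXb : |X ω| ≤ C := hC _ _ ha3 hb3
      have hX1b : |X1 ω| ≤ C := hC _ _ ha1 hb3
      have hX2b : |X2 ω| ≤ C := hC _ _ ha2 hb1
      have hX3b : |X3 ω| ≤ C := hC _ _ ha3 hb2
      refine ⟨?_, ?_, ?_⟩
      · calc |g1 ω| = |e ω| * |X1 ω - X ω| := by rw [hg1def, abs_mul]
          _ ≤ 1 * (C + C) := mul_le_mul (heb ω)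
              ((habs_sub _ _).trans (add_le_add hX1b hXb)) (abs_nonneg _) one_pos.le
          _ = 2 * C := by ring
      · calc |g2 ω| = |e ω| * |X2 ω - X ω| := by rw [hg2def, abs_mul]
          _ ≤ 1 * (C + C) := mul_le_mul (heb ω)
              ((habs_sub _ _).trans (add_le_add hX2b hXb)) (abs_nonneg _) one_pos.le
          _ = 2 * C := by ring
      · calc |g3 ω| = |e ω| * |X3 ω - X ω| := by rw [hg3def, abs_mul]
          _ ≤ 1 * (C + C) := mul_le_mul (heb ω)
              ((habs_sub _ _).trans (add_le_add hX3b hXb)) (abs_nonneg _) one_pos.le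
          _ = 2 * C := by ring
    have hg1int : Integrable g1 μ := stmt8_integrable _ hg1meas (2 * C)
      (hgb.mono fun ω h => h.1)
    have hg2int : Integrable g2 μ := stmt8_integrable _ hg2meas (2 * C)
      (hgb.mono fun ω h => h.2.1)
    have hg3int : Integrable g3 μ := stmt8_integrable _ hg3meas (2 * C)
      (hgb.mono fun ω h => h.2.2)
    have hgi1int : Integrable (fun ω => g1 ω * i1 ω) μ := by
      refine stmt8_integrable _ (hg1meas.mul hi1meas) (2 * C) ?_
      filter_upwards [hgb] with ω h
      calc |g1 ω * i1 ω| = |g1 ω| * |i1 ω| := abs_mul _ _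
        _ ≤ (2 * C) * 1 := mul_le_mul h.1 (hi1b ω) (abs_nonneg _) (by linarith)
        _ = 2 * C := mul_one _
    have hgi2int : Integrable (fun ω => g2 ω * i2 ω) μ := by
      refine stmt8_integrable _ (hg2meas.mul hi2meas) (2 * C) ?_
      filter_upwards [hgb] with ω h
      calc |g2 ω * i2 ω| = |g2 ω| * |i2 ω| := abs_mul _ _
        _ ≤ (2 * C) * 1 := mul_le_mul h.2.1 (hi2b ω) (abs_nonneg _) (by linarith)
        _ = 2 * C := mul_one _
    have hgi3int : Integrable (fun ω => g3 ω * i3 ω) μ := by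
      refine stmt8_integrable _ (hg3meas.mul hi3meas) (2 * C) ?_
      filter_upwards [hgb] with ω h
      calc |g3 ω * i3 ω| = |g3 ω| * |i3 ω| := abs_mul _ _
        _ ≤ (2 * C) * 1 := mul_le_mul h.2.2 (hi3b ω) (abs_nonneg _) (by linarith)
        _ = 2 * C := mul_one _
    have hdisj : Disjoint (Finset.range n) ({n} : Finset ℕ) := by simp
    have hI1 : IndepFun g1 i1 μ := stmt8_indep hmeas hindep _ _ hdisj g1 i1 hg1dep hi1dep
    have hI2 : IndepFun g2 i2 μ := stmt8_indep hmeas hindep _ _ hdisj g2 i2 hg2dep hi2dep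
    have hI3 : IndepFun g3 i3 μ := stmt8_indep hmeas hindep _ _ hdisj g3 i3 hg3dep hi3dep
    have hthird : ((1 : ℝ≥0∞) / 3).toReal = (1 : ℝ) / 3 := by
      rw [ENNReal.toReal_div]; norm_num
    have hind1 : ∫ ω, i1 ω ∂μ = (1 : ℝ) / 3 := by
      have h : i1 = (ξ n ⁻¹' {((-1 : ℤ), (0 : ℤ))}).indicator (1 : Ω → ℝ) := by
        funext ω
        simp only [hi1def, Set.indicator_apply, Set.mem_preimage, Set.mem_singleton_iff,
          Pi.one_apply]
      rw [h, integral_indicator_one ((hmeas n) (measurableSet_singleton _))]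
      have hμ : μ (ξ n ⁻¹' {((-1 : ℤ), (0 : ℤ))}) = 1 / 3 := hunif n _ (by simp [stmt8Vset])
      rw [measureReal_def, hμ, hthird]
    have hind2 : ∫ ω, i2 ω ∂μ = (1 : ℝ) / 3 := by
      have h : i2 = (ξ n ⁻¹' {((1 : ℤ), (-1 : ℤ))}).indicator (1 : Ω → ℝ) := by
        funext ω
        simp only [hi2def, Set.indicator_apply, Set.mem_preimage, Set.mem_singleton_iff,
          Pi.one_apply]
      rw [h, integral_indicator_one ((hmeas n) (measurableSet_singleton _))]
      have hμ : μ (ξ n ⁻¹' {((1 : ℤ), (-1 : ℤ))}) = 1 / 3 := hunif n _ (by simp [stmt8Vset])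
      rw [measureReal_def, hμ, hthird]
    have hind3 : ∫ ω, i3 ω ∂μ = (1 : ℝ) / 3 := by
      have h : i3 = (ξ n ⁻¹' {((0 : ℤ), (1 : ℤ))}).indicator (1 : Ω → ℝ) := by
        funext ω
        simp only [hi3def, Set.indicator_apply, Set.mem_preimage, Set.mem_singleton_iff,
          Pi.one_apply]
      rw [h, integral_indicator_one ((hmeas n) (measurableSet_singleton _))]
      have hμ : μ (ξ n ⁻¹' {((0 : ℤ), (1 : ℤ))}) = 1 / 3 := hunif n _ (by simp [stmt8Vset])
      rw [measureReal_def, hμ, hthird]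
    have hmul1 : ∫ ω, g1 ω * i1 ω ∂μ = (∫ ω, g1 ω ∂μ) * ((1 : ℝ) / 3) := by
      have h : (fun ω => g1 ω * i1 ω) = g1 * i1 := rfl
      rw [h, hI1.integral_mul_eq_mul_integral hg1meas.aestronglyMeasurable hi1meas.aestronglyMeasurable, hind1]
    have hmul2 : ∫ ω, g2 ω * i2 ω ∂μ = (∫ ω, g2 ω ∂μ) * ((1 : ℝ) / 3) := by
      have h : (fun ω => g2 ω * i2 ω) = g2 * i2 := rfl
      rw [h, hI2.integral_mul_eq_mul_integral hg2meas.aestronglyMeasurable hi2meas.aestronglyMeasurable, hind2]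
    have hmul3 : ∫ ω, g3 ω * i3 ω ∂μ = (∫ ω, g3 ω ∂μ) * ((1 : ℝ) / 3) := by
      have h : (fun ω => g3 ω * i3 ω) = g3 * i3 := rfl
      rw [h, hI3.integral_mul_eq_mul_integral hg3meas.aestronglyMeasurable hi3meas.aestronglyMeasurable, hind3]
    have hsumzero : ∀ ω, g1 ω + g2 ω + g3 ω = 0 := by
      intro ω
      have h3 := hharm (A n ω) (B n ω)
      have h3' : X1 ω + X2 ω + X3 ω = 3 * X ω := by
        simp only [hX1def, hX2def, hX3def, hXdef]
        exact_mod_cast congrArg (Int.cast : ℤ → ℝ) h3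
      calc g1 ω + g2 ω + g3 ω = e ω * ((X1 ω + X2 ω + X3 ω) - 3 * X ω) := by
            simp only [hg1def, hg2def, hg3def]; ring
        _ = 0 := by rw [h3']; ring
    have hg12int : Integrable (fun ω => g1 ω + g2 ω) μ := hg1int.add hg2int
    have hintsum : (∫ ω, g1 ω ∂μ) + (∫ ω, g2 ω ∂μ) + (∫ ω, g3 ω ∂μ) = 0 := by
      rw [← integral_add hg1int hg2int, ← integral_add hg12int hg3int]
      simp [hsumzero]
    -- the pointwise martingale decomposition
    have hptw : ∀ᵐ ω ∂μ, (φ (A (stp (n + 1) ω) ω) (B (stp (n + 1) ω) ω) : ℝ) =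
        (φ (A (stp n ω) ω) (B (stp n ω) ω) : ℝ) +
          (g1 ω * i1 ω + (g2 ω * i2 ω + g3 ω * i3 ω)) := by
      filter_upwards [hG] with ω hω
      by_cases hc : ∀ k ≤ n, P (A k ω) (B k ω)
      · have hs1 : stp (n + 1) ω = n + 1 := hstpS1 n ω hc
        have hs0 : stp n ω = n := hstp_eq n ω fun k hk => hc k (le_of_lt hk)
        have he : e ω = 1 := by simp only [hedef, if_pos hc]
        have hAB1 : A (n + 1) ω = A n ω + (ξ n ω).1 := hA n ω
        have hBB1 : B (n + 1) ω = B n ω + (ξ n ω).2 := hB n ω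
        have hvv := hω n
        simp only [stmt8Vset, Set.mem_insert_iff, Set.mem_singleton_iff] at hvv
        rcases hvv with hv | hv | hv
        · have hi1v : i1 ω = 1 := by simp [hi1def, hv]
          have hi2v : i2 ω = 0 := by simp [hi2def, hv]
          have hi3v : i3 ω = 0 := by simp [hi3def, hv]
          have hA' : A (n + 1) ω = A n ω - 1 := by
            rw [hAB1, hv]; try (show A n ω + (-1 : ℤ) = A n ω - 1; ring)
          have hB' : B (n + 1) ω = B n ω := by
            rw [hBB1, hv]; try (show B n ω + (0 : ℤ) = B n ω; ring)
          rw [hs1, hs0, hA', hB', hi1v, hi2v, hi3v]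
          simp only [hg1def, hg2def, hg3def, hX1def, hX2def, hX3def, hXdef, he]
          ring
        · have hi1v : i1 ω = 0 := by simp [hi1def, hv]
          have hi2v : i2 ω = 1 := by simp [hi2def, hv]
          have hi3v : i3 ω = 0 := by simp [hi3def, hv]
          have hA' : A (n + 1) ω = A n ω + 1 := by
            rw [hAB1, hv]; try (show A n ω + (1 : ℤ) = A n ω + 1; ring)
          have hB' : B (n + 1) ω = B n ω - 1 := by
            rw [hBB1, hv]; try (show B n ω + (-1 : ℤ) = B n ω - 1; ring)
          rw [hs1, hs0, hA', hB', hi1v, hi2v, hi3v]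
          simp only [hg1def, hg2def, hg3def, hX1def, hX2def, hX3def, hXdef, he]
          ring
        · have hi1v : i1 ω = 0 := by simp [hi1def, hv]
          have hi2v : i2 ω = 0 := by simp [hi2def, hv]
          have hi3v : i3 ω = 1 := by simp [hi3def, hv]
          have hA' : A (n + 1) ω = A n ω := by
            rw [hAB1, hv]; try (show A n ω + (0 : ℤ) = A n ω; ring)
          have hB' : B (n + 1) ω = B n ω + 1 := by
            rw [hBB1, hv]; try (show B n ω + (1 : ℤ) = B n ω + 1; ring)
          rw [hs1, hs0, hA', hB', hi1v, hi2v, hi3v]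
          simp only [hg1def, hg2def, hg3def, hX1def, hX2def, hX3def, hXdef, he]
          ring
      · have hs : stp (n + 1) ω = stp n ω := hstpS2 n ω hc
        have he : e ω = 0 := by simp only [hedef, if_neg hc]
        rw [hs]
        simp only [hg1def, hg2def, hg3def, he]
        ring
    have hq23 : Integrable (fun ω => g2 ω * i2 ω + g3 ω * i3 ω) μ := hgi2int.add hgi3int
    have hq : Integrable (fun ω => g1 ω * i1 ω + (g2 ω * i2 ω + g3 ω * i3 ω)) μ :=
      hgi1int.add hq23
    rw [integral_congr_ae hptw, integral_add (hFint n) hq, integral_add hgi1int hq23,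
      integral_add hgi2int hgi3int, hmul1, hmul2, hmul3, ih]
    linarith [hintsum]


/-- `sInf ({k | Q k} ∪ {n})` only depends on `Q k` for `k < n`. -/
lemma stmt8_stp_congr : ∀ (n : ℕ) (Q Q' : ℕ → Prop), (∀ k, k < n → (Q k ↔ Q' k)) →
    sInf ({k | Q k} ∪ {n}) = sInf ({k | Q' k} ∪ {n}) := by
  have hzero : ∀ (Q : ℕ → Prop), sInf ({k | Q k} ∪ {0}) = 0 := fun Q =>
    Nat.sInf_eq_zero.2 (Or.inl (Or.inr rfl))
  have hpos : ∀ (Q : ℕ → Prop) (n : ℕ), (∀ k ≤ n, ¬ Q k) →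
      sInf ({k | Q k} ∪ {n + 1}) = n + 1 := by
    intro Q n h
    refine le_antisymm (Nat.sInf_le (Or.inr rfl)) ?_
    refine Nat.le_of_not_lt fun hlt => ?_
    have hmem := Nat.sInf_mem (s := {k | Q k} ∪ {n + 1}) ⟨n + 1, Or.inr rfl⟩
    rcases hmem with hq | he
    · exact h _ (Nat.lt_succ_iff.1 hlt) hq
    · simp only [Set.mem_singleton_iff] at he; omega
  have hneg : ∀ (Q : ℕ → Prop) (n : ℕ), ¬ (∀ k ≤ n, ¬ Q k) →
      sInf ({k | Q k} ∪ {n + 1}) = sInf ({k | Q k} ∪ {n}) := by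
    intro Q n h
    push_neg at h
    obtain ⟨k, hkn, hk⟩ := h
    have hne : {k | Q k}.Nonempty := ⟨k, hk⟩
    have h1 : sInf {k | Q k} ≤ k := Nat.sInf_le hk
    have key : ∀ m : ℕ, sInf {k | Q k} ≤ m → sInf ({k | Q k} ∪ {m}) = sInf {k | Q k} := by
      intro m hm
      refine le_antisymm (Nat.sInf_le (Or.inl (Nat.sInf_mem hne))) ?_
      have hmem := Nat.sInf_mem (s := {k | Q k} ∪ {m}) ⟨m, Or.inr rfl⟩
      rcases hmem with hq | he
      · exact Nat.sInf_le hq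
      · simp only [Set.mem_singleton_iff] at he; omega
    rw [key (n + 1) (by omega), key n (by omega)]
  intro n
  induction n with
  | zero => intro Q Q' _; rw [hzero, hzero]
  | succ n ih =>
    intro Q Q' h
    by_cases hc : ∀ k ≤ n, ¬ Q k
    · have hc' : ∀ k ≤ n, ¬ Q' k := fun k hk hq => hc k hk ((h k (by omega)).2 hq)
      rw [hpos Q n hc, hpos Q' n hc']
    · have hc' : ¬ ∀ k ≤ n, ¬ Q' k := fun hcc => hc fun k hk hq =>
        hcc k hk ((h k (by omega)).1 hq)
      rw [hneg Q n hc, hneg Q' n hc', ih Q Q' (fun k hk => h k (by omega))]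

/-- `sInf (S ∪ {n}) < n` iff some element of `S` is below `n`. -/
lemma stmt8_stp_lt_iff (S : Set ℕ) (n : ℕ) :
    sInf (S ∪ {n}) < n ↔ ∃ k < n, k ∈ S := by
  constructor
  · intro h
    have hmem := Nat.sInf_mem (s := S ∪ {n}) ⟨n, Or.inr rfl⟩
    rcases hmem with hq | he
    · exact ⟨_, h, hq⟩
    · simp only [Set.mem_singleton_iff] at he; omega
  · rintro ⟨k, hk, hkS⟩
    exact lt_of_le_of_lt (Nat.sInf_le (Or.inl hkS)) hk

lemma stmt8_real_limit (t : ℝ) (a : ℕ) (ht0 : 0 ≤ t)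
    (ht : ∀ m : ℕ, t ≤ (a : ℝ) / ((a : ℝ) + m + 1)) : t = 0 := by
  have h1 : ∀ m : ℕ, t ≤ (a : ℝ) / ((m : ℝ) + 1) := by
    intro m
    refine le_trans (ht m) (div_le_div_of_nonneg_left (by positivity) (by positivity) ?_)
    have := Nat.cast_nonneg (α := ℝ) a
    linarith
  have h2 : Filter.Tendsto (fun m : ℕ => (a : ℝ) / ((m : ℝ) + 1)) atTop (nhds 0) := by
    have h3 : Filter.Tendsto (fun m : ℕ => (a : ℝ) / (m : ℝ)) atTop (nhds 0) :=
      tendsto_const_div_atTop_nhds_zero_nat (a : ℝ)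
    have h4 := h3.comp (tendsto_add_atTop_nat 1)
    have h5 : (fun m : ℕ => (a : ℝ) / ((m : ℝ) + 1)) =
        (fun m : ℕ => (a : ℝ) / (m : ℝ)) ∘ (fun n => n + 1) := by
      funext m; simp only [Function.comp_apply]; push_cast; ring
    rw [h5]; exact h4
  have h5 : t ≤ 0 := ge_of_tendsto' h2 h1
  linarith


/-- The walk `A` hits `0` almost surely (before which `A·B` must vanish). -/
lemma stmt8_null
    (hmeas : ∀ n, Measurable (ξ n))
    (hindep : iIndepFun ξ μ)
    (hunif : ∀ n, ∀ v ∈ stmt8Vset, μ {ω | ξ n ω = v} = 1 / 3)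
    (a b : ℕ) (ha : 0 < a)
    (A B : ℕ → Ω → ℤ)
    (hA0 : ∀ ω, A 0 ω = (a : ℤ)) (hB0 : ∀ ω, B 0 ω = (b : ℤ))
    (hA : ∀ n ω, A (n + 1) ω = A n ω + (ξ n ω).1)
    (hB : ∀ n ω, B (n + 1) ω = B n ω + (ξ n ω).2) :
    μ {ω | ∀ k, A k ω * B k ω ≠ 0} = 0 := by
  have hG : ∀ᵐ ω ∂μ, ∀ n, ξ n ω ∈ stmt8Vset := stmt8_ae_support hmeas hunif
  have hmeasA : ∀ k, Measurable (A k) := by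
    intro k
    induction k with
    | zero =>
      have h : A 0 = fun _ => (a : ℤ) := funext hA0
      rw [h]; exact measurable_const
    | succ k ih =>
      have h : A (k + 1) = fun ω => A k ω + (ξ k ω).1 := funext (hA k)
      rw [h]; exact ih.add (measurable_fst.comp (hmeas k))
  have hmeasB : ∀ k, Measurable (B k) := by
    intro k
    induction k with
    | zero =>
      have h : B 0 = fun _ => (b : ℤ) := funext hB0
      rw [h]; exact measurable_const
    | succ k ih =>
      have h : B (k + 1) = fun ω => B k ω + (ξ k ω).2 := funext (hB k)
      rw [h]; exact ih.add (measurable_snd.comp (hmeas k))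
  have hdepA := stmt8_walk_dep (fun v => v.1) (a : ℤ) A hA0 hA
  have hstep1 : ∀ (ω : Ω), (∀ i, ξ i ω ∈ stmt8Vset) →
      ∀ i, -1 ≤ (ξ i ω).1 ∧ (ξ i ω).1 ≤ 1 := by
    intro ω hω i
    have h := hω i
    simp only [stmt8Vset, Set.mem_insert_iff, Set.mem_singleton_iff] at h
    rcases h with hv | hv | hv <;> refine ⟨?_, ?_⟩ <;> simp [hv]
  set N : Set Ω := {ω | ∀ k, A k ω * B k ω ≠ 0} with hNdef
  have hNmeas : MeasurableSet N := by
    have h : N = ⋂ k, (fun ω => A k ω * B k ω) ⁻¹' ({0}ᶜ) := by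
      ext ω; simp [hNdef]
    rw [h]
    exact MeasurableSet.iInter fun k =>
      ((hmeasA k).mul (hmeasB k)) (measurableSet_singleton 0).compl
  -- main bound for each M > a
  suffices H : ∀ M : ℕ, a < M → μ N ≤ ENNReal.ofReal ((a : ℝ) / M) by
    have ht : ∀ m : ℕ, (μ N).toReal ≤ (a : ℝ) / ((a : ℝ) + m + 1) := by
      intro m
      have h1 := H (a + m + 1) (by omega)
      have h2 := ENNReal.toReal_mono ENNReal.ofReal_ne_top h1
      rw [ENNReal.toReal_ofReal (by positivity)] at h2
      convert h2 using 2
      push_cast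
      ring
    have h0 := stmt8_real_limit (μ N).toReal a ENNReal.toReal_nonneg ht
    rcases (ENNReal.toReal_eq_zero_iff _).1 h0 with h | h
    · exact h
    · exact absurd h (measure_ne_top μ N)
  intro M hM
  have hMpos : (0 : ℝ) < M := by
    have h : 0 < M := by omega
    exact_mod_cast h
  set Q : ℕ → Ω → Prop := fun k ω => ¬ (0 < A k ω ∧ A k ω < M) with hQdef
  set stpM : ℕ → Ω → ℕ := fun n ω => sInf ({k | Q k ω} ∪ {n}) with hstpMdef
  have hstp0 : ∀ ω, stpM 0 ω = 0 := fun ω => stmt8_stp_zero Q ω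
  have hstpS1 : ∀ n ω, (∀ k ≤ n, (0 < A k ω ∧ A k ω < M)) → stpM (n + 1) ω = n + 1 :=
    fun n ω h => stmt8_stp_succ_pos Q n ω (fun k hk hq => hq (h k hk))
  have hstpS2 : ∀ n ω, ¬ (∀ k ≤ n, (0 < A k ω ∧ A k ω < M)) → stpM (n + 1) ω = stpM n ω :=
    fun n ω h => stmt8_stp_succ_neg Q n ω (fun hcc => h (fun k hk => not_not.1 (hcc k hk)))
  have hkey := stmt8_key hmeas hindep hunif (a : ℤ) (b : ℤ) A B hA0 hB0 hA hB
    (fun x _ => x) (by intro x y; ring)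
    (fun c => ⟨(c : ℝ), fun x y hx _ => by
      rw [← Int.cast_abs]
      exact_mod_cast hx⟩)
    (fun x _ => 0 < x ∧ x < M) stpM hstp0 hstpS1 hstpS2
  -- pathwise bounds
  have hP1 : ∀ (ω : Ω), (∀ i, ξ i ω ∈ stmt8Vset) →
      ∀ n, 0 ≤ A (stpM n ω) ω ∧ A (stpM n ω) ω ≤ (M : ℤ) := by
    intro ω hω n
    induction n with
    | zero =>
      rw [hstp0 ω, hA0]
      omega
    | succ n ih =>
      by_cases hc : ∀ k ≤ n, (0 < A k ω ∧ A k ω < M)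
      · have hs : stpM (n + 1) ω = n + 1 := hstpS1 n ω hc
        have hn := hc n le_rfl
        have hst := hstep1 ω hω n
        rw [hs, hA n ω]
        omega
      · have hs : stpM (n + 1) ω = stpM n ω := hstpS2 n ω hc
        rw [hs]; exact ih
  have hP2 : ∀ (ω : Ω), (∀ i, ξ i ω ∈ stmt8Vset) → ω ∈ N → ∀ k, 0 < A k ω := by
    intro ω hω hN k
    induction k with
    | zero => rw [hA0]; exact_mod_cast ha
    | succ k ih =>
      have hne : A (k + 1) ω ≠ 0 := fun h0 => hN (k + 1) (by rw [h0, zero_mul])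
      have hst := hstep1 ω hω k
      rw [hA k ω] at hne ⊢
      omega
  have hP3 : ∀ (ω : Ω), (∀ i, ξ i ω ∈ stmt8Vset) → ω ∈ N → ∀ n, stpM n ω < n →
      (M : ℤ) ≤ A (stpM n ω) ω := by
    intro ω hω hN n hlt
    have hmem : stpM n ω ∈ ({k | Q k ω} ∪ {n}) :=
      Nat.sInf_mem (s := {k | Q k ω} ∪ {n}) ⟨n, Or.inr rfl⟩
    rcases hmem with hq | he
    · have hpos := hP2 ω hω hN (stpM n ω)
      simp only [Set.mem_setOf_eq, hQdef] at hq
      push_neg at hq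
      exact hq hpos
    · simp only [Set.mem_singleton_iff] at he
      omega
  -- measurability of the C-sets
  set Cs : ℕ → Set Ω := fun n => N ∩ {ω | stpM n ω < n} with hCdef
  have hQmeas : ∀ k, MeasurableSet {ω | Q k ω} := by
    intro k
    have h : {ω | Q k ω} = A k ⁻¹' {x : ℤ | ¬ (0 < x ∧ x < M)} := rfl
    rw [h]
    exact (hmeasA k) .of_discrete
  have hCmeas : ∀ n, MeasurableSet (Cs n) := by
    intro n
    refine hNmeas.inter ?_
    have h : {ω | stpM n ω < n} = ⋃ k, ⋃ (_ : k < n), {ω | Q k ω} := by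
      ext ω
      rw [Set.mem_setOf_eq, show stpM n ω = sInf ({k | Q k ω} ∪ {n}) from rfl,
        stmt8_stp_lt_iff]
      simp only [Set.mem_iUnion, Set.mem_setOf_eq]
      constructor
      · rintro ⟨k, hk, hQ⟩; exact ⟨k, hk, hQ⟩
      · rintro ⟨k, hk, hQ⟩; exact ⟨k, hk, hQ⟩
    rw [h]
    exact MeasurableSet.iUnion fun k => MeasurableSet.iUnion fun _ => hQmeas k
  -- integrability of the stopped walk
  have hstpdep : ∀ n (ω ω' : Ω), (∀ i ∈ Finset.range n, ξ i ω = ξ i ω') →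
      stpM n ω = stpM n ω' := by
    intro n ω ω' hξ
    simp only [Finset.mem_range] at hξ
    refine stmt8_stp_congr n (fun k => Q k ω) (fun k => Q k ω') (fun k hk => ?_)
    have h : A k ω = A k ω' := hdepA k ω ω' (fun i hi => hξ i (by omega))
    simp only [hQdef, h]
  have hstpA_meas : ∀ n, Measurable (fun ω => ((A (stpM n ω) ω : ℤ) : ℝ)) := by
    intro n
    refine stmt8_meas hmeas (Finset.range n) _ ?_
    intro ω ω' hξ
    have h1 := hstpdep n ω ω' hξ
    have hle : stpM n ω' ≤ n := stmt8_stp_le Q n ω'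
    simp only [Finset.mem_range] at hξ
    rw [h1, hdepA _ ω ω' (fun i hi => hξ i (by omega))]
  have hstpA_int : ∀ n, Integrable (fun ω => ((A (stpM n ω) ω : ℤ) : ℝ)) μ := by
    intro n
    refine stmt8_integrable _ (hstpA_meas n) M ?_
    filter_upwards [hG] with ω hω
    have h := hP1 ω hω n
    have h1 : (0 : ℝ) ≤ ((A (stpM n ω) ω : ℤ) : ℝ) := by exact_mod_cast h.1
    have h2 : ((A (stpM n ω) ω : ℤ) : ℝ) ≤ (M : ℝ) := by exact_mod_cast h.2
    rw [abs_le]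
    constructor <;> linarith
  -- gambler's ruin estimate
  have hCb : ∀ n, (M : ℝ) * (μ (Cs n)).toReal ≤ (a : ℝ) := by
    intro n
    have hmono : ∀ᵐ ω ∂μ, (Cs n).indicator (fun _ => (M : ℝ)) ω ≤ ((A (stpM n ω) ω : ℤ) : ℝ) := by
      filter_upwards [hG] with ω hω
      by_cases hmem : ω ∈ Cs n
      · rw [Set.indicator_of_mem hmem]
        have h := hP3 ω hω hmem.1 n hmem.2
        exact_mod_cast h
      · rw [Set.indicator_of_notMem hmem]
        exact_mod_cast (hP1 ω hω n).1
    have hind_int : Integrable ((Cs n).indicator (fun _ => (M : ℝ))) μ :=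
      (integrable_const _).indicator (hCmeas n)
    have hle := integral_mono_ae hind_int (hstpA_int n) hmono
    rw [integral_indicator_const _ (hCmeas n)] at hle
    have hkeyn := hkey n
    rw [hkeyn] at hle
    rw [smul_eq_mul] at hle
    have hcast : ((a : ℤ) : ℝ) = (a : ℝ) := by push_cast; rfl
    rw [hcast, measureReal_def] at hle
    linarith [hle]
  have hCb' : ∀ n, μ (Cs n) ≤ ENNReal.ofReal ((a : ℝ) / M) := by
    intro n
    rw [← ENNReal.ofReal_toReal (measure_ne_top μ (Cs n))]
    apply ENNReal.ofReal_le_ofReal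
    rw [le_div_iff₀ hMpos]
    linarith [hCb n]
  have hCsub : ∀ n, Cs n ⊆ Cs (n + 1) := by
    intro n ω hω
    refine ⟨hω.1, ?_⟩
    obtain ⟨k, hk, hkQ⟩ := (stmt8_stp_lt_iff {k | Q k ω} n).1 hω.2
    exact (stmt8_stp_lt_iff {k | Q k ω} (n + 1)).2 ⟨k, by omega, hkQ⟩
  set U : Set Ω := {ω | ∀ k, 0 < A k ω ∧ A k ω < M} with hUdef
  have hNsub : N ⊆ U ∪ ⋃ n, Cs n := by
    intro ω hω
    by_cases hU : ∀ k, 0 < A k ω ∧ A k ω < M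
    · exact Or.inl hU
    · obtain ⟨k, hk⟩ := not_forall.1 hU
      right
      exact Set.mem_iUnion.2 ⟨k + 1, ⟨hω, (stmt8_stp_lt_iff {k | Q k ω} (k + 1)).2
        ⟨k, by omega, hk⟩⟩⟩
  -- block argument : μ U = 0
  have hU0 : μ U = 0 := by
    set D : ℕ → Set Ω := fun j => {ω | ∀ i < M, ξ (j * M + i) ω = ((-1 : ℤ), (0 : ℤ))}
      with hDdef
    have hUD : ∀ j (ω : Ω), ω ∈ U → ω ∉ D j := by
      intro j ω hU hD
      have hlin : ∀ i ≤ M, A (j * M + i) ω = A (j * M) ω - i := by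
        intro i hi
        induction i with
        | zero => simp
        | succ i ih =>
          have h1 : ξ (j * M + i) ω = ((-1 : ℤ), (0 : ℤ)) := hD i (by omega)
          have hn : j * M + (i + 1) = (j * M + i) + 1 := by omega
          rw [hn, hA, h1, ih (by omega)]
          push_cast
          show A (j * M) ω - (i : ℤ) + (-1) = A (j * M) ω - ((i : ℤ) + 1)
          ring
      have h1 := hlin M le_rfl
      have h2 := (hU (j * M)).2
      have h3 := (hU (j * M + M)).1
      omega
    -- measure of the blocks
    have hSmeas : ∀ (j r : ℕ), MeasurableSet {ω | ∀ i < r, ξ (j * M + i) ω = ((-1:ℤ),(0:ℤ))} := by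
      intro j r
      have h : {ω | ∀ i < r, ξ (j * M + i) ω = ((-1:ℤ),(0:ℤ))} =
          ⋂ i, ⋂ (_ : i < r), (ξ (j * M + i)) ⁻¹' {((-1:ℤ),(0:ℤ))} := by
        ext ω; simp
      rw [h]
      exact MeasurableSet.iInter fun i => MeasurableSet.iInter fun _ =>
        (hmeas _) (measurableSet_singleton _)
    -- product formula helper
    have hprod : ∀ (s t : Set Ω), MeasurableSet s → MeasurableSet t →
        IndepFun (s.indicator (1 : Ω → ℝ)) (t.indicator (1 : Ω → ℝ)) μ →
        (μ (s ∩ t)).toReal = (μ s).toReal * (μ t).toReal := by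
      intro s t hs ht hI
      have h1 : (s ∩ t).indicator (1 : Ω → ℝ) =
          s.indicator (1 : Ω → ℝ) * t.indicator (1 : Ω → ℝ) := by
        funext ω
        by_cases h1 : ω ∈ s <;> by_cases h2 : ω ∈ t <;>
          simp [Set.indicator_apply, h1, h2]
      rw [← measureReal_def, ← measureReal_def, ← measureReal_def,
          ← integral_indicator_one (hs.inter ht), h1,
        hI.integral_mul_eq_mul_integral ((measurable_one.indicator hs).aestronglyMeasurable)
          ((measurable_one.indicator ht).aestronglyMeasurable),
        integral_indicator_one hs, integral_indicator_one ht]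
    have hinddep : ∀ (s : Set Ω) (t : Finset ℕ),
        (∀ (ω ω' : Ω), (∀ i ∈ t, ξ i ω = ξ i ω') → (ω ∈ s ↔ ω' ∈ s)) →
        ∀ (ω ω' : Ω), (∀ i ∈ t, ξ i ω = ξ i ω') →
          s.indicator (1 : Ω → ℝ) ω = s.indicator (1 : Ω → ℝ) ω' := by
      intro s t hiff ω ω' hξ
      by_cases hin : ω ∈ s
      · rw [Set.indicator_of_mem hin, Set.indicator_of_mem ((hiff ω ω' hξ).1 hin)]
        rfl
      · rw [Set.indicator_of_notMem hin,
          Set.indicator_of_notMem (fun h' => hin ((hiff ω ω' hξ).2 h'))]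
    have hthird : ((1 : ℝ≥0∞) / 3).toReal = (1 : ℝ) / 3 := by
      rw [ENNReal.toReal_div]; norm_num
    -- measure of one block prefix
    have hDr : ∀ j r, (μ {ω | ∀ i < r, ξ (j * M + i) ω = ((-1:ℤ),(0:ℤ))}).toReal
        = ((1 : ℝ) / 3) ^ r := by
      intro j r
      induction r with
      | zero =>
        have h : {ω : Ω | ∀ i < 0, ξ (j * M + i) ω = ((-1:ℤ),(0:ℤ))} = Set.univ := by
          ext ω; simp
        rw [h]
        simp
      | succ r ih =>
        have hseteq : {ω : Ω | ∀ i < r + 1, ξ (j * M + i) ω = ((-1:ℤ),(0:ℤ))} =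
            {ω | ∀ i < r, ξ (j * M + i) ω = ((-1:ℤ),(0:ℤ))} ∩
              {ω | ξ (j * M + r) ω = ((-1:ℤ),(0:ℤ))} := by
          ext ω
          simp only [Set.mem_setOf_eq, Set.mem_inter_iff]
          constructor
          · intro h
            exact ⟨fun i hi => h i (by omega), h r (by omega)⟩
          · rintro ⟨h1, h2⟩ i hi
            rcases Nat.lt_succ_iff_lt_or_eq.1 hi with h | h
            · exact h1 i h
            · rw [h]; exact h2
        have hI : IndepFun
            (({ω | ∀ i < r, ξ (j * M + i) ω = ((-1:ℤ),(0:ℤ))}).indicator (1 : Ω → ℝ))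
            (({ω | ξ (j * M + r) ω = ((-1:ℤ),(0:ℤ))}).indicator (1 : Ω → ℝ)) μ := by
          refine stmt8_indep hmeas hindep (Finset.Ico (j * M) (j * M + r)) {j * M + r}
            (by simp) _ _ (hinddep _ _ ?_) (hinddep _ _ ?_)
          · intro ω ω' hξ
            simp only [Set.mem_setOf_eq]
            constructor <;> intro h i hi
            · rw [← hξ (j * M + i) (by simp only [Finset.mem_Ico]; omega)]
              exact h i hi
            · rw [hξ (j * M + i) (by simp only [Finset.mem_Ico]; omega)]
              exact h i hi
          · intro ω ω' hξ
            have h := hξ (j * M + r) (Finset.mem_singleton_self _)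
            simp only [Set.mem_setOf_eq, h]
        have hstep := hprod _ _ (hSmeas j r)
          (show MeasurableSet {ω | ξ (j * M + r) ω = ((-1:ℤ),(0:ℤ))} from
            (hmeas _) (measurableSet_singleton _)) hI
        rw [hseteq, hstep, ih, hunif _ _ (by simp [stmt8Vset]), hthird]
        ring
    have hDmeas : ∀ j, MeasurableSet (D j) := fun j => hSmeas j M
    have hDval : ∀ j, (μ (D j)).toReal = ((1 : ℝ) / 3) ^ M := fun j => hDr j M
    -- intersection of complements of the blocks
    have hInter : ∀ K, (μ (⋂ j ∈ Finset.range K, (D j)ᶜ)).toReal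
        = (1 - ((1 : ℝ) / 3) ^ M) ^ K := by
      intro K
      induction K with
      | zero => simp
      | succ K ih =>
        have hseteq : (⋂ j ∈ Finset.range (K + 1), (D j)ᶜ) =
            (⋂ j ∈ Finset.range K, (D j)ᶜ) ∩ (D K)ᶜ := by
          ext ω
          simp only [Set.mem_iInter, Set.mem_inter_iff, Finset.mem_range]
          constructor
          · intro h
            exact ⟨fun j hj => h j (by omega), h K (by omega)⟩
          · rintro ⟨h1, h2⟩ j hj
            rcases Nat.lt_succ_iff_lt_or_eq.1 hj with h | h
            · exact h1 j h
            · rw [h]; exact h2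
        have hImeas : MeasurableSet (⋂ j ∈ Finset.range K, (D j)ᶜ) :=
          MeasurableSet.biInter (Finset.range K).countable_toSet fun j _ => (hDmeas j).compl
        have hI : IndepFun
            ((⋂ j ∈ Finset.range K, (D j)ᶜ).indicator (1 : Ω → ℝ))
            (((D K)ᶜ).indicator (1 : Ω → ℝ)) μ := by
          refine stmt8_indep hmeas hindep (Finset.range (K * M)) (Finset.Ico (K * M) (K * M + M))
            (by
              rw [Finset.disjoint_left]
              intro x hx hx2
              simp only [Finset.mem_range] at hx
              simp only [Finset.mem_Ico] at hx2
              omega) _ _ (hinddep _ _ ?_) (hinddep _ _ ?_)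
          · intro ω ω' hξ
            simp only [Finset.mem_range] at hξ
            have hbound : ∀ j, j < K → ∀ i, i < M → j * M + i < K * M := by
              intro j hj i hi
              calc j * M + i < j * M + M := by omega
                _ = (j + 1) * M := by ring
                _ ≤ K * M := Nat.mul_le_mul_right M hj
            simp only [Set.mem_iInter, Finset.mem_range, Set.mem_compl_iff, hDdef,
              Set.mem_setOf_eq]
            constructor <;> intro h j hj hD <;> refine h j hj (fun i hi => ?_)
            · rw [hξ (j * M + i) (hbound j hj i hi)]
              exact hD i hi
            · rw [← hξ (j * M + i) (hbound j hj i hi)]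
              exact hD i hi
          · intro ω ω' hξ
            simp only [Set.mem_compl_iff, hDdef, Set.mem_setOf_eq]
            constructor <;> intro h hD <;> refine h (fun i hi => ?_)
            · rw [hξ (K * M + i) (by simp only [Finset.mem_Ico]; omega)]
              exact hD i hi
            · rw [← hξ (K * M + i) (by simp only [Finset.mem_Ico]; omega)]
              exact hD i hi
        have hstep := hprod _ _ hImeas (hDmeas K).compl hI
        have hcompl : (μ ((D K)ᶜ)).toReal = 1 - ((1 : ℝ) / 3) ^ M := by
          rw [measure_compl (hDmeas K) (measure_ne_top μ _), measure_univ,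
            ENNReal.toReal_sub_of_le prob_le_one ENNReal.one_ne_top, ENNReal.toReal_one,
            hDval K]
        rw [hseteq, hstep, ih, hcompl]
        ring
    -- conclude μ U = 0
    have hq0 : (0 : ℝ) ≤ 1 - ((1 : ℝ) / 3) ^ M := by
      have h := pow_le_one₀ (by norm_num : (0:ℝ) ≤ 1/3) (by norm_num : (1:ℝ)/3 ≤ 1) (n := M)
      linarith
    have hq1 : 1 - ((1 : ℝ) / 3) ^ M < 1 := by
      have h : (0 : ℝ) < (1 / 3 : ℝ) ^ M := by positivity
      linarith
    have hUsub : ∀ K, U ⊆ ⋂ j ∈ Finset.range K, (D j)ᶜ := by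
      intro K ω hω
      simp only [Set.mem_iInter, Finset.mem_range]
      intro j _
      exact hUD j ω hω
    have hUb : ∀ K, (μ U).toReal ≤ (1 - ((1 : ℝ) / 3) ^ M) ^ K := by
      intro K
      rw [← hInter K]
      exact ENNReal.toReal_mono (measure_ne_top μ _) (measure_mono (hUsub K))
    have htend : Tendsto (fun K : ℕ => (1 - ((1 : ℝ) / 3) ^ M) ^ K) atTop (nhds 0) :=
      tendsto_pow_atTop_nhds_zero_of_lt_one hq0 hq1
    have h0 : (μ U).toReal ≤ 0 := ge_of_tendsto' htend hUb
    have h1 : (μ U).toReal = 0 := le_antisymm h0 ENNReal.toReal_nonneg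
    rcases (ENNReal.toReal_eq_zero_iff _).1 h1 with h | h
    · exact h
    · exact absurd h (measure_ne_top μ U)
  -- put everything together
  have hmono : Monotone Cs := monotone_nat_of_le_succ hCsub
  calc μ N ≤ μ (U ∪ ⋃ n, Cs n) := measure_mono hNsub
    _ ≤ μ U + μ (⋃ n, Cs n) := measure_union_le _ _
    _ = μ (⋃ n, Cs n) := by rw [hU0, zero_add]
    _ ≤ ENNReal.ofReal ((a : ℝ) / M) := by
        rw [hmono.directed_le.measure_iUnion]
        exact iSup_le hCb'



end Stmt8Aux


/-- For the truncated stopping time `T_n = min (T, n)`,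
`E[A(T_n)² * B(T_n) + A(T_n) * B(T_n)²] = a * b * (a + b)`. -/
theorem stmt_8
{Ω : Type*} [MeasurableSpace Ω] (μ : Measure Ω) [IsProbabilityMeasure μ]
    (a b : ℕ) (ha : 0 < a) (hb : 0 < b)
    (ξ : ℕ → Ω → ℤ × ℤ)
    (hmeas : ∀ n, Measurable (ξ n))
    (hindep : iIndepFun ξ μ)
    (hunif : ∀ n, ∀ v ∈ ({(-1, 0), (1, -1), (0, 1)} : Set (ℤ × ℤ)),
      μ {ω | ξ n ω = v} = 1 / 3)
    (A B : ℕ → Ω → ℤ)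
    (hA0 : ∀ ω, A 0 ω = (a : ℤ)) (hB0 : ∀ ω, B 0 ω = (b : ℤ))
    (hA : ∀ n ω, A (n + 1) ω = A n ω + (ξ n ω).1)
    (hB : ∀ n ω, B (n + 1) ω = B n ω + (ξ n ω).2)
(T : Ω → ℕ)
    (hT : ∀ ω, T ω = sInf {n | A n ω * B n ω = 0}) :
    ∀ n : ℕ,
      (∫ ω, ((A (min (T ω) n) ω ^ 2 * B (min (T ω) n) ω
          + A (min (T ω) n) ω * B (min (T ω) n) ω ^ 2 : ℤ) : ℝ) ∂μ)
        = (a : ℝ) * b * ((a : ℝ) + b) := by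
  intro n
  have hunif' : ∀ m, ∀ v ∈ stmt8Vset, μ {ω | ξ m ω = v} = 1 / 3 := fun m v hv =>
    hunif m v hv
  set φ : ℤ → ℤ → ℤ := fun x y => x ^ 2 * y + x * y ^ 2 with hφdef
  set Q : ℕ → Ω → Prop := fun k ω => A k ω * B k ω = 0 with hQdef
  set stp1 : ℕ → Ω → ℕ := fun m ω => sInf ({k | Q k ω} ∪ {m}) with hstpdef
  have hkey := stmt8_key hmeas hindep hunif' (a : ℤ) (b : ℤ) A B hA0 hB0 hA hB φ
    (by intro x y; simp only [hφdef]; ring)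
    (fun c => ⟨2 * (c : ℝ) ^ 3, by
      intro x y hx hy
      simp only [hφdef]
      have hx' : |(x : ℝ)| ≤ (c : ℝ) := by exact_mod_cast hx
      have hy' : |(y : ℝ)| ≤ (c : ℝ) := by exact_mod_cast hy
      have h0x := abs_nonneg (x : ℝ)
      have h0y := abs_nonneg (y : ℝ)
      push_cast
      calc |(x : ℝ) ^ 2 * y + x * y ^ 2| ≤ |(x : ℝ) ^ 2 * y| + |(x : ℝ) * y ^ 2| := abs_add_le _ _
        _ = |(x : ℝ)| ^ 2 * |(y : ℝ)| + |(x : ℝ)| * |(y : ℝ)| ^ 2 := by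
            rw [abs_mul, abs_mul, abs_pow, abs_pow]
        _ ≤ 2 * (c : ℝ) ^ 3 := by
            have hc0 : (0 : ℝ) ≤ c := h0x.trans hx'
            have h2 : |(x : ℝ)| ^ 2 ≤ (c : ℝ) ^ 2 := by nlinarith
            have h3 : |(y : ℝ)| ^ 2 ≤ (c : ℝ) ^ 2 := by nlinarith
            have h4 : |(x : ℝ)| ^ 2 * |(y : ℝ)| ≤ (c : ℝ) ^ 2 * c :=
              mul_le_mul h2 hy' h0y (by positivity)
            have h5 : |(x : ℝ)| * |(y : ℝ)| ^ 2 ≤ (c : ℝ) * c ^ 2 :=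
              mul_le_mul hx' h3 (by positivity) hc0
            nlinarith⟩)
    (fun x y => x * y ≠ 0) stp1
    (fun ω => stmt8_stp_zero Q ω)
    (fun m ω h => stmt8_stp_succ_pos Q m ω h)
    (fun m ω h => stmt8_stp_succ_neg Q m ω h)
  have hnull := stmt8_null hmeas hindep hunif' a b ha A B hA0 hB0 hA hB
  have h1 : ∀ᵐ ω ∂μ, ¬ (∀ k, A k ω * B k ω ≠ 0) := by
    rw [ae_iff]
    simp only [not_not]
    exact hnull
  have hae : ∀ᵐ ω ∂μ, ((A (min (T ω) n) ω ^ 2 * B (min (T ω) n) ω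
      + A (min (T ω) n) ω * B (min (T ω) n) ω ^ 2 : ℤ) : ℝ)
      = (φ (A (stp1 n ω) ω) (B (stp1 n ω) ω) : ℝ) := by
    filter_upwards [h1] with ω hω
    push_neg at hω
    obtain ⟨k, hk⟩ := hω
    have hS : {k | Q k ω}.Nonempty := ⟨k, hk⟩
    have hmin : min (T ω) n = stp1 n ω := by
      rw [hT ω]
      exact (stmt8_stp_min _ hS n).symm
    rw [hmin]
  rw [integral_congr_ae hae, hkey n]
  simp only [hφdef]
  push_cast
  ring
end

section
/- With T_n = min{T, n}, the limit lim_{n→∞} E[A(T_n)·B(T_n)] = 0 holds. -/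
open MeasureTheory ProbabilityTheory Filter Set
open scoped ENNReal

namespace Stmt9

/-- the set of possible steps -/
def SV : Set (ℤ × ℤ) := {(-1, 0), (1, -1), (0, 1)}

structure Setup (Ω : Type*) [MeasurableSpace Ω] where
  μ : Measure Ω
  prob : IsProbabilityMeasure μ
  a : ℕ
  b : ℕ
  ha : 0 < a
  hb : 0 < b
  ξ : ℕ → Ω → ℤ × ℤ
  hmeas : ∀ n, Measurable (ξ n)
  hindep : iIndepFun ξ μ
  hunif : ∀ n, ∀ v ∈ SV, μ {ω | ξ n ω = v} = 1 / 3
  A : ℕ → Ω → ℤ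
  B : ℕ → Ω → ℤ
  hA0 : ∀ ω, A 0 ω = (a : ℤ)
  hB0 : ∀ ω, B 0 ω = (b : ℤ)
  hA : ∀ n ω, A (n + 1) ω = A n ω + (ξ n ω).1
  hB : ∀ n ω, B (n + 1) ω = B n ω + (ξ n ω).2

namespace Setup

variable {Ω : Type*} [MeasurableSpace Ω] (S : Setup Ω)

/-- σ-algebra of the past before time `k` -/
def mF (k : ℕ) : MeasurableSpace Ω :=
  MeasurableSpace.comap (fun ω (i : Finset.range k) => S.ξ i ω) MeasurableSpace.pi

lemma mF_le (k : ℕ) : S.mF k ≤ ‹MeasurableSpace Ω› :=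
  Measurable.comap_le (measurable_pi_lambda _ (fun i => S.hmeas i))

lemma meas_xi_F {i k : ℕ} (h : i < k) : Measurable[S.mF k] (S.ξ i) := by
  have h1 : Measurable[S.mF k] (fun ω (j : Finset.range k) => S.ξ j ω) :=
    Measurable.of_comap_le le_rfl
  exact (measurable_pi_apply (⟨i, Finset.mem_range.2 h⟩ : Finset.range k)).comp h1

lemma measA_F {m k : ℕ} (h : m ≤ k) : Measurable[S.mF k] (S.A m) := by
  induction m with
  | zero =>
    have : S.A 0 = fun _ => (S.a : ℤ) := funext S.hA0
    rw [this]; exact measurable_const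
  | succ m ih =>
    have : S.A (m + 1) = fun ω => S.A m ω + (S.ξ m ω).1 := funext (S.hA m)
    rw [this]
    exact (ih (Nat.le_of_succ_le h)).add
      (measurable_fst.comp (S.meas_xi_F (Nat.lt_of_succ_le h)))

lemma measB_F {m k : ℕ} (h : m ≤ k) : Measurable[S.mF k] (S.B m) := by
  induction m with
  | zero =>
    have : S.B 0 = fun _ => (S.b : ℤ) := funext S.hB0
    rw [this]; exact measurable_const
  | succ m ih =>
    have : S.B (m + 1) = fun ω => S.B m ω + (S.ξ m ω).2 := funext (S.hB m)
    rw [this]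
    exact (ih (Nat.le_of_succ_le h)).add
      (measurable_snd.comp (S.meas_xi_F (Nat.lt_of_succ_le h)))

lemma measA (n : ℕ) : Measurable (S.A n) := (S.measA_F le_rfl).mono (S.mF_le n) le_rfl

lemma measB (n : ℕ) : Measurable (S.B n) := (S.measB_F le_rfl).mono (S.mF_le n) le_rfl

lemma mF_mono {j k : ℕ} (h : j ≤ k) : S.mF j ≤ S.mF k := by
  have h1 : Measurable[S.mF k] (fun ω (i : Finset.range j) => S.ξ i ω) :=
    (@measurable_pi_iff Ω _ _ (S.mF k) _ _).mpr
      (fun i => S.meas_xi_F (lt_of_lt_of_le (Finset.mem_range.1 i.2) h))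
  exact Measurable.comap_le h1

/-- the set where the walk is strictly positive up to time n -/
def H (n : ℕ) : Set Ω := {ω | ∀ k ≤ n, 0 < S.A k ω ∧ 0 < S.B k ω}

lemma H_antitone {m n : ℕ} (h : m ≤ n) : S.H n ⊆ S.H m :=
  fun ω hω k hk => hω k (hk.trans h)

lemma measH_F (n : ℕ) : MeasurableSet[S.mF n] (S.H n) := by
  have : S.H n = ⋂ (k : ℕ), ⋂ (_ : k ≤ n), ({ω | 0 < S.A k ω} ∩ {ω | 0 < S.B k ω}) := by
    ext ω
    simp only [H, Set.mem_iInter, Set.mem_inter_iff, Set.mem_setOf_eq]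
  rw [this]
  refine MeasurableSet.iInter fun k => MeasurableSet.iInter fun hk => MeasurableSet.inter ?_ ?_
  · exact (S.measA_F hk) (show MeasurableSet {x : ℤ | 0 < x} from trivial)
  · exact (S.measB_F hk) (show MeasurableSet {x : ℤ | 0 < x} from trivial)

lemma measH (n : ℕ) : MeasurableSet (S.H n) := (S.mF_le n) _ (S.measH_F n)

/-- indicator of H n -/
noncomputable def indH (n : ℕ) : Ω → ℝ := (S.H n).indicator (fun _ => (1 : ℝ))

lemma meas_indH (n : ℕ) : Measurable (S.indH n) :=
  measurable_const.indicator (S.measH n)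

lemma meas_indH_F (n : ℕ) : Measurable[S.mF n] (S.indH n) :=
  measurable_const.indicator (S.measH_F n)

lemma indH_nonneg (n : ℕ) (ω : Ω) : 0 ≤ S.indH n ω := by
  unfold indH; exact Set.indicator_nonneg (fun _ _ => zero_le_one) ω

lemma indH_le_one (n : ℕ) (ω : Ω) : S.indH n ω ≤ 1 := by
  unfold indH
  exact Set.indicator_le' (fun _ _ => le_rfl) (fun _ _ => zero_le_one) ω

lemma abs_indH_mul_le (n : ℕ) (ω : Ω) (x : ℝ) : |S.indH n ω * x| ≤ |x| := by
  rw [abs_mul]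
  calc |S.indH n ω| * |x| ≤ 1 * |x| := by
        apply mul_le_mul_of_nonneg_right _ (abs_nonneg x)
        rw [abs_of_nonneg (S.indH_nonneg n ω)]; exact S.indH_le_one n ω
    _ = |x| := one_mul _


/-- events of the past are independent of the step at time k -/
lemma indep_past (k : ℕ) {W : Ω → ℝ} (hW : Measurable[S.mF k] W) (h : ℤ × ℤ → ℝ) :
    IndepFun W (fun ω => h (S.ξ k ω)) S.μ := by
  have h1 : IndepFun (fun ω (i : Finset.range k) => S.ξ i ω)
      (fun ω (i : ({k} : Finset ℕ)) => S.ξ i ω) S.μ :=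
    S.hindep.indepFun_finset (Finset.range k) {k}
      (by simp [Finset.disjoint_left]; omega) S.hmeas
  have h2 : Indep (S.mF k)
      (MeasurableSpace.comap (fun ω (i : ({k} : Finset ℕ)) => S.ξ i ω) MeasurableSpace.pi)
      S.μ := h1
  have h3 : Measurable[MeasurableSpace.comap
      (fun ω (i : ({k} : Finset ℕ)) => S.ξ i ω) MeasurableSpace.pi]
      (fun ω => h (S.ξ k ω)) := by
    have hx : Measurable[MeasurableSpace.comap
        (fun ω (i : ({k} : Finset ℕ)) => S.ξ i ω) MeasurableSpace.pi] (S.ξ k) := by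
      intro s hs
      exact ⟨(fun f : (({k} : Finset ℕ) → ℤ × ℤ) => f ⟨k, Finset.mem_singleton_self k⟩) ⁻¹' s,
        measurable_pi_apply _ hs, rfl⟩
    exact (measurable_of_countable h).comp hx
  exact indep_of_indep_of_le_left (indep_of_indep_of_le_right h2 h3.comap_le) hW.comap_le

lemma xi_union (k : ℕ) :
    {ω | S.ξ k ω ∈ SV} = {ω | S.ξ k ω = (-1, 0)} ∪ {ω | S.ξ k ω = (1, -1)} ∪
      {ω | S.ξ k ω = (0, 1)} := by
  ext ω; simp [SV, or_assoc]

lemma meas_xiset (k : ℕ) (v : ℤ × ℤ) : MeasurableSet {ω | S.ξ k ω = v} :=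
  (S.hmeas k) (measurableSet_singleton v)

lemma measure_xi_good (k : ℕ) : S.μ {ω | S.ξ k ω ∈ SV} = 1 := by
  rw [S.xi_union k]
  have hd1 : Disjoint {ω | S.ξ k ω = ((-1 : ℤ), (0 : ℤ))} {ω | S.ξ k ω = (1, -1)} := by
    rw [Set.disjoint_left]; intro ω h1 h2
    simp only [Set.mem_setOf_eq] at h1 h2; rw [h1] at h2; exact absurd h2 (by decide)
  have hd2 : Disjoint ({ω | S.ξ k ω = ((-1 : ℤ), (0 : ℤ))} ∪ {ω | S.ξ k ω = (1, -1)})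
      {ω | S.ξ k ω = (0, 1)} := by
    rw [Set.disjoint_left]; intro ω h1 h2
    simp only [Set.mem_union, Set.mem_setOf_eq] at h1 h2
    rcases h1 with h1 | h1 <;> rw [h1] at h2 <;> exact absurd h2 (by decide)
  rw [measure_union hd2 (S.meas_xiset k _), measure_union hd1 (S.meas_xiset k _)]
  rw [S.hunif k _ (by simp [SV]), S.hunif k _ (by simp [SV]), S.hunif k _ (by simp [SV])]
  rw [show (1 : ℝ≥0∞) / 3 + 1 / 3 + 1 / 3 = 1 by
    rw [ENNReal.div_add_div_same, ENNReal.div_add_div_same,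
      show (1 : ℝ≥0∞) + 1 + 1 = 3 from by norm_num]
    exact ENNReal.div_self (by norm_num) (by norm_num)]

lemma ae_step (k : ℕ) : ∀ᵐ ω ∂S.μ, S.ξ k ω ∈ SV := by
  have hP := S.prob
  have : S.μ {ω | S.ξ k ω ∈ SV}ᶜ = 0 := by
    rw [measure_compl (by
        rw [S.xi_union k]
        exact ((S.meas_xiset k _).union (S.meas_xiset k _)).union (S.meas_xiset k _))
      (measure_ne_top _ _),
      S.measure_xi_good k, measure_univ, tsub_self]
  exact (MeasureTheory.mem_ae_iff).2 this

lemma ae_good : ∀ᵐ ω ∂S.μ, ∀ k, S.ξ k ω ∈ SV :=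
  (MeasureTheory.ae_all_iff).2 S.ae_step

/-- expectation of a function of a single step -/
lemma integral_eval (k : ℕ) (h : ℤ × ℤ → ℝ) :
    ∫ ω, h (S.ξ k ω) ∂S.μ = (h (-1, 0) + h (1, -1) + h (0, 1)) / 3 := by
  have hP := S.prob
  set e1 := {ω | S.ξ k ω = ((-1 : ℤ), (0 : ℤ))}
  set e2 := {ω | S.ξ k ω = ((1 : ℤ), (-1 : ℤ))}
  set e3 := {ω | S.ξ k ω = ((0 : ℤ), (1 : ℤ))}
  have hcong : (fun ω => h (S.ξ k ω)) =ᵐ[S.μ]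
      (fun ω => e1.indicator (fun _ => h (-1, 0)) ω + e2.indicator (fun _ => h (1, -1)) ω
        + e3.indicator (fun _ => h (0, 1)) ω) := by
    filter_upwards [S.ae_step k] with ω hω
    simp only [SV, Set.mem_insert_iff, Set.mem_singleton_iff] at hω
    rcases hω with h1 | h1 | h1 <;>
    · have hm : S.ξ k ω = _ := h1
      simp only [e1, e2, e3, Set.indicator_apply, Set.mem_setOf_eq, hm]
      norm_num
  rw [integral_congr_ae hcong]
  have i1 : Integrable (fun ω => e1.indicator (fun _ => h (-1, 0)) ω) S.μ :=
    (integrable_const _).indicator (S.meas_xiset k _)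
  have i2 : Integrable (fun ω => e2.indicator (fun _ => h (1, -1)) ω) S.μ :=
    (integrable_const _).indicator (S.meas_xiset k _)
  have i3 : Integrable (fun ω => e3.indicator (fun _ => h (0, 1)) ω) S.μ :=
    (integrable_const _).indicator (S.meas_xiset k _)
  have i12 : Integrable (fun ω => e1.indicator (fun _ => h (-1, 0)) ω
      + e2.indicator (fun _ => h (1, -1)) ω) S.μ := i1.add i2
  rw [integral_add i12 i3, integral_add i1 i2,
    integral_indicator_const _ (S.meas_xiset k _), integral_indicator_const _ (S.meas_xiset k _),
    integral_indicator_const _ (S.meas_xiset k _)]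
  have hv : ∀ v ∈ SV, (S.μ {ω | S.ξ k ω = v}).toReal = 1 / 3 := by
    intro v hv; rw [S.hunif k v hv]; simp [ENNReal.toReal_div]
  rw [show S.μ.real {ω | S.ξ k ω = ((-1 : ℤ), (0 : ℤ))} = 1/3 from hv _ (by simp [SV]),
    show S.μ.real {ω | S.ξ k ω = ((1 : ℤ), (-1 : ℤ))} = 1/3 from hv _ (by simp [SV]),
    show S.μ.real {ω | S.ξ k ω = ((0 : ℤ), (1 : ℤ))} = 1/3 from hv _ (by simp [SV])]
  simp only [smul_eq_mul]; ring

/-- the key computation: expectation of past times function of present step -/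
lemma integral_mul_step (k : ℕ) {W : Ω → ℝ} (hW : Measurable[S.mF k] W) (h : ℤ × ℤ → ℝ) :
    ∫ ω, W ω * h (S.ξ k ω) ∂S.μ
      = (∫ ω, W ω ∂S.μ) * ((h (-1, 0) + h (1, -1) + h (0, 1)) / 3) := by
  have := (S.indep_past k hW h).integral_fun_mul_eq_mul_integral
    ((hW.mono (S.mF_le k) le_rfl).aestronglyMeasurable)
    (((measurable_of_countable h).comp (S.hmeas k)).aestronglyMeasurable)
  rw [this, S.integral_eval k h]

lemma integrable_bdd {f : Ω → ℝ} (hf : AEStronglyMeasurable f S.μ) {C : ℝ}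
    (h : ∀ᵐ ω ∂S.μ, |f ω| ≤ C) : Integrable f S.μ := by
  have hP := S.prob
  exact Integrable.mono' (integrable_const C) hf (by simpa [Real.norm_eq_abs] using h)


lemma sv_cases {v : ℤ × ℤ} (h : v ∈ SV) : v = (-1, 0) ∨ v = (1, -1) ∨ v = (0, 1) := by
  simpa [SV] using h

lemma sv_fst_le {v : ℤ × ℤ} (h : v ∈ SV) : -1 ≤ v.1 ∧ v.1 ≤ 1 := by
  rcases sv_cases h with rfl | rfl | rfl <;> constructor <;> norm_num

lemma sv_snd_le {v : ℤ × ℤ} (h : v ∈ SV) : -1 ≤ v.2 ∧ v.2 ≤ 1 := by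
  rcases sv_cases h with rfl | rfl | rfl <;> constructor <;> norm_num

lemma A_abs_le {ω : Ω} (hω : ∀ k, S.ξ k ω ∈ SV) (n : ℕ) : |S.A n ω| ≤ (S.a : ℤ) + n := by
  induction n with
  | zero => rw [S.hA0]; simp
  | succ n ih =>
    rw [S.hA n ω]
    have h1 := sv_fst_le (hω n)
    rw [abs_le] at ih ⊢
    push_cast
    omega

lemma B_abs_le {ω : Ω} (hω : ∀ k, S.ξ k ω ∈ SV) (n : ℕ) : |S.B n ω| ≤ (S.b : ℤ) + n := by
  induction n with
  | zero => rw [S.hB0]; simp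
  | succ n ih =>
    rw [S.hB n ω]
    have h1 := sv_snd_le (hω n)
    rw [abs_le] at ih ⊢
    push_cast
    omega

lemma A_telescope (ω : Ω) {m n : ℕ} (h : m ≤ n) :
    S.A n ω = S.A m ω + ∑ k ∈ Finset.Ico m n, (S.ξ k ω).1 := by
  induction n, h using Nat.le_induction with
  | base => simp
  | succ n hmn ih =>
    rw [S.hA n ω, ih, Finset.sum_Ico_succ_top hmn]
    ring

/-- positivity of the walk before hitting zero -/
lemma walk_pos {ω : Ω} (hω : ∀ k, S.ξ k ω ∈ SV) :
    ∀ k, (∀ j ≤ k, S.A j ω * S.B j ω ≠ 0) → 0 < S.A k ω ∧ 0 < S.B k ω := by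
  intro k
  induction k with
  | zero =>
    intro _
    rw [S.hA0, S.hB0]
    exact ⟨by exact_mod_cast S.ha, by exact_mod_cast S.hb⟩
  | succ k ih =>
    intro hne
    have hk := ih (fun j hj => hne j (hj.trans (Nat.le_succ k)))
    have h1 := sv_fst_le (hω k)
    have h2 := sv_snd_le (hω k)
    have hA1 : 0 ≤ S.A (k + 1) ω := by rw [S.hA k ω]; omega
    have hB1 : 0 ≤ S.B (k + 1) ω := by rw [S.hB k ω]; omega
    have hne1 := hne (k + 1) le_rfl
    rw [mul_ne_zero_iff] at hne1
    exact ⟨lt_of_le_of_ne hA1 (Ne.symm hne1.1), lt_of_le_of_ne hB1 (Ne.symm hne1.2)⟩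

/-- membership in H n characterizations -/
lemma indH_of_mem {n : ℕ} {ω : Ω} (h : ω ∈ S.H n) : S.indH n ω = 1 :=
  Set.indicator_of_mem h _

lemma indH_of_not_mem {n : ℕ} {ω : Ω} (h : ω ∉ S.H n) : S.indH n ω = 0 :=
  Set.indicator_of_notMem h _

lemma indH_sq (n : ℕ) (ω : Ω) : S.indH n ω * S.indH n ω = S.indH n ω := by
  by_cases h : ω ∈ S.H n
  · rw [S.indH_of_mem h]; ring
  · rw [S.indH_of_not_mem h]; ring

/-- main scalar sequences -/
noncomputable def gq (n : ℕ) : ℝ := (S.μ (S.H n)).toReal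

noncomputable def y (n : ℕ) : ℝ :=
  ∫ ω, S.indH n ω * ((S.A n ω : ℝ) * (S.B n ω : ℝ)) ∂S.μ

noncomputable def sq (n : ℕ) : ℝ := ∫ ω, S.indH n ω * (S.A n ω : ℝ) ^ 2 ∂S.μ

noncomputable def tq (n : ℕ) : ℝ := ∫ ω, S.indH n ω * (S.B n ω : ℝ) ^ 2 ∂S.μ

lemma castA_meas (n : ℕ) : Measurable (fun ω => (S.A n ω : ℝ)) :=
  (measurable_of_countable (fun z : ℤ => (z : ℝ))).comp (S.measA n)

lemma castB_meas (n : ℕ) : Measurable (fun ω => (S.B n ω : ℝ)) :=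
  (measurable_of_countable (fun z : ℤ => (z : ℝ))).comp (S.measB n)

lemma castA_meas_F {m k : ℕ} (h : m ≤ k) : Measurable[S.mF k] (fun ω => (S.A m ω : ℝ)) :=
  (measurable_of_countable (fun z : ℤ => (z : ℝ))).comp (S.measA_F h)

lemma castB_meas_F {m k : ℕ} (h : m ≤ k) : Measurable[S.mF k] (fun ω => (S.B m ω : ℝ)) :=
  (measurable_of_countable (fun z : ℤ => (z : ℝ))).comp (S.measB_F h)

lemma castA_abs_le {ω : Ω} (hω : ∀ k, S.ξ k ω ∈ SV) (n : ℕ) :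
    |(S.A n ω : ℝ)| ≤ (S.a : ℝ) + n := by
  have := S.A_abs_le hω n
  rw [← Int.cast_abs]
  exact_mod_cast this

lemma castB_abs_le {ω : Ω} (hω : ∀ k, S.ξ k ω ∈ SV) (n : ℕ) :
    |(S.B n ω : ℝ)| ≤ (S.b : ℝ) + n := by
  have := S.B_abs_le hω n
  rw [← Int.cast_abs]
  exact_mod_cast this

lemma int_y (n : ℕ) :
    Integrable (fun ω => S.indH n ω * ((S.A n ω : ℝ) * (S.B n ω : ℝ))) S.μ := by
  refine S.integrable_bdd ((S.meas_indH n).mul ((S.castA_meas n).mul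
    (S.castB_meas n))).aestronglyMeasurable (C := ((S.a : ℝ) + n) * ((S.b : ℝ) + n)) ?_
  filter_upwards [S.ae_good] with ω hω
  refine (S.abs_indH_mul_le n ω _).trans ?_
  rw [abs_mul]
  exact mul_le_mul (S.castA_abs_le hω n) (S.castB_abs_le hω n) (abs_nonneg _)
    (by positivity)

lemma int_sq (n : ℕ) : Integrable (fun ω => S.indH n ω * (S.A n ω : ℝ) ^ 2) S.μ := by
  refine S.integrable_bdd ((S.meas_indH n).mul ((S.castA_meas n).pow
    measurable_const)).aestronglyMeasurable (C := ((S.a : ℝ) + n) ^ 2) ?_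
  filter_upwards [S.ae_good] with ω hω
  refine (S.abs_indH_mul_le n ω _).trans ?_
  rw [abs_pow]
  exact pow_le_pow_left₀ (abs_nonneg _) (S.castA_abs_le hω n) 2

lemma int_tq (n : ℕ) : Integrable (fun ω => S.indH n ω * (S.B n ω : ℝ) ^ 2) S.μ := by
  refine S.integrable_bdd ((S.meas_indH n).mul ((S.castB_meas n).pow
    measurable_const)).aestronglyMeasurable (C := ((S.b : ℝ) + n) ^ 2) ?_
  filter_upwards [S.ae_good] with ω hω
  refine (S.abs_indH_mul_le n ω _).trans ?_
  rw [abs_pow]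
  exact pow_le_pow_left₀ (abs_nonneg _) (S.castB_abs_le hω n) 2

lemma int_indH (n : ℕ) : Integrable (S.indH n) S.μ := by
  have hP := S.prob
  exact (integrable_const (1 : ℝ)).indicator (S.measH n)

lemma integral_indH (n : ℕ) : ∫ ω, S.indH n ω ∂S.μ = S.gq n := by
  unfold indH gq
  rw [integral_indicator_const _ (S.measH n)]
  simp
  rfl


lemma y_succ (n : ℕ) : S.y (n + 1) = S.y n - S.gq n / 3 := by
  have meas_xi1 : Measurable (fun ω => ((S.ξ n ω).1 : ℝ)) :=
    (measurable_of_countable (fun v : ℤ × ℤ => (v.1 : ℝ))).comp (S.hmeas n)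
  have meas_xi2 : Measurable (fun ω => ((S.ξ n ω).2 : ℝ)) :=
    (measurable_of_countable (fun v : ℤ × ℤ => (v.2 : ℝ))).comp (S.hmeas n)
  have step1 : S.y (n + 1) = ∫ ω, S.indH n ω * ((S.A (n+1) ω : ℝ) * (S.B (n+1) ω : ℝ)) ∂S.μ := by
    unfold y
    refine integral_congr_ae ?_
    filter_upwards [S.ae_good] with ω hω
    by_cases h1 : ω ∈ S.H (n + 1)
    · rw [S.indH_of_mem h1, S.indH_of_mem (S.H_antitone (Nat.le_succ n) h1)]
    · rw [S.indH_of_not_mem h1]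
      by_cases h2 : ω ∈ S.H n
      · have hfst := sv_fst_le (hω n)
        have hsnd := sv_snd_le (hω n)
        have hposn := h2 n le_rfl
        have hA1 : 0 ≤ S.A (n + 1) ω := by rw [S.hA n ω]; omega
        have hB1 : 0 ≤ S.B (n + 1) ω := by rw [S.hB n ω]; omega
        have h3 : ¬(0 < S.A (n + 1) ω ∧ 0 < S.B (n + 1) ω) := by
          intro hc
          refine h1 (fun k hk => ?_)
          rcases Nat.eq_or_lt_of_le hk with rfl | hlt
          · exact hc
          · exact h2 k (Nat.lt_succ_iff.mp hlt)
        have h4 : (S.A (n+1) ω : ℝ) * (S.B (n+1) ω : ℝ) = 0 := by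
          have h5 : S.A (n + 1) ω = 0 ∨ S.B (n + 1) ω = 0 := by
            by_contra hcon
            push_neg at hcon
            exact h3 ⟨lt_of_le_of_ne hA1 (Ne.symm hcon.1), lt_of_le_of_ne hB1 (Ne.symm hcon.2)⟩
          rcases h5 with h5 | h5
          · rw [h5]; push_cast; ring
          · rw [h5]; push_cast; ring
        rw [S.indH_of_mem h2, h4]
        ring
      · rw [S.indH_of_not_mem h2]
  have exp : (fun ω => S.indH n ω * ((S.A (n+1) ω : ℝ) * (S.B (n+1) ω : ℝ)))
      = fun ω => S.indH n ω * ((S.A n ω : ℝ) * (S.B n ω : ℝ))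
        + ((S.indH n ω * (S.B n ω : ℝ)) * ((S.ξ n ω).1 : ℝ)
        + ((S.indH n ω * (S.A n ω : ℝ)) * ((S.ξ n ω).2 : ℝ)
        + S.indH n ω * (((S.ξ n ω).1 : ℝ) * ((S.ξ n ω).2 : ℝ)))) := by
    funext ω
    rw [S.hA n ω, S.hB n ω]
    push_cast
    ring
  have i1 : Integrable (fun ω => (S.indH n ω * (S.B n ω : ℝ)) * ((S.ξ n ω).1 : ℝ)) S.μ := by
    refine S.integrable_bdd (((S.meas_indH n).mul (S.castB_meas n)).mul
      meas_xi1).aestronglyMeasurable (C := ((S.b : ℝ) + n) * 1) ?_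
    filter_upwards [S.ae_good] with ω hω
    rw [abs_mul]
    refine mul_le_mul ((S.abs_indH_mul_le n ω _).trans (S.castB_abs_le hω n)) ?_
      (abs_nonneg _) (by positivity)
    have := sv_fst_le (hω n)
    rw [abs_le]
    constructor <;> [exact_mod_cast this.1; exact_mod_cast this.2]
  have i2 : Integrable (fun ω => (S.indH n ω * (S.A n ω : ℝ)) * ((S.ξ n ω).2 : ℝ)) S.μ := by
    refine S.integrable_bdd (((S.meas_indH n).mul (S.castA_meas n)).mul
      meas_xi2).aestronglyMeasurable (C := ((S.a : ℝ) + n) * 1) ?_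
    filter_upwards [S.ae_good] with ω hω
    rw [abs_mul]
    refine mul_le_mul ((S.abs_indH_mul_le n ω _).trans (S.castA_abs_le hω n)) ?_
      (abs_nonneg _) (by positivity)
    have := sv_snd_le (hω n)
    rw [abs_le]
    constructor <;> [exact_mod_cast this.1; exact_mod_cast this.2]
  have i3 : Integrable (fun ω => S.indH n ω * (((S.ξ n ω).1 : ℝ) * ((S.ξ n ω).2 : ℝ))) S.μ := by
    refine S.integrable_bdd ((S.meas_indH n).mul
      (meas_xi1.mul meas_xi2)).aestronglyMeasurable (C := 1 * 1) ?_
    filter_upwards [S.ae_good] with ω hω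
    refine (S.abs_indH_mul_le n ω _).trans ?_
    rw [abs_mul]
    have h1 := sv_fst_le (hω n)
    have h2 := sv_snd_le (hω n)
    refine mul_le_mul ?_ ?_ (abs_nonneg _) (by norm_num) <;> rw [abs_le] <;>
      constructor
    · exact_mod_cast h1.1
    · exact_mod_cast h1.2
    · exact_mod_cast h2.1
    · exact_mod_cast h2.2
  have e1 : ∫ ω, (S.indH n ω * (S.B n ω : ℝ)) * ((S.ξ n ω).1 : ℝ) ∂S.μ = 0 := by
    rw [S.integral_mul_step n (W := fun ω => S.indH n ω * (S.B n ω : ℝ)) ((S.meas_indH_F n).mul (S.castB_meas_F le_rfl))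
      (fun v => (v.1 : ℝ))]
    norm_num
  have e2 : ∫ ω, (S.indH n ω * (S.A n ω : ℝ)) * ((S.ξ n ω).2 : ℝ) ∂S.μ = 0 := by
    rw [S.integral_mul_step n (W := fun ω => S.indH n ω * (S.A n ω : ℝ)) ((S.meas_indH_F n).mul (S.castA_meas_F le_rfl))
      (fun v => (v.2 : ℝ))]
    norm_num
  have e3 : ∫ ω, S.indH n ω * (((S.ξ n ω).1 : ℝ) * ((S.ξ n ω).2 : ℝ)) ∂S.μ
      = S.gq n * (-(1/3)) := by
    rw [S.integral_mul_step n (S.meas_indH_F n) (fun v => ((v.1 : ℝ) * (v.2 : ℝ)))]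
    rw [S.integral_indH n]
    norm_num
  have isum23 : Integrable (fun ω => (S.indH n ω * (S.A n ω : ℝ)) * ((S.ξ n ω).2 : ℝ)
      + S.indH n ω * (((S.ξ n ω).1 : ℝ) * ((S.ξ n ω).2 : ℝ))) S.μ := i2.add i3
  have isum123 : Integrable (fun ω => (S.indH n ω * (S.B n ω : ℝ)) * ((S.ξ n ω).1 : ℝ)
      + ((S.indH n ω * (S.A n ω : ℝ)) * ((S.ξ n ω).2 : ℝ)
      + S.indH n ω * (((S.ξ n ω).1 : ℝ) * ((S.ξ n ω).2 : ℝ)))) S.μ := i1.add isum23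
  rw [step1, exp, integral_add (S.int_y n) isum123, integral_add i1 isum23,
    integral_add i2 i3, e1, e2, e3]
  unfold y
  ring

lemma gq_nonneg (n : ℕ) : 0 ≤ S.gq n := ENNReal.toReal_nonneg

lemma gq_le_y (n : ℕ) : S.gq n ≤ S.y n := by
  rw [← S.integral_indH n]
  refine integral_mono (S.int_indH n) (S.int_y n) (fun ω => ?_)
  by_cases h : ω ∈ S.H n
  · rw [S.indH_of_mem h]
    have h1 := h n le_rfl
    have h2 : (1 : ℤ) ≤ S.A n ω * S.B n ω := by nlinarith [h1.1, h1.2]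
    have h3 : (1 : ℝ) ≤ (S.A n ω : ℝ) * (S.B n ω : ℝ) := by exact_mod_cast h2
    linarith
  · rw [S.indH_of_not_mem h]
    simp

lemma y_zero : S.y 0 = (S.a : ℝ) * S.b := by
  have hP := S.prob
  have hH : ∀ ω : Ω, ω ∈ S.H 0 := by
    intro ω k hk
    interval_cases k
    rw [S.hA0, S.hB0]
    exact ⟨by exact_mod_cast S.ha, by exact_mod_cast S.hb⟩
  have hconst : (fun ω => S.indH 0 ω * ((S.A 0 ω : ℝ) * (S.B 0 ω : ℝ)))
      = fun _ => (S.a : ℝ) * S.b := by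
    funext ω
    rw [S.hA0, S.hB0, S.indH_of_mem (hH ω)]
    push_cast
    ring
  unfold y
  rw [hconst, integral_const]
  simp

lemma y_eq (n : ℕ) : S.y n = (S.a : ℝ) * S.b - (∑ k ∈ Finset.range n, S.gq k) / 3 := by
  induction n with
  | zero => simp [S.y_zero]
  | succ n ih =>
    rw [S.y_succ n, ih, Finset.sum_range_succ]
    ring

lemma sum_gq_le (n : ℕ) : ∑ k ∈ Finset.range n, S.gq k ≤ 3 * ((S.a : ℝ) * S.b) := by
  have h1 := (S.gq_nonneg n).trans (S.gq_le_y n)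
  have h2 := S.y_eq n
  linarith

lemma sq_nonneg' (n : ℕ) : 0 ≤ S.sq n :=
  integral_nonneg (fun ω => mul_nonneg (S.indH_nonneg n ω) (sq_nonneg _))

lemma tq_nonneg' (n : ℕ) : 0 ≤ S.tq n :=
  integral_nonneg (fun ω => mul_nonneg (S.indH_nonneg n ω) (sq_nonneg _))

lemma y_le_avg (n : ℕ) : S.y n ≤ (S.sq n + S.tq n) / 2 := by
  have hint : Integrable (fun ω => (S.indH n ω * (S.A n ω : ℝ) ^ 2
      + S.indH n ω * (S.B n ω : ℝ) ^ 2) / 2) S.μ := ((S.int_sq n).add (S.int_tq n)).div_const 2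
  have h := integral_mono (S.int_y n) hint (fun ω => ?_)
  · unfold y sq tq
    rw [integral_div, integral_add (S.int_sq n) (S.int_tq n)] at h
    exact h
  · by_cases hm : ω ∈ S.H n
    · rw [S.indH_of_mem hm]
      nlinarith [sq_nonneg ((S.A n ω : ℝ) - (S.B n ω : ℝ))]
    · rw [S.indH_of_not_mem hm]
      simp


/-- stopped increments -/
noncomputable def fX (k : ℕ) (ω : Ω) : ℝ := S.indH k ω * ((S.ξ k ω).1 : ℝ)

noncomputable def fY (k : ℕ) (ω : Ω) : ℝ := S.indH k ω * ((S.ξ k ω).2 : ℝ)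

lemma meas_fX (k : ℕ) : Measurable (S.fX k) :=
  (S.meas_indH k).mul ((measurable_of_countable (fun v : ℤ × ℤ => (v.1 : ℝ))).comp (S.hmeas k))

lemma meas_fY (k : ℕ) : Measurable (S.fY k) :=
  (S.meas_indH k).mul ((measurable_of_countable (fun v : ℤ × ℤ => (v.2 : ℝ))).comp (S.hmeas k))

lemma fX_abs_le {ω : Ω} (hω : ∀ k, S.ξ k ω ∈ SV) (k : ℕ) : |S.fX k ω| ≤ 1 := by
  refine (S.abs_indH_mul_le k ω _).trans ?_
  have := sv_fst_le (hω k)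
  rw [abs_le]
  constructor <;> [exact_mod_cast this.1; exact_mod_cast this.2]

lemma fY_abs_le {ω : Ω} (hω : ∀ k, S.ξ k ω ∈ SV) (k : ℕ) : |S.fY k ω| ≤ 1 := by
  refine (S.abs_indH_mul_le k ω _).trans ?_
  have := sv_snd_le (hω k)
  rw [abs_le]
  constructor <;> [exact_mod_cast this.1; exact_mod_cast this.2]

lemma fX_meas_F {j k : ℕ} (h : j < k) : Measurable[S.mF k] (S.fX j) :=
  ((S.meas_indH_F j).mono (S.mF_mono h.le) le_rfl).mul
    ((measurable_of_countable (fun v : ℤ × ℤ => (v.1 : ℝ))).comp (S.meas_xi_F h))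

lemma fY_meas_F {j k : ℕ} (h : j < k) : Measurable[S.mF k] (S.fY j) :=
  ((S.meas_indH_F j).mono (S.mF_mono h.le) le_rfl).mul
    ((measurable_of_countable (fun v : ℤ × ℤ => (v.2 : ℝ))).comp (S.meas_xi_F h))

lemma int_fX_mul (j k : ℕ) : Integrable (fun ω => S.fX j ω * S.fX k ω) S.μ := by
  refine S.integrable_bdd ((S.meas_fX j).mul (S.meas_fX k)).aestronglyMeasurable
    (C := 1 * 1) ?_
  filter_upwards [S.ae_good] with ω hω
  rw [abs_mul]
  exact mul_le_mul (S.fX_abs_le hω j) (S.fX_abs_le hω k) (abs_nonneg _) (by norm_num)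

lemma int_fY_mul (j k : ℕ) : Integrable (fun ω => S.fY j ω * S.fY k ω) S.μ := by
  refine S.integrable_bdd ((S.meas_fY j).mul (S.meas_fY k)).aestronglyMeasurable
    (C := 1 * 1) ?_
  filter_upwards [S.ae_good] with ω hω
  rw [abs_mul]
  exact mul_le_mul (S.fY_abs_le hω j) (S.fY_abs_le hω k) (abs_nonneg _) (by norm_num)

lemma cross_X {j k : ℕ} (hjk : j < k) : ∫ ω, S.fX j ω * S.fX k ω ∂S.μ = 0 := by
  have hre : (fun ω => S.fX j ω * S.fX k ω)
      = fun ω => (S.fX j ω * S.indH k ω) * ((S.ξ k ω).1 : ℝ) := by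
    funext ω; unfold fX; ring
  rw [hre, S.integral_mul_step k (W := fun ω => S.fX j ω * S.indH k ω) ((S.fX_meas_F hjk).mul (S.meas_indH_F k))
    (fun v => (v.1 : ℝ))]
  norm_num

lemma cross_Y {j k : ℕ} (hjk : j < k) : ∫ ω, S.fY j ω * S.fY k ω ∂S.μ = 0 := by
  have hre : (fun ω => S.fY j ω * S.fY k ω)
      = fun ω => (S.fY j ω * S.indH k ω) * ((S.ξ k ω).2 : ℝ) := by
    funext ω; unfold fY; ring
  rw [hre, S.integral_mul_step k (W := fun ω => S.fY j ω * S.indH k ω) ((S.fY_meas_F hjk).mul (S.meas_indH_F k))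
    (fun v => (v.2 : ℝ))]
  norm_num

lemma diag_X (k : ℕ) : ∫ ω, S.fX k ω * S.fX k ω ∂S.μ = 2 / 3 * S.gq k := by
  have hre : (fun ω => S.fX k ω * S.fX k ω)
      = fun ω => S.indH k ω * (((S.ξ k ω).1 : ℝ) ^ 2) := by
    funext ω
    unfold fX
    rw [mul_mul_mul_comm, S.indH_sq]
    ring
  rw [hre, S.integral_mul_step k (S.meas_indH_F k) (fun v => ((v.1 : ℝ) ^ 2)),
    S.integral_indH k]
  norm_num
  ring

lemma diag_Y (k : ℕ) : ∫ ω, S.fY k ω * S.fY k ω ∂S.μ = 2 / 3 * S.gq k := by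
  have hre : (fun ω => S.fY k ω * S.fY k ω)
      = fun ω => S.indH k ω * (((S.ξ k ω).2 : ℝ) ^ 2) := by
    funext ω
    unfold fY
    rw [mul_mul_mul_comm, S.indH_sq]
    ring
  rw [hre, S.integral_mul_step k (S.meas_indH_F k) (fun v => ((v.2 : ℝ) ^ 2)),
    S.integral_indH k]
  norm_num
  ring

lemma integral_D_sq (m n : ℕ) :
    ∫ ω, (∑ k ∈ Finset.Ico m n, S.fX k ω) ^ 2 ∂S.μ
      = ∑ k ∈ Finset.Ico m n, 2 / 3 * S.gq k := by
  have hexp : (fun ω => (∑ k ∈ Finset.Ico m n, S.fX k ω) ^ 2)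
      = fun ω => ∑ j ∈ Finset.Ico m n, ∑ k ∈ Finset.Ico m n, S.fX j ω * S.fX k ω := by
    funext ω
    rw [pow_two, Finset.sum_mul_sum]
  rw [hexp, integral_finset_sum _ (fun j _ => integrable_finset_sum _
    (fun k _ => S.int_fX_mul j k))]
  have hval : ∀ j ∈ Finset.Ico m n,
      (∫ ω, ∑ k ∈ Finset.Ico m n, S.fX j ω * S.fX k ω ∂S.μ) = 2 / 3 * S.gq j := by
    intro j hj
    rw [integral_finset_sum _ (fun k _ => S.int_fX_mul j k)]
    rw [Finset.sum_eq_single j]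
    · exact S.diag_X j
    · intro k _ hkj
      rcases lt_or_gt_of_ne hkj with hlt | hgt
      · have hre : (fun ω => S.fX j ω * S.fX k ω) = fun ω => S.fX k ω * S.fX j ω := by
          funext ω; ring
        rw [hre]
        exact S.cross_X hlt
      · exact S.cross_X hgt
    · intro hne
      exact absurd hj hne
  rw [Finset.sum_congr rfl hval]

lemma integral_DY_sq (m n : ℕ) :
    ∫ ω, (∑ k ∈ Finset.Ico m n, S.fY k ω) ^ 2 ∂S.μ
      = ∑ k ∈ Finset.Ico m n, 2 / 3 * S.gq k := by
  have hexp : (fun ω => (∑ k ∈ Finset.Ico m n, S.fY k ω) ^ 2)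
      = fun ω => ∑ j ∈ Finset.Ico m n, ∑ k ∈ Finset.Ico m n, S.fY j ω * S.fY k ω := by
    funext ω
    rw [pow_two, Finset.sum_mul_sum]
  rw [hexp, integral_finset_sum _ (fun j _ => integrable_finset_sum _
    (fun k _ => S.int_fY_mul j k))]
  have hval : ∀ j ∈ Finset.Ico m n,
      (∫ ω, ∑ k ∈ Finset.Ico m n, S.fY j ω * S.fY k ω ∂S.μ) = 2 / 3 * S.gq j := by
    intro j hj
    rw [integral_finset_sum _ (fun k _ => S.int_fY_mul j k)]
    rw [Finset.sum_eq_single j]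
    · exact S.diag_Y j
    · intro k _ hkj
      rcases lt_or_gt_of_ne hkj with hlt | hgt
      · have hre : (fun ω => S.fY j ω * S.fY k ω) = fun ω => S.fY k ω * S.fY j ω := by
          funext ω; ring
        rw [hre]
        exact S.cross_Y hlt
      · exact S.cross_Y hgt
    · intro hne
      exact absurd hj hne
  rw [Finset.sum_congr rfl hval]


lemma int_indH_castA_sq (m n : ℕ) :
    Integrable (fun ω => S.indH n ω * (S.A m ω : ℝ) ^ 2) S.μ := by
  refine S.integrable_bdd ((S.meas_indH n).mul ((S.castA_meas m).pow
    measurable_const)).aestronglyMeasurable (C := ((S.a : ℝ) + m) ^ 2) ?_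
  filter_upwards [S.ae_good] with ω hω
  refine (S.abs_indH_mul_le n ω _).trans ?_
  rw [abs_pow]
  exact pow_le_pow_left₀ (abs_nonneg _) (S.castA_abs_le hω m) 2

lemma int_indH_castB_sq (m n : ℕ) :
    Integrable (fun ω => S.indH n ω * (S.B m ω : ℝ) ^ 2) S.μ := by
  refine S.integrable_bdd ((S.meas_indH n).mul ((S.castB_meas m).pow
    measurable_const)).aestronglyMeasurable (C := ((S.b : ℝ) + m) ^ 2) ?_
  filter_upwards [S.ae_good] with ω hω
  refine (S.abs_indH_mul_le n ω _).trans ?_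
  rw [abs_pow]
  exact pow_le_pow_left₀ (abs_nonneg _) (S.castB_abs_le hω m) 2

lemma int_D_sq (m n : ℕ) :
    Integrable (fun ω => (∑ k ∈ Finset.Ico m n, S.fX k ω) ^ 2) S.μ := by
  refine S.integrable_bdd (((Finset.Ico m n).measurable_sum
    (fun k _ => S.meas_fX k)).pow measurable_const).aestronglyMeasurable
    (C := ((Finset.Ico m n).card : ℝ) ^ 2) ?_
  filter_upwards [S.ae_good] with ω hω
  rw [abs_pow]
  refine pow_le_pow_left₀ (abs_nonneg _) ?_ 2
  refine (Finset.abs_sum_le_sum_abs _ _).trans ?_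
  calc ∑ k ∈ Finset.Ico m n, |S.fX k ω| ≤ ∑ _k ∈ Finset.Ico m n, (1 : ℝ) :=
        Finset.sum_le_sum (fun k _ => S.fX_abs_le hω k)
    _ = ((Finset.Ico m n).card : ℝ) := by simp

lemma int_DY_sq (m n : ℕ) :
    Integrable (fun ω => (∑ k ∈ Finset.Ico m n, S.fY k ω) ^ 2) S.μ := by
  refine S.integrable_bdd (((Finset.Ico m n).measurable_sum
    (fun k _ => S.meas_fY k)).pow measurable_const).aestronglyMeasurable
    (C := ((Finset.Ico m n).card : ℝ) ^ 2) ?_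
  filter_upwards [S.ae_good] with ω hω
  rw [abs_pow]
  refine pow_le_pow_left₀ (abs_nonneg _) ?_ 2
  refine (Finset.abs_sum_le_sum_abs _ _).trans ?_
  calc ∑ k ∈ Finset.Ico m n, |S.fY k ω| ≤ ∑ _k ∈ Finset.Ico m n, (1 : ℝ) :=
        Finset.sum_le_sum (fun k _ => S.fY_abs_le hω k)
    _ = ((Finset.Ico m n).card : ℝ) := by simp

lemma integral_indH_castA_sq_le (m n : ℕ) :
    ∫ ω, S.indH n ω * (S.A m ω : ℝ) ^ 2 ∂S.μ ≤ ((S.a : ℝ) + m) ^ 2 * S.gq n := by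
  have hmono : (fun ω => S.indH n ω * (S.A m ω : ℝ) ^ 2)
      ≤ᵐ[S.μ] fun ω => S.indH n ω * ((S.a : ℝ) + m) ^ 2 := by
    filter_upwards [S.ae_good] with ω hω
    have h1 := S.castA_abs_le hω m
    have h2 : (S.A m ω : ℝ) ^ 2 ≤ ((S.a : ℝ) + m) ^ 2 := by
      rw [abs_le] at h1
      nlinarith [h1.1, h1.2]
    exact mul_le_mul_of_nonneg_left h2 (S.indH_nonneg n ω)
  have := integral_mono_ae (S.int_indH_castA_sq m n) ((S.int_indH n).mul_const _) hmono
  calc ∫ ω, S.indH n ω * (S.A m ω : ℝ) ^ 2 ∂S.μ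
      ≤ ∫ ω, S.indH n ω * ((S.a : ℝ) + m) ^ 2 ∂S.μ := this
    _ = ((S.a : ℝ) + m) ^ 2 * S.gq n := by
        rw [integral_mul_const, S.integral_indH n]; ring

lemma integral_indH_castB_sq_le (m n : ℕ) :
    ∫ ω, S.indH n ω * (S.B m ω : ℝ) ^ 2 ∂S.μ ≤ ((S.b : ℝ) + m) ^ 2 * S.gq n := by
  have hmono : (fun ω => S.indH n ω * (S.B m ω : ℝ) ^ 2)
      ≤ᵐ[S.μ] fun ω => S.indH n ω * ((S.b : ℝ) + m) ^ 2 := by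
    filter_upwards [S.ae_good] with ω hω
    have h1 := S.castB_abs_le hω m
    have h2 : (S.B m ω : ℝ) ^ 2 ≤ ((S.b : ℝ) + m) ^ 2 := by
      rw [abs_le] at h1
      nlinarith [h1.1, h1.2]
    exact mul_le_mul_of_nonneg_left h2 (S.indH_nonneg n ω)
  have := integral_mono_ae (S.int_indH_castB_sq m n) ((S.int_indH n).mul_const _) hmono
  calc ∫ ω, S.indH n ω * (S.B m ω : ℝ) ^ 2 ∂S.μ
      ≤ ∫ ω, S.indH n ω * ((S.b : ℝ) + m) ^ 2 ∂S.μ := this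
    _ = ((S.b : ℝ) + m) ^ 2 * S.gq n := by
        rw [integral_mul_const, S.integral_indH n]; ring

lemma sq_tail {m n : ℕ} (h : m ≤ n) :
    S.sq n ≤ 2 * ((S.a : ℝ) + m) ^ 2 * S.gq n
      + 2 * ∑ k ∈ Finset.Ico m n, 2 / 3 * S.gq k := by
  have hpt : ∀ ω, S.indH n ω * (S.A n ω : ℝ) ^ 2
      ≤ 2 * (S.indH n ω * (S.A m ω : ℝ) ^ 2) + 2 * (∑ k ∈ Finset.Ico m n, S.fX k ω) ^ 2 := by
    intro ω
    by_cases hm : ω ∈ S.H n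
    · have hsum : (∑ k ∈ Finset.Ico m n, S.fX k ω) = ∑ k ∈ Finset.Ico m n, ((S.ξ k ω).1 : ℝ) := by
        refine Finset.sum_congr rfl (fun k hk => ?_)
        have hk2 : k ≤ n := (Finset.mem_Ico.mp hk).2.le
        rw [show S.fX k ω = S.indH k ω * ((S.ξ k ω).1 : ℝ) from rfl,
          S.indH_of_mem (S.H_antitone hk2 hm), one_mul]
      have htel : (S.A n ω : ℝ) = (S.A m ω : ℝ) + ∑ k ∈ Finset.Ico m n, ((S.ξ k ω).1 : ℝ) := by
        have := S.A_telescope ω h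
        rw [this]
        push_cast
        ring
      rw [S.indH_of_mem hm, hsum, one_mul, one_mul, htel]
      nlinarith [sq_nonneg ((S.A m ω : ℝ) - ∑ k ∈ Finset.Ico m n, ((S.ξ k ω).1 : ℝ))]
    · rw [S.indH_of_not_mem hm]
      have := sq_nonneg (∑ k ∈ Finset.Ico m n, S.fX k ω)
      nlinarith
  have hint : Integrable (fun ω => 2 * (S.indH n ω * (S.A m ω : ℝ) ^ 2)
      + 2 * (∑ k ∈ Finset.Ico m n, S.fX k ω) ^ 2) S.μ :=
    ((S.int_indH_castA_sq m n).const_mul 2).add ((S.int_D_sq m n).const_mul 2)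
  have hmono := integral_mono (S.int_sq n) hint hpt
  rw [integral_add ((S.int_indH_castA_sq m n).const_mul 2) ((S.int_D_sq m n).const_mul 2),
    integral_const_mul, integral_const_mul, S.integral_D_sq m n] at hmono
  have h2 := S.integral_indH_castA_sq_le m n
  unfold sq
  linarith

lemma tq_tail {m n : ℕ} (h : m ≤ n) :
    S.tq n ≤ 2 * ((S.b : ℝ) + m) ^ 2 * S.gq n
      + 2 * ∑ k ∈ Finset.Ico m n, 2 / 3 * S.gq k := by
  have hpt : ∀ ω, S.indH n ω * (S.B n ω : ℝ) ^ 2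
      ≤ 2 * (S.indH n ω * (S.B m ω : ℝ) ^ 2) + 2 * (∑ k ∈ Finset.Ico m n, S.fY k ω) ^ 2 := by
    intro ω
    by_cases hm : ω ∈ S.H n
    · have hsum : (∑ k ∈ Finset.Ico m n, S.fY k ω) = ∑ k ∈ Finset.Ico m n, ((S.ξ k ω).2 : ℝ) := by
        refine Finset.sum_congr rfl (fun k hk => ?_)
        have hk2 : k ≤ n := (Finset.mem_Ico.mp hk).2.le
        rw [show S.fY k ω = S.indH k ω * ((S.ξ k ω).2 : ℝ) from rfl,
          S.indH_of_mem (S.H_antitone hk2 hm), one_mul]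
      have htel : (S.B n ω : ℝ) = (S.B m ω : ℝ) + ∑ k ∈ Finset.Ico m n, ((S.ξ k ω).2 : ℝ) := by
        have hBtel : S.B n ω = S.B m ω + ∑ k ∈ Finset.Ico m n, (S.ξ k ω).2 := by
          clear hsum hm
          induction n, h using Nat.le_induction with
          | base => simp
          | succ n hmn ih =>
            rw [S.hB n ω, ih, Finset.sum_Ico_succ_top hmn]
            ring
        rw [hBtel]
        push_cast
        ring
      rw [S.indH_of_mem hm, hsum, one_mul, one_mul, htel]
      nlinarith [sq_nonneg ((S.B m ω : ℝ) - ∑ k ∈ Finset.Ico m n, ((S.ξ k ω).2 : ℝ))]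
    · rw [S.indH_of_not_mem hm]
      have := sq_nonneg (∑ k ∈ Finset.Ico m n, S.fY k ω)
      nlinarith
  have hint : Integrable (fun ω => 2 * (S.indH n ω * (S.B m ω : ℝ) ^ 2)
      + 2 * (∑ k ∈ Finset.Ico m n, S.fY k ω) ^ 2) S.μ :=
    ((S.int_indH_castB_sq m n).const_mul 2).add ((S.int_DY_sq m n).const_mul 2)
  have hmono := integral_mono (S.int_tq n) hint hpt
  rw [integral_add ((S.int_indH_castB_sq m n).const_mul 2) ((S.int_DY_sq m n).const_mul 2),
    integral_const_mul, integral_const_mul, S.integral_DY_sq m n] at hmono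
  have h2 := S.integral_indH_castB_sq_le m n
  unfold tq
  linarith


noncomputable def P (n : ℕ) : ℝ := ∑ k ∈ Finset.range n, S.gq k

lemma P_mono : Monotone S.P := by
  intro i j hij
  exact Finset.sum_le_sum_of_subset_of_nonneg (Finset.range_subset_range.mpr hij)
    (fun k _ _ => S.gq_nonneg k)

lemma P_bdd : BddAbove (Set.range S.P) := by
  refine ⟨3 * ((S.a : ℝ) * S.b), ?_⟩
  rintro x ⟨n, rfl⟩
  exact S.sum_gq_le n

noncomputable def Lim : ℝ := ⨆ n, S.P n

lemma P_tendsto : Tendsto S.P atTop (nhds S.Lim) :=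
  tendsto_atTop_ciSup S.P_mono S.P_bdd

lemma P_le_Lim (n : ℕ) : S.P n ≤ S.Lim := le_ciSup S.P_bdd n

lemma gq_tendsto : Tendsto S.gq atTop (nhds 0) := by
  have h1 : Tendsto (fun n => S.P (n + 1) - S.P n) atTop (nhds (S.Lim - S.Lim)) :=
    (S.P_tendsto.comp (tendsto_add_atTop_nat 1)).sub S.P_tendsto
  rw [sub_self] at h1
  refine h1.congr (fun n => ?_)
  show S.P (n + 1) - S.P n = S.gq n
  unfold P
  rw [Finset.sum_range_succ]
  ring

lemma sum_Ico_gq {m n : ℕ} (h : m ≤ n) :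
    ∑ k ∈ Finset.Ico m n, 2 / 3 * S.gq k = 2 / 3 * (S.P n - S.P m) := by
  rw [← Finset.mul_sum]
  unfold P
  rw [Finset.sum_Ico_eq_sub _ h]

lemma sq_tendsto : Tendsto S.sq atTop (nhds 0) := by
  rw [Metric.tendsto_atTop]
  intro ε hε
  obtain ⟨m, hm⟩ : ∃ m, S.Lim - S.P m < 3 / 8 * ε := by
    have := Metric.tendsto_atTop.mp S.P_tendsto (3 / 8 * ε) (by linarith)
    obtain ⟨N, hN⟩ := this
    refine ⟨N, ?_⟩
    have := hN N le_rfl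
    rw [Real.dist_eq, abs_lt] at this
    linarith [this.1]
  obtain ⟨N1, hN1⟩ : ∃ N1, ∀ n ≥ N1, S.gq n < ε / (4 * (((S.a : ℝ) + m) ^ 2 + 1)) := by
    have hpos : 0 < ε / (4 * (((S.a : ℝ) + m) ^ 2 + 1)) := by positivity
    have := Metric.tendsto_atTop.mp S.gq_tendsto _ hpos
    obtain ⟨N, hN⟩ := this
    refine ⟨N, fun n hn => ?_⟩
    have := hN n hn
    rw [Real.dist_eq, sub_zero, abs_lt] at this
    exact this.2
  refine ⟨max m N1, fun n hn => ?_⟩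
  have hmn : m ≤ n := le_trans (le_max_left _ _) hn
  have hN1n : N1 ≤ n := le_trans (le_max_right _ _) hn
  have h1 := S.sq_tail hmn
  rw [S.sum_Ico_gq hmn] at h1
  have h2 : S.P n ≤ S.Lim := S.P_le_Lim n
  have h3 := hN1 n hN1n
  have h4 : 2 * ((S.a : ℝ) + m) ^ 2 * S.gq n < ε / 2 := by
    have hgnn := S.gq_nonneg n
    have hq : (0:ℝ) < ((S.a : ℝ) + m) ^ 2 + 1 := by positivity
    calc 2 * ((S.a : ℝ) + m) ^ 2 * S.gq n
        ≤ 2 * (((S.a : ℝ) + m) ^ 2 + 1) * S.gq n := by nlinarith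
      _ < 2 * (((S.a : ℝ) + m) ^ 2 + 1) * (ε / (4 * (((S.a : ℝ) + m) ^ 2 + 1))) := by
          apply mul_lt_mul_of_pos_left h3
          positivity
      _ = ε / 2 := by field_simp; ring
  have h5 : 2 * (2 / 3 * (S.P n - S.P m)) < ε / 2 := by
    have := S.P_le_Lim n
    nlinarith
  rw [Real.dist_eq, sub_zero, abs_of_nonneg (S.sq_nonneg' n)]
  linarith

lemma tq_tendsto : Tendsto S.tq atTop (nhds 0) := by
  rw [Metric.tendsto_atTop]
  intro ε hε
  obtain ⟨m, hm⟩ : ∃ m, S.Lim - S.P m < 3 / 8 * ε := by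
    have := Metric.tendsto_atTop.mp S.P_tendsto (3 / 8 * ε) (by linarith)
    obtain ⟨N, hN⟩ := this
    refine ⟨N, ?_⟩
    have := hN N le_rfl
    rw [Real.dist_eq, abs_lt] at this
    linarith [this.1]
  obtain ⟨N1, hN1⟩ : ∃ N1, ∀ n ≥ N1, S.gq n < ε / (4 * (((S.b : ℝ) + m) ^ 2 + 1)) := by
    have hpos : 0 < ε / (4 * (((S.b : ℝ) + m) ^ 2 + 1)) := by positivity
    have := Metric.tendsto_atTop.mp S.gq_tendsto _ hpos
    obtain ⟨N, hN⟩ := this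
    refine ⟨N, fun n hn => ?_⟩
    have := hN n hn
    rw [Real.dist_eq, sub_zero, abs_lt] at this
    exact this.2
  refine ⟨max m N1, fun n hn => ?_⟩
  have hmn : m ≤ n := le_trans (le_max_left _ _) hn
  have hN1n : N1 ≤ n := le_trans (le_max_right _ _) hn
  have h1 := S.tq_tail hmn
  rw [S.sum_Ico_gq hmn] at h1
  have h2 : S.P n ≤ S.Lim := S.P_le_Lim n
  have h3 := hN1 n hN1n
  have h4 : 2 * ((S.b : ℝ) + m) ^ 2 * S.gq n < ε / 2 := by
    have hgnn := S.gq_nonneg n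
    have hq : (0:ℝ) < ((S.b : ℝ) + m) ^ 2 + 1 := by positivity
    calc 2 * ((S.b : ℝ) + m) ^ 2 * S.gq n
        ≤ 2 * (((S.b : ℝ) + m) ^ 2 + 1) * S.gq n := by nlinarith
      _ < 2 * (((S.b : ℝ) + m) ^ 2 + 1) * (ε / (4 * (((S.b : ℝ) + m) ^ 2 + 1))) := by
          apply mul_lt_mul_of_pos_left h3
          positivity
      _ = ε / 2 := by field_simp; ring
  have h5 : 2 * (2 / 3 * (S.P n - S.P m)) < ε / 2 := by
    have := S.P_le_Lim n
    nlinarith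
  rw [Real.dist_eq, sub_zero, abs_of_nonneg (S.tq_nonneg' n)]
  linarith

lemma y_tendsto : Tendsto S.y atTop (nhds 0) := by
  have hupper : Tendsto (fun n => (S.sq n + S.tq n) / 2) atTop (nhds 0) := by
    have := (S.sq_tendsto.add S.tq_tendsto).div_const 2
    simpa using this
  refine squeeze_zero (fun n => (S.gq_nonneg n).trans (S.gq_le_y n)) (fun n => S.y_le_avg n)
    hupper


lemma Z_null : S.μ {ω | (∀ k, S.ξ k ω ∈ SV) ∧ ∀ k, S.A k ω * S.B k ω ≠ 0} = 0 := by
  have hP := S.prob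
  set Z := {ω | (∀ k, S.ξ k ω ∈ SV) ∧ ∀ k, S.A k ω * S.B k ω ≠ 0} with hZdef
  have hsub : ∀ n, Z ⊆ S.H n := by
    intro n ω hω k _
    exact S.walk_pos hω.1 k (fun j _ => hω.2 j)
  have h1 : ∀ n, (S.μ Z).toReal ≤ S.gq n := fun n =>
    ENNReal.toReal_mono (measure_ne_top _ _) (measure_mono (hsub n))
  have h2 : (S.μ Z).toReal ≤ 0 := ge_of_tendsto S.gq_tendsto (Filter.Eventually.of_forall h1)
  have h3 : (S.μ Z).toReal = 0 := le_antisymm h2 ENNReal.toReal_nonneg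
  rcases (ENNReal.toReal_eq_zero_iff _).mp h3 with h4 | h4
  · exact h4
  · exact absurd h4 (measure_ne_top _ _)

end Setup
end Stmt9

open Stmt9 in
/-- With `T_n = min (T, n)`, one has `E[A(T_n) * B(T_n)] → 0` as `n → ∞`. -/
theorem stmt_9
{Ω : Type*} [MeasurableSpace Ω] (μ : Measure Ω) [IsProbabilityMeasure μ]
    (a b : ℕ) (ha : 0 < a) (hb : 0 < b)
    (ξ : ℕ → Ω → ℤ × ℤ)
    (hmeas : ∀ n, Measurable (ξ n))
    (hindep : iIndepFun ξ μ)
    (hunif : ∀ n, ∀ v ∈ ({(-1, 0), (1, -1), (0, 1)} : Set (ℤ × ℤ)),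
      μ {ω | ξ n ω = v} = 1 / 3)
    (A B : ℕ → Ω → ℤ)
    (hA0 : ∀ ω, A 0 ω = (a : ℤ)) (hB0 : ∀ ω, B 0 ω = (b : ℤ))
    (hA : ∀ n ω, A (n + 1) ω = A n ω + (ξ n ω).1)
    (hB : ∀ n ω, B (n + 1) ω = B n ω + (ξ n ω).2)
(T : Ω → ℕ)
    (hT : ∀ ω, T ω = sInf {n | A n ω * B n ω = 0}) :
    Tendsto (fun n : ℕ => ∫ ω, ((A (min (T ω) n) ω * B (min (T ω) n) ω : ℤ) : ℝ) ∂μ)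
      atTop (nhds 0) := by
  set S : Stmt9.Setup Ω :=
    { μ := μ, prob := inferInstance, a := a, b := b, ha := ha, hb := hb, ξ := ξ,
      hmeas := hmeas, hindep := hindep, hunif := hunif, A := A, B := B,
      hA0 := hA0, hB0 := hB0, hA := hA, hB := hB } with hS
  have hnmem : ∀ᵐ ω ∂μ, ω ∉ {ω | (∀ k, S.ξ k ω ∈ SV) ∧ ∀ k, S.A k ω * S.B k ω ≠ 0} := by
    have h0 : μ {ω | (∀ k, S.ξ k ω ∈ SV) ∧ ∀ k, S.A k ω * S.B k ω ≠ 0} = 0 := S.Z_null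
    exact MeasureTheory.measure_eq_zero_iff_ae_notMem.mp h0
  have key : ∀ n : ℕ, S.y n = ∫ ω, ((A (min (T ω) n) ω * B (min (T ω) n) ω : ℤ) : ℝ) ∂μ := by
    intro n
    refine integral_congr_ae ?_
    filter_upwards [S.ae_good, hnmem] with ω hg hnz
    have hex : ∃ k, A k ω * B k ω = 0 := by
      by_contra hcon
      push_neg at hcon
      exact hnz ⟨hg, hcon⟩
    have hne : {k | A k ω * B k ω = 0}.Nonempty := hex
    have hmemτ : A (T ω) ω * B (T ω) ω = 0 := by
      rw [hT ω]; exact Nat.sInf_mem hne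
    rcases lt_or_ge n (T ω) with hlt | hge
    · have hmin : min (T ω) n = n := min_eq_right hlt.le
      have hH : ω ∈ S.H n := by
        intro k hk
        refine S.walk_pos hg k (fun j hj => ?_)
        have hjτ : j < T ω := lt_of_le_of_lt (hj.trans hk) hlt
        rw [hT ω] at hjτ
        exact Nat.notMem_of_lt_sInf hjτ
      show S.indH n ω * ((A n ω : ℝ) * (B n ω : ℝ))
        = ((A (min (T ω) n) ω * B (min (T ω) n) ω : ℤ) : ℝ)
      rw [hmin, S.indH_of_mem hH]
      push_cast
      ring
    · have hmin : min (T ω) n = T ω := min_eq_left hge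
      have hH : ω ∉ S.H n := by
        intro hmem
        have hpos := hmem (T ω) hge
        exact (ne_of_gt (mul_pos hpos.1 hpos.2)) hmemτ
      show S.indH n ω * ((A n ω : ℝ) * (B n ω : ℝ))
        = ((A (min (T ω) n) ω * B (min (T ω) n) ω : ℤ) : ℝ)
      rw [hmin, S.indH_of_not_mem hH, hmemτ]
      norm_num
  exact S.y_tendsto.congr key
end

section
/- For each i ∈ {1,2,…,m−2}, the process M_i(n) = A_i(n)·A_{i+1}(n) + n/m is a martingale with respect to the filtration (F_n), i.e. E[M_i(n+1) | F_n] = M_i(n) for every n ≥ 0. -/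
open MeasureTheory ProbabilityTheory Filter
open scoped ENNReal

/-- The `m` possible step vectors of the competition process on the `m - 1` gaps
(0-indexed): `step m 0 = -e₀`, `step m k = e_{k-1} - e_k` for `0 < k < m - 1`, and
`step m (m-1) = e_{m-2}`. -/
def step (m : ℕ) (k : Fin m) : Fin (m - 1) → ℤ := fun j =>
  (if (j : ℕ) + 1 = (k : ℕ) then 1 else 0) - (if (j : ℕ) = (k : ℕ) then 1 else 0)

lemma step_injective (m : ℕ) : Function.Injective (step m) := by
  intro k k' h
  by_contra hne
  have hne' : (k : ℕ) ≠ (k' : ℕ) := fun h' => hne (Fin.ext h')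
  rcases lt_or_ge (k : ℕ) (m - 1) with hk | hk
  · have := congrFun h ⟨k, hk⟩
    simp only [step] at this
    split_ifs at this <;> omega
  · have hk1 : (k : ℕ) = m - 1 := by have := k.isLt; omega
    have hk'2 : (k' : ℕ) < m - 1 := by have := k'.isLt; omega
    have := congrFun h ⟨k', hk'2⟩
    simp only [step] at this
    split_ifs at this <;> omega

lemma step_abs_le (m : ℕ) (k : Fin m) (j : Fin (m - 1)) : |step m k j| ≤ 1 := by
  simp only [step]; split_ifs <;> norm_num

lemma sum_if_eq' (m : ℕ) (c : ℕ) (hc : c < m) :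
    ∑ k : Fin m, (if c = (k : ℕ) then (1 : ℤ) else 0) = 1 := by
  rw [Fin.sum_univ_eq_sum_range (fun x => if c = x then (1 : ℤ) else 0)]
  rw [Finset.sum_ite_eq (Finset.range m) c (fun _ => (1 : ℤ))]
  simp [hc]

lemma sum_step (m : ℕ) (j : Fin (m - 1)) : ∑ k : Fin m, step m k j = 0 := by
  simp only [step]
  rw [Finset.sum_sub_distrib, sum_if_eq' m ((j : ℕ) + 1) (by have := j.isLt; omega),
    sum_if_eq' m (j : ℕ) (by have := j.isLt; omega)]
  ring

lemma sum_step_mul (m : ℕ) (i j : Fin (m - 1)) (hij : (j : ℕ) = (i : ℕ) + 1) :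
    ∑ k : Fin m, step m k i * step m k j = -1 := by
  have h : ∀ k : Fin m, step m k i * step m k j
      = -(if (i : ℕ) + 1 = (k : ℕ) then 1 else 0) := by
    intro k
    simp only [step, hij]
    split_ifs <;> first | omega | norm_num
  rw [Finset.sum_congr rfl fun k _ => h k, Finset.sum_neg_distrib,
    sum_if_eq' m ((i : ℕ) + 1) (by have := j.isLt; omega)]

section dist
variable {Ω α : Type*} [MeasurableSpace Ω] [MeasurableSpace α] [MeasurableSingletonClass α]
  {μ : Measure Ω} [IsProbabilityMeasure μ]

lemma cover_ae (m : ℕ) (hm : m ≠ 0) (f : Ω → α) (hf : Measurable f)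
    (v : Fin m → α) (hv : Function.Injective v)
    (hμ : ∀ k, μ {ω | f ω = v k} = 1 / m) :
    ∀ᵐ ω ∂μ, ∃ k, f ω = v k := by
  have hs : ∀ k, MeasurableSet {ω | f ω = v k} := fun k =>
    hf (measurableSet_singleton (v k))
  have hdisj : Pairwise (Function.onFun Disjoint fun k => {ω | f ω = v k}) := by
    intro k k' hkk'
    refine Set.disjoint_left.2 fun ω h1 h2 => hkk' (hv ?_)
    rw [← h1, ← h2]
  have hcov : μ (⋃ k, {ω | f ω = v k}) = 1 := by
    rw [measure_iUnion hdisj hs, tsum_fintype]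
    simp only [hμ, Finset.sum_const, Finset.card_univ, Fintype.card_fin, nsmul_eq_mul, one_div]
    exact ENNReal.mul_inv_cancel (by exact_mod_cast hm) (ENNReal.natCast_ne_top m)
  have : μ (⋃ k, {ω | f ω = v k})ᶜ = 0 :=
    (prob_compl_eq_zero_iff (MeasurableSet.iUnion hs)).2 hcov
  filter_upwards [measure_eq_zero_iff_ae_notMem.1 this] with ω hω
  exact Classical.byContradiction fun h => hω fun h' => h (Set.mem_iUnion.1 h')

lemma integral_comp_dist (m : ℕ) (hm : m ≠ 0) (f : Ω → α) (hf : Measurable f)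
    (v : Fin m → α) (hv : Function.Injective v)
    (hμ : ∀ k, μ {ω | f ω = v k} = 1 / m) (φ : α → ℝ) :
    ∫ ω, φ (f ω) ∂μ = (∑ k, φ (v k)) / m := by
  set s : Fin m → Set Ω := fun k => {ω | f ω = v k} with hs_def
  have hs : ∀ k, MeasurableSet (s k) := fun k => hf (measurableSet_singleton (v k))
  have heq : (fun ω => φ (f ω)) =ᵐ[μ]
      fun ω => ∑ k, (s k).indicator (fun _ => φ (v k)) ω := by
    filter_upwards [cover_ae m hm f hf v hv hμ] with ω hω
    obtain ⟨k₀, hk₀⟩ := hω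
    rw [Finset.sum_eq_single k₀]
    · simp [hs_def, Set.indicator_of_mem, hk₀]
    · intro k _ hk
      refine Set.indicator_of_notMem (fun h => hk ?_) _
      exact hv (by rw [← h, ← hk₀] : v k = v k₀)
    · simp
  rw [integral_congr_ae heq, integral_finset_sum _
    (fun k _ => (integrable_const (φ (v k))).indicator (hs k))]
  have : ∀ k, ∫ ω, (s k).indicator (fun _ => φ (v k)) ω ∂μ = φ (v k) / m := by
    intro k
    rw [integral_indicator_const _ (hs k), measureReal_def, hμ k]
    simp [ENNReal.toReal_div, smul_eq_mul]
    ring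
  rw [Finset.sum_congr rfl fun k _ => this k, ← Finset.sum_div]

end dist

/-- For each adjacent pair `i, j = i + 1` of gap indices, the process
`M_i n = A_i n * A_{i+1} n + n / m` is a martingale with respect to the filtration
generated by the steps. -/
theorem stmt_11 (m : ℕ) (hm : 3 ≤ m)
{Ω : Type*} [MeasurableSpace Ω] (μ : Measure Ω) [IsProbabilityMeasure μ]
    (a : Fin (m - 1) → ℕ) (ha : ∀ k, 0 < a k)
    (ξ : ℕ → Ω → (Fin (m - 1) → ℤ))
    (hmeas : ∀ n, Measurable (ξ n))
    (hindep : iIndepFun ξ μ)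
    (hunif : ∀ n (k : Fin m), μ {ω | ξ n ω = step m k} = 1 / m)
    (A : ℕ → Ω → (Fin (m - 1) → ℤ))
    (hA0 : ∀ ω j, A 0 ω j = (a j : ℤ))
    (hA : ∀ n ω, A (n + 1) ω = A n ω + ξ n ω)
(ℱ : ℕ → MeasurableSpace Ω)
    (hℱ : ∀ n, ℱ n = ⨆ k ∈ Finset.range n, MeasurableSpace.comap (ξ k) inferInstance)
    (i j : Fin (m - 1)) (hij : (j : ℕ) = (i : ℕ) + 1)
    (M : ℕ → Ω → ℝ)
    (hM : ∀ n ω, M n ω = ((A n ω i * A n ω j : ℤ) : ℝ) + (n : ℝ) / m) :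
    ∀ n : ℕ, μ[M (n + 1)|ℱ n] =ᵐ[μ] M n := by
  intro n
  have hm0 : m ≠ 0 := by omega
  have hmR : (m : ℝ) ≠ 0 := Nat.cast_ne_zero.2 hm0
  -- σ-algebra facts
  have hle : ℱ n ≤ ‹MeasurableSpace Ω› := by
    rw [hℱ]
    exact iSup₂_le fun k _ => (hmeas k).comap_le
  have hξF : ∀ k, k < n → Measurable[ℱ n] (ξ k) := by
    intro k hk
    rw [hℱ]
    exact Measurable.of_comap_le
      (le_iSup₂ (f := fun k (_ : k ∈ Finset.range n) =>
        MeasurableSpace.comap (ξ k) inferInstance) k (Finset.mem_range.2 hk))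
  -- A as a sum of steps
  have hAsum : ∀ N ω, A N ω = (fun j' => (a j' : ℤ)) + ∑ k ∈ Finset.range N, ξ k ω := by
    intro N
    induction N with
    | zero => intro ω; funext j'; simp [hA0]
    | succ N ih =>
      intro ω
      rw [hA, ih ω, Finset.sum_range_succ, add_assoc]
  -- measurability of A n with respect to ℱ n
  have hAF : ∀ j' : Fin (m - 1), Measurable[ℱ n] (fun ω => A n ω j') := by
    intro j'
    have heq : (fun ω => A n ω j')
        = fun ω => (a j' : ℤ) + ∑ k ∈ Finset.range n, ξ k ω j' := by
      funext ω; rw [hAsum n ω]; simp [Finset.sum_apply]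
    rw [heq]
    exact measurable_const.add
      (Finset.measurable_sum _ fun k hk =>
        ((measurable_pi_apply j').comp (hξF k (Finset.mem_range.1 hk))))
  -- real-valued components
  set X : Ω → ℝ := fun ω => ((A n ω i : ℤ) : ℝ) with hX_def
  set Y : Ω → ℝ := fun ω => ((A n ω j : ℤ) : ℝ) with hY_def
  set U : Ω → ℝ := fun ω => ((ξ n ω i : ℤ) : ℝ) with hU_def
  set V : Ω → ℝ := fun ω => ((ξ n ω j : ℤ) : ℝ) with hV_def
  have hXsm : StronglyMeasurable[ℱ n] X :=
    ((measurable_of_countable (fun z : ℤ => (z : ℝ))).comp (hAF i)).stronglyMeasurable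
  have hYsm : StronglyMeasurable[ℱ n] Y :=
    ((measurable_of_countable (fun z : ℤ => (z : ℝ))).comp (hAF j)).stronglyMeasurable
  have hXm : Measurable X := hXsm.measurable.mono hle le_rfl
  have hYm : Measurable Y := hYsm.measurable.mono hle le_rfl
  have hUm : Measurable U :=
    (measurable_of_countable (fun z : ℤ => (z : ℝ))).comp ((hmeas n).eval)
  have hVm : Measurable V :=
    (measurable_of_countable (fun z : ℤ => (z : ℝ))).comp ((hmeas n).eval)
  -- almost-everywhere bounds
  have haestep : ∀ k : ℕ, ∀ᵐ ω ∂μ, ∃ l, ξ k ω = step m l := fun k =>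
    cover_ae m hm0 (ξ k) (hmeas k) (step m) (step_injective m) (hunif k)
  have hG : ∀ᵐ ω ∂μ, ∀ k : ℕ, ∃ l, ξ k ω = step m l := ae_all_iff.2 haestep
  have hbound : ∀ᵐ ω ∂μ, (|X ω| ≤ (a i : ℝ) + n) ∧ (|Y ω| ≤ (a j : ℝ) + n)
      ∧ |U ω| ≤ 1 ∧ |V ω| ≤ 1 := by
    filter_upwards [hG] with ω hω
    have hξb : ∀ k (j' : Fin (m - 1)), |ξ k ω j'| ≤ (1 : ℤ) := by
      intro k j'
      obtain ⟨l, hl⟩ := hω k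
      rw [hl]; exact step_abs_le m l j'
    have hAb : ∀ j' : Fin (m - 1), |A n ω j'| ≤ (a j' : ℤ) + n := by
      intro j'
      rw [hAsum n ω]
      simp only [Pi.add_apply, Finset.sum_apply]
      calc |(a j' : ℤ) + ∑ k ∈ Finset.range n, ξ k ω j'|
          ≤ |(a j' : ℤ)| + |∑ k ∈ Finset.range n, ξ k ω j'| := abs_add_le _ _
        _ ≤ (a j' : ℤ) + ∑ k ∈ Finset.range n, |ξ k ω j'| := by
            gcongr
            · simp
            · exact Finset.abs_sum_le_sum_abs _ _
        _ ≤ (a j' : ℤ) + ∑ k ∈ Finset.range n, 1 := by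
            gcongr with k hk
            exact hξb k j'
        _ = (a j' : ℤ) + n := by simp
    refine ⟨?_, ?_, ?_, ?_⟩
    · have := hAb i; rw [hX_def]; push_cast; exact_mod_cast this
    · have := hAb j; rw [hY_def]; push_cast; exact_mod_cast this
    · have := hξb n i; rw [hU_def]
      show |((ξ n ω i : ℤ) : ℝ)| ≤ 1
      exact_mod_cast this
    · have := hξb n j; rw [hV_def]
      show |((ξ n ω j : ℤ) : ℝ)| ≤ 1
      exact_mod_cast this
  -- integrability helper
  have hint : ∀ (f : Ω → ℝ) (C : ℝ), Measurable f → (∀ᵐ ω ∂μ, |f ω| ≤ C) →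
      Integrable f μ := fun f C hf hb =>
    (memLp_top_of_bound hf.aestronglyMeasurable C
      (by simpa [Real.norm_eq_abs] using hb)).integrable le_top
  have hprod : ∀ (f g : Ω → ℝ) (C D : ℝ), Measurable f → Measurable g →
      (∀ᵐ ω ∂μ, |f ω| ≤ C) → (∀ᵐ ω ∂μ, |g ω| ≤ D) → Integrable (f * g) μ := by
    intro f g C D hf hg hbf hbg
    refine hint (f * g) (C * D) (hf.mul hg) ?_
    filter_upwards [hbf, hbg] with ω h1 h2
    simp only [Pi.mul_apply]
    calc |f ω * g ω| = |f ω| * |g ω| := abs_mul _ _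
      _ ≤ C * D := mul_le_mul h1 h2 (abs_nonneg _) ((abs_nonneg (f ω)).trans h1)
  have hbX : ∀ᵐ ω ∂μ, |X ω| ≤ (a i : ℝ) + n := hbound.mono fun ω h => h.1
  have hbY : ∀ᵐ ω ∂μ, |Y ω| ≤ (a j : ℝ) + n := hbound.mono fun ω h => h.2.1
  have hbU : ∀ᵐ ω ∂μ, |U ω| ≤ 1 := hbound.mono fun ω h => h.2.2.1
  have hbV : ∀ᵐ ω ∂μ, |V ω| ≤ 1 := hbound.mono fun ω h => h.2.2.2
  have I1 : Integrable (X * Y) μ := hprod X Y _ _ hXm hYm hbX hbY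
  have I2 : Integrable (X * V) μ := hprod X V _ _ hXm hVm hbX hbV
  have I3 : Integrable (Y * U) μ := hprod Y U _ _ hYm hUm hbY hbU
  have I4 : Integrable (U * V) μ := hprod U V _ _ hUm hVm hbU hbV
  have IU : Integrable U μ := hint U 1 hUm hbU
  have IV : Integrable V μ := hint V 1 hVm hbV
  have I5 : Integrable (fun _ : Ω => ((n : ℝ) + 1) / m) μ := integrable_const _
  -- independence of ξ n from the past
  have hFeq : ℱ n = ⨆ k ∈ {k : ℕ | k < n}, MeasurableSpace.comap (ξ k) inferInstance := by
    rw [hℱ]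
    simp only [Finset.mem_range, Set.mem_setOf_eq]
  have hIndep : Indep (MeasurableSpace.comap (ξ n) inferInstance) (ℱ n) μ := by
    have h := indep_iSup_of_disjoint
      (m := fun k : ℕ => MeasurableSpace.comap (ξ k) inferInstance)
      (fun k => (hmeas k).comap_le) hindep.iIndep
      (S := {k : ℕ | k < n}) (T := {n})
      (by simp only [Set.disjoint_left, Set.mem_setOf_eq, Set.mem_singleton_iff]
          intro k hk; omega)
    have h2 : (⨆ k ∈ ({n} : Set ℕ), MeasurableSpace.comap (ξ k) inferInstance)
        = MeasurableSpace.comap (ξ n) inferInstance := by simp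
    rw [← hFeq] at h
    rw [← h2]
    exact h.symm
  -- conditional expectation of functions of ξ n
  have hcond : ∀ φ : (Fin (m - 1) → ℤ) → ℝ,
      μ[(fun ω => φ (ξ n ω))|ℱ n] =ᵐ[μ] fun _ => ∫ ω, φ (ξ n ω) ∂μ := by
    intro φ
    exact condExp_indep_eq (hmeas n).comap_le hle
      ((measurable_of_countable φ).comp (Measurable.of_comap_le le_rfl)).stronglyMeasurable hIndep
  -- values of the integrals
  have hUval : ∫ ω, ((ξ n ω i : ℤ) : ℝ) ∂μ = 0 := by
    rw [integral_comp_dist m hm0 (ξ n) (hmeas n) (step m) (step_injective m) (hunif n)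
      (fun u => ((u i : ℤ) : ℝ))]
    have : ∑ k : Fin m, ((step m k i : ℤ) : ℝ) = ((∑ k : Fin m, step m k i : ℤ) : ℝ) := by
      push_cast; rfl
    rw [this, sum_step m i]
    simp
  have hVval : ∫ ω, ((ξ n ω j : ℤ) : ℝ) ∂μ = 0 := by
    rw [integral_comp_dist m hm0 (ξ n) (hmeas n) (step m) (step_injective m) (hunif n)
      (fun u => ((u j : ℤ) : ℝ))]
    have : ∑ k : Fin m, ((step m k j : ℤ) : ℝ) = ((∑ k : Fin m, step m k j : ℤ) : ℝ) := by
      push_cast; rfl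
    rw [this, sum_step m j]
    simp
  have hUVval : ∫ ω, ((ξ n ω i : ℤ) : ℝ) * ((ξ n ω j : ℤ) : ℝ) ∂μ = -1 / m := by
    rw [integral_comp_dist m hm0 (ξ n) (hmeas n) (step m) (step_injective m) (hunif n)
      (fun u => ((u i : ℤ) : ℝ) * ((u j : ℤ) : ℝ))]
    have : ∑ k : Fin m, ((step m k i : ℤ) : ℝ) * ((step m k j : ℤ) : ℝ)
        = ((∑ k : Fin m, step m k i * step m k j : ℤ) : ℝ) := by
      push_cast; rfl
    rw [this, sum_step_mul m i j hij]
    norm_num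
  -- decomposition of M (n+1)
  have hsplit : M (n + 1)
      = (X * Y) + ((X * V) + ((Y * U) + ((U * V) + fun _ => ((n : ℝ) + 1) / m))) := by
    funext ω
    simp only [Pi.add_apply, Pi.mul_apply, hX_def, hY_def, hU_def, hV_def]
    rw [hM, hA n ω]
    simp only [Pi.add_apply]
    push_cast
    ring
  -- conditional expectations of the pieces
  have E1 : μ[(X * Y)|ℱ n] =ᵐ[μ] X * Y := by
    rw [condExp_of_stronglyMeasurable hle (hXsm.mul hYsm) I1]
  have EV : μ[V|ℱ n] =ᵐ[μ] fun _ => (0 : ℝ) := by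
    have := hcond (fun u => ((u j : ℤ) : ℝ))
    rw [hVval] at this
    exact this
  have EU : μ[U|ℱ n] =ᵐ[μ] fun _ => (0 : ℝ) := by
    have := hcond (fun u => ((u i : ℤ) : ℝ))
    rw [hUval] at this
    exact this
  have E2 : μ[(X * V)|ℱ n] =ᵐ[μ] X * μ[V|ℱ n] :=
    condExp_mul_of_stronglyMeasurable_left hXsm I2 IV
  have E3 : μ[(Y * U)|ℱ n] =ᵐ[μ] Y * μ[U|ℱ n] :=
    condExp_mul_of_stronglyMeasurable_left hYsm I3 IU
  have E4 : μ[(U * V)|ℱ n] =ᵐ[μ] fun _ => (-1 : ℝ) / m := by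
    have := hcond (fun u => ((u i : ℤ) : ℝ) * ((u j : ℤ) : ℝ))
    rw [hUVval] at this
    exact this
  have E5 : μ[(fun _ : Ω => ((n : ℝ) + 1) / m)|ℱ n] =ᵐ[μ] fun _ => ((n : ℝ) + 1) / m := by
    rw [condExp_const hle (((n : ℝ) + 1) / m)]
  -- additivity
  have Eadd : μ[M (n + 1)|ℱ n] =ᵐ[μ]
      μ[(X * Y)|ℱ n] + (μ[(X * V)|ℱ n] + (μ[(Y * U)|ℱ n]
        + (μ[(U * V)|ℱ n] + μ[(fun _ : Ω => ((n : ℝ) + 1) / m)|ℱ n]))) := by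
    rw [hsplit]
    refine (condExp_add I1 (I2.add (I3.add (I4.add I5))) (ℱ n)).trans ?_
    refine EventuallyEq.add EventuallyEq.rfl ?_
    refine (condExp_add I2 (I3.add (I4.add I5)) (ℱ n)).trans ?_
    refine EventuallyEq.add EventuallyEq.rfl ?_
    refine (condExp_add I3 (I4.add I5) (ℱ n)).trans ?_
    exact EventuallyEq.add EventuallyEq.rfl (condExp_add I4 I5 (ℱ n))
  -- combine
  refine Eadd.trans ?_
  filter_upwards [E1, E2, E3, E4, E5, EU, EV] with ω h1 h2 h3 h4 h5 hu hv
  simp only [Pi.add_apply, Pi.mul_apply] at h1 h2 h3 h4 h5 hu hv ⊢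
  rw [h1, h2, h3, h4, h5, hu, hv, hM n ω]
  simp only [hX_def, hY_def]
  push_cast
  ring
end
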